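/- arXiv:1512.09158 — 7 statements merged into one kernel-verified Lean document; each statement's English description precedes it below -/
import Mathlib

section
/- With T a split torus acting linearly on V with weight set Ω, the stabilizer in T of a generic point [v] of the projective space P(V) equals the intersection over pairs ω, ω' ∈ Ω of ker(ω − ω'); hence T acts generically freely on P(V) if and only if the set of differences {ω − ω' : ω, ω' ∈ Ω} spans the character lattice T*. -/
/-- The ℤ-linear map `d ↦ ofMul (∏ i, t i ^ d i)` for a family of elements of a
commutative group. -/
noncomputable def stmt1Lhom {r : ℕ} {G : Type*} [CommGroup G] (t : Fin r → G) :
    (Fin r → ℤ) →ₗ[ℤ] Additive G where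
  toFun d := Additive.ofMul (∏ i, t i ^ d i)
  map_add' a b := by
    simp only [Pi.add_apply, zpow_add, Finset.prod_mul_distrib]
    rfl
  map_smul' n d := by
    have h : (∏ i, t i ^ ((n • d) i)) = (∏ i, t i ^ d i) ^ n := by
      rw [← Finset.prod_zpow]
      exact Finset.prod_congr rfl fun i _ => by
        rw [Pi.smul_apply, smul_eq_mul, mul_comm, zpow_mul]
    show Additive.ofMul (∏ i, t i ^ ((n • d) i)) = _
    rw [h, ofMul_zpow]; rfl

lemma stmt1Lhom_apply {r : ℕ} {G : Type*} [CommGroup G] (t : Fin r → G) (d : Fin r → ℤ) :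
    stmt1Lhom t d = Additive.ofMul (∏ i, t i ^ d i) := rfl

lemma stmt1Lhom_single {r : ℕ} {G : Type*} [CommGroup G] (t : Fin r → G) (i : Fin r) :
    stmt1Lhom t (Pi.single i 1) = Additive.ofMul (t i) := by
  rw [stmt1Lhom_apply]
  congr 1
  rw [Finset.prod_eq_single i]
  · simp
  · intro j _ hj; simp [Pi.single_eq_of_ne hj]
  · simp

lemma stmt1_sum_single {r : ℕ} (d : Fin r → ℤ) :
    ∑ i, d i • Pi.single i (1 : ℤ) = d := by
  have h : ∀ i : Fin r, d i • (Pi.single i (1 : ℤ) : Fin r → ℤ) = Pi.single i (d i) := by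
    intro i
    funext j
    rcases eq_or_ne j i with rfl | hj
    · simp
    · simp [Pi.single_eq_of_ne hj]
  simp only [h, Finset.univ_sum_single]

/-- The unit of the group algebra attached to a group element. -/
noncomputable def stmt1Unit (k : Type) [CommRing k] {M : Type} [AddCommGroup M] (m : M) :
    (AddMonoidAlgebra k M)ˣ where
  val := AddMonoidAlgebra.single m 1
  inv := AddMonoidAlgebra.single (-m) 1
  val_inv := by rw [AddMonoidAlgebra.single_mul_single]; simp [AddMonoidAlgebra.one_def]
  inv_val := by rw [AddMonoidAlgebra.single_mul_single]; simp [AddMonoidAlgebra.one_def]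

/-- `stmt1Unit` as an additive monoid hom into `Additive` of the unit group. -/
noncomputable def stmt1UnitHom (k : Type) [CommRing k] (M : Type) [AddCommGroup M] :
    M →+ Additive (AddMonoidAlgebra k M)ˣ where
  toFun m := Additive.ofMul (stmt1Unit k m)
  map_zero' := by
    show Additive.ofMul (stmt1Unit k (0 : M)) = 0
    have h : stmt1Unit k (0 : M) = 1 := by
      ext; simp [stmt1Unit, AddMonoidAlgebra.one_def]
    rw [h]; rfl
  map_add' a b := by
    show Additive.ofMul (stmt1Unit k (a + b)) =
      Additive.ofMul (stmt1Unit k a) + Additive.ofMul (stmt1Unit k b)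
    have h : stmt1Unit k (a + b) = stmt1Unit k a * stmt1Unit k b := by
      ext; simp [stmt1Unit, AddMonoidAlgebra.single_mul_single]
    rw [h]; rfl

theorem stmt1 (k : Type) [Field k] [IsAlgClosed k]
    (r : ℕ) (ι : Type) [Fintype ι]
    (ω : ι → (Fin r → ℤ)) (v : ι → k) (hv : ∀ j, v j ≠ 0) :
    (∀ t : Fin r → kˣ,
      ((∃ c : kˣ, ∀ j, ((∏ i, t i ^ ω j i : kˣ) : k) * v j = (c : k) * v j) ↔
        (∀ j j', (∏ i, t i ^ (ω j i - ω j' i)) = (1 : kˣ))))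
    ∧
    ((Submodule.span ℤ {d : Fin r → ℤ | ∃ j j', d = ω j - ω j'} = (⊤ : Submodule ℤ (Fin r → ℤ))) ↔
      (∀ (R : Type) [CommRing R] [Algebra k R] [Nontrivial R], ∀ t : Fin r → Rˣ,
        (∀ j j', (∏ i, t i ^ (ω j i - ω j' i)) = (1 : Rˣ)) → t = 1)) := by
  constructor
  · -- Part 1: stabilizer description
    intro t
    have hsub : ∀ j j' : ι, (∏ i, t i ^ (ω j i - ω j' i)) =
        (∏ i, t i ^ ω j i) / (∏ i, t i ^ ω j' i) := by
      intro j j'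
      rw [← Finset.prod_div_distrib]
      exact Finset.prod_congr rfl fun i _ => zpow_sub (t i) _ _
    constructor
    · rintro ⟨c, hc⟩ j j'
      have key : ∀ j, (∏ i, t i ^ ω j i) = c := by
        intro j
        ext
        exact mul_right_cancel₀ (hv j) (hc j)
      rw [hsub, key j, key j', div_self']
    · intro h
      by_cases hι : Nonempty ι
      · obtain ⟨j0⟩ := hι
        refine ⟨∏ i, t i ^ ω j0 i, fun j => ?_⟩
        have : (∏ i, t i ^ ω j i) = ∏ i, t i ^ ω j0 i := by
          have := h j j0
          rw [hsub] at this
          exact div_eq_one.mp this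
        rw [this]
      · exact ⟨1, fun j => absurd ⟨j⟩ hι⟩
  · -- Part 2: generic freeness
    constructor
    · -- span = ⊤ → generically free
      intro H R _ _ _ t ht
      have hker : (⊤ : Submodule ℤ (Fin r → ℤ)) ≤ LinearMap.ker (stmt1Lhom t) := by
        rw [← H]
        refine Submodule.span_le.mpr ?_
        rintro d ⟨j, j', rfl⟩
        rw [SetLike.mem_coe, LinearMap.mem_ker, stmt1Lhom_apply]
        have : (∏ i, t i ^ (ω j - ω j') i) = 1 := ht j j'
        rw [this]; rfl
      funext i
      have h1 : stmt1Lhom t (Pi.single i 1) = 0 :=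
        hker (Submodule.mem_top) 
      rw [stmt1Lhom_single] at h1
      have : t i = 1 := by
        have := congrArg Additive.toMul h1
        simpa using this
      simpa using this
    · -- generically free → span = ⊤
      intro H
      set N := Submodule.span ℤ {d : Fin r → ℤ | ∃ j j', d = ω j - ω j'} with hN
      let M := (Fin r → ℤ) ⧸ N
      let R := AddMonoidAlgebra k M
      let F : (Fin r → ℤ) →ₗ[ℤ] Additive Rˣ :=
        (stmt1UnitHom k M).toIntLinearMap ∘ₗ N.mkQ
      let t : Fin r → Rˣ := fun i => stmt1Unit k (N.mkQ (Pi.single i 1))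
      have hF : ∀ i, F (Pi.single i (1 : ℤ)) = Additive.ofMul (t i) := fun i => rfl
      have key : ∀ d : Fin r → ℤ, (∏ i, t i ^ d i) = Additive.toMul (F d) := by
        intro d
        have : stmt1Lhom t d = F d := by
          conv_lhs => rw [← stmt1_sum_single d]
          conv_rhs => rw [← stmt1_sum_single d]
          rw [map_sum, map_sum]
          refine Finset.sum_congr rfl fun i _ => ?_
          rw [map_smul, map_smul, stmt1Lhom_single, hF]
        have := congrArg Additive.toMul this
        rw [stmt1Lhom_apply] at this
        simpa using this
      have ht : ∀ j j', (∏ i, t i ^ (ω j i - ω j' i)) = (1 : Rˣ) := by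
        intro j j'
        have hmem : (ω j - ω j' : Fin r → ℤ) ∈ N :=
          Submodule.subset_span ⟨j, j', rfl⟩
        have h0 : F (ω j - ω j') = 0 := by
          have hz : N.mkQ (ω j - ω j') = 0 := by
            rw [Submodule.mkQ_apply, Submodule.Quotient.mk_eq_zero]; exact hmem
          simp only [F, LinearMap.comp_apply, hz, map_zero]
        have : (∏ i, t i ^ (ω j - ω j') i) = Additive.toMul (F (ω j - ω j')) :=
          key (ω j - ω j')
        simpa [h0] using this
      have ht1 : t = 1 := H R t ht
      have he : ∀ i : Fin r, (Pi.single i (1 : ℤ)) ∈ N := by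
        intro i
        have : t i = 1 := by rw [ht1]; rfl
        have hval : (AddMonoidAlgebra.single (N.mkQ (Pi.single i 1)) (1 : k)
            : AddMonoidAlgebra k M) = AddMonoidAlgebra.single 0 1 := by
          have := congrArg Units.val this
          simp [t, stmt1Unit] at this
          rw [← AddMonoidAlgebra.one_def]; exact this
        have := AddMonoidAlgebra.single_inj.mp hval
        rcases this with ⟨h1, _⟩ | ⟨h1, _⟩
        · exact (Submodule.Quotient.mk_eq_zero N).mp h1
        · exact absurd h1 one_ne_zero
      rw [eq_top_iff]
      intro d _
      rw [← stmt1_sum_single d]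
      exact Submodule.sum_mem _ fun i _ => Submodule.smul_mem _ _ (he i)
end

section
/- Let G = AGL₁ be the group of affine transformations y ↦ cy + b of k (c ∈ k^×, b ∈ k), acting on the variety X₀ of monic degree-n polynomials with roots summing to 0 by acting on each root. If the characteristic p of k divides n and n > 4, then G acts generically freely on X₀. -/
set_option linter.unusedSectionVars false

section PolyAux

open Polynomial Finset

variable {R : Type} [CommRing R]

lemma coeff_linear_pow (c b : R) (i m : ℕ) :
    ((C c * X + C b) ^ i).coeff m = (i.choose m : R) * c ^ m * b ^ (i - m) := by
  rcases le_or_gt m i with h | h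
  · have key : ∀ j, ((C c * X) ^ j * C b ^ (i - j) * ((i.choose j : ℕ) : R[X])).coeff m
        = if j = m then (i.choose m : R) * c ^ m * b ^ (i - m) else 0 := by
      intro j
      have hj : (C c * X) ^ j * C b ^ (i - j) * ((i.choose j : ℕ) : R[X])
          = C (c ^ j * b ^ (i - j) * ((i.choose j : ℕ) : R)) * X ^ j := by
        rw [C_mul, C_mul, mul_pow, ← C_pow, ← C_pow, ← C_eq_natCast]; ring
      rw [hj, coeff_C_mul, coeff_X_pow]
      by_cases hjm : j = m
      · subst hjm; simp [mul_comm, mul_left_comm, mul_assoc]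
      · simp [hjm, Ne.symm hjm]
    rw [add_pow, finset_sum_coeff]
    calc ∑ j ∈ range (i + 1), ((C c * X) ^ j * C b ^ (i - j) * ((i.choose j : ℕ) : R[X])).coeff m
        = ∑ j ∈ range (i + 1), if j = m then (i.choose m : R) * c ^ m * b ^ (i - m) else 0 :=
          Finset.sum_congr rfl fun j _ => key j
      _ = (i.choose m : R) * c ^ m * b ^ (i - m) := by
          rw [Finset.sum_ite_eq']
          simp [Nat.lt_succ_iff.2 h]
  · rw [Nat.choose_eq_zero_of_lt h, Nat.cast_zero, zero_mul, zero_mul]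
    apply coeff_eq_zero_of_natDegree_lt
    calc ((C c * X + C b) ^ i).natDegree ≤ i * (C c * X + C b).natDegree :=
          natDegree_pow_le
      _ ≤ i * 1 := Nat.mul_le_mul_left _ natDegree_linear_le
      _ < m := by omega

lemma coeff_comp_linear (F : R[X]) (c b : R) (m N : ℕ) (hN : F.natDegree < N) :
    (F.comp (C c * X + C b)).coeff m
      = ∑ i ∈ range N, F.coeff i * ((i.choose m : R) * c ^ m * b ^ (i - m)) := by
  conv_lhs => rw [F.as_sum_range' N hN]
  rw [Polynomial.comp, Polynomial.eval₂_finset_sum, finset_sum_coeff]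
  refine Finset.sum_congr rfl fun i _ => ?_
  rw [Polynomial.eval₂_monomial, coeff_C_mul, coeff_linear_pow]




lemma extract {k : Type} [Field k] {R : Type} [CommRing R] [Nontrivial R] [Algebra k R]
    {n : ℕ} {f : k[X]} (hf : f.Monic) (hdeg : f.natDegree = n)
    (c : Rˣ) (b : R)
    (heq : (f.map (algebraMap k R)).comp (C (c : R) * X + C b)
      = (c : R) ^ n • f.map (algebraMap k R))
    (K : ℕ) (hKn : K ≤ n) :
    ∑ t ∈ range (K + 1),
      algebraMap k R (f.coeff (n - K + t)) * (((n - K + t).choose t : ℕ) : R) * b ^ t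
      = (c : R) ^ K * algebraMap k R (f.coeff (n - K)) := by
  set φ := algebraMap k R with hφ
  set m := n - K with hm
  have hFdeg : (f.map φ).natDegree = n := by rw [hf.natDegree_map, hdeg]
  have h1 := congrArg (fun p => Polynomial.coeff p m) heq
  simp only [Polynomial.coeff_smul, smul_eq_mul] at h1
  rw [coeff_comp_linear _ _ _ m (n + 1) (by omega), Polynomial.coeff_map] at h1
  have hzero : ∑ i ∈ Ico 0 m, (f.map φ).coeff i * ((i.choose m : R) * (c:R) ^ m * b ^ (i - m))
      = 0 := by
    refine Finset.sum_eq_zero fun i hi => ?_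
    rw [Nat.choose_eq_zero_of_lt (Finset.mem_Ico.1 hi).2]
    simp
  rw [range_eq_Ico, ← Finset.sum_Ico_consecutive _ (Nat.zero_le m) (by omega : m ≤ n + 1),
    hzero, zero_add, Finset.sum_Ico_eq_sum_range] at h1
  have hrange : n + 1 - m = K + 1 := by omega
  rw [hrange] at h1
  have hterm : ∀ t, (f.map φ).coeff (m + t) * (((m + t).choose m : R) * (c:R) ^ m * b ^ (m + t - m))
      = (φ (f.coeff (m + t)) * (((m + t).choose t : ℕ) : R) * b ^ t) * (c:R) ^ m := by
    intro t
    rw [Polynomial.coeff_map, Nat.add_sub_cancel_left]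
    have hsy : (m + t).choose m = (m + t).choose t := by
      rw [← Nat.choose_symm (Nat.le_add_right m t), Nat.add_sub_cancel_left]
    rw [hsy]; ring
  simp only [hterm] at h1
  rw [← Finset.sum_mul] at h1
  have hcd : (c : R) * ((c⁻¹ : Rˣ) : R) = 1 := by
    rw [← Units.val_mul, mul_inv_cancel, Units.val_one]
  have hpow : (c:R) ^ n * ((c⁻¹ : Rˣ) : R) ^ m = (c:R) ^ K := by
    have hn' : n = m + K := by omega
    rw [hn', pow_add]
    calc (c:R) ^ m * (c:R) ^ K * ((c⁻¹ : Rˣ) : R) ^ m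
        = (c:R) ^ K * ((c:R) * ((c⁻¹ : Rˣ) : R)) ^ m := by rw [mul_pow]; ring
      _ = (c:R) ^ K := by rw [hcd, one_pow, mul_one]
  calc ∑ t ∈ range (K + 1), φ (f.coeff (m + t)) * (((m + t).choose t : ℕ) : R) * b ^ t
      = (∑ t ∈ range (K + 1), φ (f.coeff (m + t)) * (((m + t).choose t : ℕ) : R) * b ^ t)
        * ((c:R) ^ m * ((c⁻¹ : Rˣ) : R) ^ m) := by
        rw [← mul_pow, hcd, one_pow, mul_one]
    _ = ((c:R) ^ n * φ (f.coeff m)) * ((c⁻¹ : Rˣ) : R) ^ m := by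
        rw [← mul_assoc, h1]
    _ = (c:R) ^ K * φ (f.coeff m) := by
        rw [mul_assoc, mul_comm (φ (f.coeff m)), ← mul_assoc, hpow]

end PolyAux

section CastAux

variable {k : Type} [Field k]

lemma cast_choose_absorb (m t : ℕ) (hm : 1 ≤ m) (ht : 1 ≤ t) :
    ((m.choose t : ℕ) : k) * (t : k) = (m : k) * (((m - 1).choose (t - 1) : ℕ) : k) := by
  obtain ⟨m', rfl⟩ : ∃ m', m = m' + 1 := ⟨m - 1, by omega⟩
  obtain ⟨t', rfl⟩ : ∃ t', t = t' + 1 := ⟨t - 1, by omega⟩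
  simp only [Nat.add_sub_cancel]
  exact_mod_cast congrArg (fun x : ℕ => (x : k)) (Nat.add_one_mul_choose_eq m' t').symm

lemma cast_choose_pascal (m t : ℕ) (hm : 1 ≤ m) :
    ((m.choose (t + 1) : ℕ) : k)
      = (((m - 1).choose t : ℕ) : k) + (((m - 1).choose (t + 1) : ℕ) : k) := by
  obtain ⟨m', rfl⟩ : ∃ m', m = m' + 1 := ⟨m - 1, by omega⟩
  simp only [Nat.add_sub_cancel]
  exact_mod_cast congrArg (fun x : ℕ => (x : k)) (Nat.choose_succ_succ m' t)

section
variable {n : ℕ} (hn0 : (n : k) = 0)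

include hn0

lemma cast_sub_n {j : ℕ} (hj : j ≤ n) : ((n - j : ℕ) : k) = -(j : k) := by
  rw [Nat.cast_sub hj, hn0, zero_sub]

lemma choose_n_zero {t : ℕ} (h1 : 1 ≤ t) (hn1 : 1 ≤ n) (ht : (t : k) ≠ 0) :
    ((n.choose t : ℕ) : k) = 0 := by
  have h := cast_choose_absorb (k := k) n t hn1 h1
  rw [hn0, zero_mul] at h
  exact (mul_eq_zero.1 h).resolve_right ht

lemma choose_shift {j t : ℕ} (hj : j + 1 ≤ n) (h1 : 1 ≤ t) :
    (((n - j).choose t : ℕ) : k) * (t : k)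
      = -(j : k) * (((n - (j + 1)).choose (t - 1) : ℕ) : k) := by
  have h := cast_choose_absorb (k := k) (n - j) t (by omega) h1
  rw [cast_sub_n hn0 (by omega)] at h
  rw [h, Nat.sub_sub]

lemma choose_one_cast {j : ℕ} (hj : j ≤ n) : (((n - j).choose 1 : ℕ) : k) = -(j : k) := by
  rw [Nat.choose_one_right]
  exact cast_sub_n hn0 hj

end

end CastAux

section Clean
open Polynomial Finset


variable {k : Type} [Field k] {R : Type} [CommRing R] [Nontrivial R] [Algebra k R]
variable {n : ℕ} {f : k[X]}


section
variable (hf : f.Monic) (hdeg : f.natDegree = n) (hc1 : f.coeff (n - 1) = 0)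
    (c : Rˣ) (b : R)
    (heq : (f.map (algebraMap k R)).comp (C (c : R) * X + C b)
      = (c : R) ^ n • f.map (algebraMap k R))

lemma coeff_top (hf : f.Monic) (hdeg : f.natDegree = n) :
    algebraMap k R (f.coeff n) = 1 := by
  have : f.coeff n = 1 := by rw [← hdeg]; exact hf.coeff_natDegree
  rw [this, map_one]

include hf hdeg hc1 heq

lemma eq2 (hn : 2 ≤ n) :
    algebraMap k R (f.coeff (n - 2)) + ((n.choose 2 : ℕ) : R) * b ^ 2
      = (c : R) ^ 2 * algebraMap k R (f.coeff (n - 2)) := by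
  have h := extract hf hdeg c b heq 2 (by omega)
  simp only [Finset.sum_range_succ, Finset.sum_range_zero, zero_add, pow_zero, mul_one,
    pow_one, Nat.add_zero, Nat.choose_zero_right, Nat.cast_one] at h
  have e1 : n - 2 + 1 = n - 1 := by omega
  have e2 : n - 2 + 2 = n := by omega
  rw [e1, e2, hc1, map_zero, coeff_top hf hdeg] at h
  linear_combination h

lemma eq3 (hn : 3 ≤ n) :
    algebraMap k R (f.coeff (n - 3))
      + (((n - 2).choose 1 : ℕ) : R) * algebraMap k R (f.coeff (n - 2)) * b
      + ((n.choose 3 : ℕ) : R) * b ^ 3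
      = (c : R) ^ 3 * algebraMap k R (f.coeff (n - 3)) := by
  have h := extract hf hdeg c b heq 3 (by omega)
  simp only [Finset.sum_range_succ, Finset.sum_range_zero, zero_add, pow_zero, mul_one,
    pow_one, Nat.add_zero, Nat.choose_zero_right, Nat.cast_one] at h
  have e1 : n - 3 + 1 = n - 2 := by omega
  have e2 : n - 3 + 2 = n - 1 := by omega
  have e3 : n - 3 + 3 = n := by omega
  rw [e1, e2, e3, hc1, map_zero, coeff_top hf hdeg] at h
  linear_combination h

lemma eq4 (hn : 4 ≤ n) :
    algebraMap k R (f.coeff (n - 4))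
      + (((n - 3).choose 1 : ℕ) : R) * algebraMap k R (f.coeff (n - 3)) * b
      + (((n - 2).choose 2 : ℕ) : R) * algebraMap k R (f.coeff (n - 2)) * b ^ 2
      + ((n.choose 4 : ℕ) : R) * b ^ 4
      = (c : R) ^ 4 * algebraMap k R (f.coeff (n - 4)) := by
  have h := extract hf hdeg c b heq 4 (by omega)
  simp only [Finset.sum_range_succ, Finset.sum_range_zero, zero_add, pow_zero, mul_one,
    pow_one, Nat.add_zero, Nat.choose_zero_right, Nat.cast_one] at h
  have e1 : n - 4 + 1 = n - 3 := by omega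
  have e2 : n - 4 + 2 = n - 2 := by omega
  have e3 : n - 4 + 3 = n - 1 := by omega
  have e4 : n - 4 + 4 = n := by omega
  rw [e1, e2, e3, e4, hc1, map_zero, coeff_top hf hdeg] at h
  linear_combination h

lemma eq5 (hn : 5 ≤ n) :
    algebraMap k R (f.coeff (n - 5))
      + (((n - 4).choose 1 : ℕ) : R) * algebraMap k R (f.coeff (n - 4)) * b
      + (((n - 3).choose 2 : ℕ) : R) * algebraMap k R (f.coeff (n - 3)) * b ^ 2
      + (((n - 2).choose 3 : ℕ) : R) * algebraMap k R (f.coeff (n - 2)) * b ^ 3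
      + ((n.choose 5 : ℕ) : R) * b ^ 5
      = (c : R) ^ 5 * algebraMap k R (f.coeff (n - 5)) := by
  have h := extract hf hdeg c b heq 5 (by omega)
  simp only [Finset.sum_range_succ, Finset.sum_range_zero, zero_add, pow_zero, mul_one,
    pow_one, Nat.add_zero, Nat.choose_zero_right, Nat.cast_one] at h
  have e1 : n - 5 + 1 = n - 4 := by omega
  have e2 : n - 5 + 2 = n - 3 := by omega
  have e3 : n - 5 + 3 = n - 2 := by omega
  have e4 : n - 5 + 4 = n - 1 := by omega
  have e5 : n - 5 + 5 = n := by omega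
  rw [e1, e2, e3, e4, e5, hc1, map_zero, coeff_top hf hdeg] at h
  linear_combination h

lemma eq7 (hn : 7 ≤ n) :
    algebraMap k R (f.coeff (n - 7))
      + (((n - 6).choose 1 : ℕ) : R) * algebraMap k R (f.coeff (n - 6)) * b
      + (((n - 5).choose 2 : ℕ) : R) * algebraMap k R (f.coeff (n - 5)) * b ^ 2
      + (((n - 4).choose 3 : ℕ) : R) * algebraMap k R (f.coeff (n - 4)) * b ^ 3
      + (((n - 3).choose 4 : ℕ) : R) * algebraMap k R (f.coeff (n - 3)) * b ^ 4
      + (((n - 2).choose 5 : ℕ) : R) * algebraMap k R (f.coeff (n - 2)) * b ^ 5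
      + ((n.choose 7 : ℕ) : R) * b ^ 7
      = (c : R) ^ 7 * algebraMap k R (f.coeff (n - 7)) := by
  have h := extract hf hdeg c b heq 7 (by omega)
  simp only [Finset.sum_range_succ, Finset.sum_range_zero, zero_add, pow_zero, mul_one,
    pow_one, Nat.add_zero, Nat.choose_zero_right, Nat.cast_one] at h
  have e1 : n - 7 + 1 = n - 6 := by omega
  have e2 : n - 7 + 2 = n - 5 := by omega
  have e3 : n - 7 + 3 = n - 4 := by omega
  have e4 : n - 7 + 4 = n - 3 := by omega
  have e5 : n - 7 + 5 = n - 2 := by omega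
  have e6 : n - 7 + 6 = n - 1 := by omega
  have e7 : n - 7 + 7 = n := by omega
  rw [e1, e2, e3, e4, e5, e6, e7, hc1, map_zero, coeff_top hf hdeg] at h
  linear_combination h

end

end Clean

section Branches

variable {k : Type} [Field k] {R : Type} [CommRing R] [Algebra k R]

lemma phi_inv_cancel {x : k} (hx : x ≠ 0) :
    algebraMap k R x * algebraMap k R x⁻¹ = 1 := by
  rw [← map_mul, mul_inv_cancel₀ hx, map_one]

lemma mul_phi_eq_zero {x : k} (hx : x ≠ 0) {z : R} (h : z * algebraMap k R x = 0) :
    z = 0 := by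
  have h1 : algebraMap k R x * algebraMap k R x⁻¹ = 1 := phi_inv_cancel hx
  linear_combination (algebraMap k R x⁻¹) * h + (-z) * h1

lemma branch_lin (A B C D g1 g2 g3 g4 β : k) (hA : A ≠ 0)
    (h2A : (-2 : k) * A ≠ 0)
    (hβ : β * (-2 * A) = B)
    (hξ : D - g1 * C * β + 2 * g2 * B * β ^ 2 - 4 * g3 * A * β ^ 3 - 16 * g4 * β ^ 5 ≠ 0)
    (cu : Rˣ) (b : R)
    (E2 : algebraMap k R A = (cu : R) ^ 2 * algebraMap k R A)
    (E3 : algebraMap k R B + (-2 : R) * algebraMap k R A * b = (cu : R) ^ 3 * algebraMap k R B)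
    (E5 : algebraMap k R D + algebraMap k R g1 * algebraMap k R C * b
        + algebraMap k R g2 * algebraMap k R B * b ^ 2
        + algebraMap k R g3 * algebraMap k R A * b ^ 3
        + algebraMap k R g4 * b ^ 5 = (cu : R) ^ 5 * algebraMap k R D) :
    (cu : R) = 1 ∧ b = 0 := by
  set φ : k →+* R := (algebraMap k R : k →+* R) with hφdef
  set c' : R := (cu : R) with hc'def
  have hAi : φ A * φ A⁻¹ = 1 := phi_inv_cancel hA
  have hc2 : c' ^ 2 = 1 := by
    linear_combination (-(φ A⁻¹)) * E2 + (1 - c' ^ 2) * hAi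
  have hc3 : c' ^ 3 = c' := by linear_combination c' * hc2
  have hc5 : c' ^ 5 = c' := by linear_combination (c' ^ 3 + c') * hc2
  set u : R := c' - 1 with hudef
  have hu2 : u ^ 2 = -2 * u := by simp only [hudef]; linear_combination hc2
  have hu3 : u ^ 3 = 4 * u := by linear_combination (u - 2) * hu2
  have hu5 : u ^ 5 = 16 * u := by
    linear_combination (u ^ 3 - 2 * u ^ 2 + 4 * u - 8) * hu2
  have hβR : φ β * ((-2 : R) * φ A) = φ B := by
    have h := congrArg φ hβ
    rw [map_mul, map_mul, map_neg, map_ofNat] at h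
    exact h
  have h3' : (-2 : R) * φ A * b = u * φ B := by
    linear_combination E3 + φ B * hc3
  have hmm : φ ((-2) * A) = (-2 : R) * φ A := by rw [map_mul, map_neg, map_ofNat]
  have h5 : (b - φ β * u) * φ ((-2) * A) = 0 := by
    rw [hmm]; linear_combination h3' + (-u) * hβR
  have hb1 : b = φ β * u := by
    have h6 := mul_phi_eq_zero h2A h5
    linear_combination h6
  have hb2 : b ^ 2 = -2 * φ β ^ 2 * u := by
    linear_combination (b + φ β * u) * hb1 + φ β ^ 2 * hu2
  have hb3 : b ^ 3 = 4 * φ β ^ 3 * u := by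
    linear_combination (b ^ 2 + φ β * u * b + φ β ^ 2 * u ^ 2) * hb1 + φ β ^ 3 * hu3
  have hb5 : b ^ 5 = 16 * φ β ^ 5 * u := by
    linear_combination (b ^ 4 + φ β * u * b ^ 3 + φ β ^ 2 * u ^ 2 * b ^ 2
      + φ β ^ 3 * u ^ 3 * b + φ β ^ 4 * u ^ 4) * hb1 + φ β ^ 5 * hu5
  have hφξ : φ (D - g1 * C * β + 2 * g2 * B * β ^ 2 - 4 * g3 * A * β ^ 3 - 16 * g4 * β ^ 5)
      = φ D - φ g1 * φ C * φ β + 2 * (φ g2 * φ B * φ β ^ 2)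
        - 4 * (φ g3 * φ A * φ β ^ 3) - 16 * (φ g4 * φ β ^ 5) := by
    simp only [map_add, map_sub, map_mul, map_pow, map_ofNat]; ring
  have hfin : u * φ (D - g1 * C * β + 2 * g2 * B * β ^ 2 - 4 * g3 * A * β ^ 3
      - 16 * g4 * β ^ 5) = 0 := by
    rw [hφξ]
    linear_combination (-1 : R) * E5 + (-(φ D)) * hc5 + (φ g1 * φ C) * hb1
      + (φ g2 * φ B) * hb2 + (φ g3 * φ A) * hb3 + (φ g4) * hb5
  have hu0 : u = 0 := mul_phi_eq_zero hξ hfin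
  constructor
  · linear_combination hu0
  · linear_combination hb1 + φ β * hu0

lemma branch_p3 (h3 : (3 : k) = 0) (A B C D κ μ β : k)
    (hA : A ≠ 0)
    (hW : 2 * μ * A ^ 2 - 4 * κ * C ≠ 0)
    (hβ : β * (2 * μ * A ^ 2 - 4 * κ * C) = κ * D - μ * A * B)
    (hZ : κ * β ^ 3 - 2 * A * β - B ≠ 0)
    (cu : Rˣ) (b : R)
    (E2 : algebraMap k R A = (cu : R) ^ 2 * algebraMap k R A)
    (E3 : algebraMap k R B + (-2 : R) * algebraMap k R A * b + algebraMap k R κ * b ^ 3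
      = (cu : R) ^ 3 * algebraMap k R B)
    (E5 : algebraMap k R D + (-4 : R) * algebraMap k R C * b
        + algebraMap k R μ * algebraMap k R A * b ^ 3 = (cu : R) ^ 5 * algebraMap k R D) :
    (cu : R) = 1 ∧ b = 0 := by
  set φ : k →+* R := (algebraMap k R : k →+* R) with hφdef
  set c' : R := (cu : R) with hc'def
  have hAi : φ A * φ A⁻¹ = 1 := phi_inv_cancel hA
  have hc2 : c' ^ 2 = 1 := by
    linear_combination (-(φ A⁻¹)) * E2 + (1 - c' ^ 2) * hAi
  have hc3 : c' ^ 3 = c' := by linear_combination c' * hc2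
  have hc5 : c' ^ 5 = c' := by linear_combination (c' ^ 3 + c') * hc2
  have h3R : (3 : R) = 0 := by
    calc (3 : R) = φ (3 : k) := by rw [map_ofNat]
    _ = 0 := by rw [h3, map_zero]
  set u : R := c' - 1 with hudef
  have hu1 : u ^ 2 = u := by
    simp only [hudef]; linear_combination hc2 + (1 - c') * h3R
  have hu3 : u ^ 3 = u := by linear_combination (u + 1) * hu1
  have i1 : φ κ * b ^ 3 = u * φ B + (2 : R) * φ A * b := by
    linear_combination E3 + φ B * hc3
  have i2 : φ μ * φ A * b ^ 3 = u * φ D + (4 : R) * φ C * b := by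
    linear_combination E5 + φ D * hc5
  have hblin : ((2 : R) * φ μ * φ A ^ 2 - (4 : R) * φ κ * φ C) * b
      = u * (φ κ * φ D - φ μ * φ A * φ B) := by
    linear_combination φ κ * i2 + (-(φ μ * φ A)) * i1
  have hβR : φ β * ((2 : R) * φ μ * φ A ^ 2 - (4 : R) * φ κ * φ C)
      = φ κ * φ D - φ μ * φ A * φ B := by
    have h := congrArg φ hβ
    simp only [map_mul, map_sub, map_pow, map_ofNat] at h
    linear_combination h
  have hmm : φ (2 * μ * A ^ 2 - 4 * κ * C)
      = (2 : R) * φ μ * φ A ^ 2 - (4 : R) * φ κ * φ C := by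
    simp only [map_mul, map_sub, map_pow, map_ofNat]
  have h5 : (b - φ β * u) * φ (2 * μ * A ^ 2 - 4 * κ * C) = 0 := by
    rw [hmm]; linear_combination hblin + (-u) * hβR
  have hb1 : b = φ β * u := by
    have h6 := mul_phi_eq_zero hW h5
    linear_combination h6
  have hb3 : b ^ 3 = φ β ^ 3 * u := by
    linear_combination (b ^ 2 + φ β * u * b + φ β ^ 2 * u ^ 2) * hb1 + φ β ^ 3 * hu3
  have hmm2 : φ (κ * β ^ 3 - 2 * A * β - B) = φ κ * φ β ^ 3 - 2 * φ A * φ β - φ B := by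
    simp only [map_mul, map_sub, map_pow, map_ofNat]
  have hfin : u * φ (κ * β ^ 3 - 2 * A * β - B) = 0 := by
    rw [hmm2]
    linear_combination i1 + (-(φ κ)) * hb3 + (2 * φ A) * hb1
  have hu0 : u = 0 := mul_phi_eq_zero hZ hfin
  constructor
  · linear_combination hu0
  · linear_combination hb1 + φ β * hu0

lemma branch_p2a (h2 : (2 : k) = 0) (A B C κ₂ κ₄ σ₂ : k) (hB : B ≠ 0) (hκ₂ : κ₂ ≠ 0)
    (hζ : (κ₂ ^ 3 * A * B ^ 2 + κ₂ ^ 4 * C ^ 2 + κ₄ ^ 2 * A ^ 4) ^ 2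
        + (κ₂ ^ 3 * A * B ^ 2 + κ₂ ^ 4 * C ^ 2 + κ₄ ^ 2 * A ^ 4) * (σ₂ ^ 2 * κ₂ ^ 2 * A ^ 4)
        + (σ₂ ^ 2 * κ₂ ^ 2 * A ^ 4) ^ 2 ≠ 0)
    (cu : Rˣ) (b : R)
    (E2 : algebraMap k R A + algebraMap k R κ₂ * b ^ 2 = (cu : R) ^ 2 * algebraMap k R A)
    (E3 : algebraMap k R B = (cu : R) ^ 3 * algebraMap k R B)
    (E4 : algebraMap k R C + algebraMap k R B * b
        + algebraMap k R σ₂ * algebraMap k R A * b ^ 2 + algebraMap k R κ₄ * b ^ 4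
      = (cu : R) ^ 4 * algebraMap k R C) :
    (cu : R) = 1 ∧ b = 0 := by
  set φ : k →+* R := (algebraMap k R : k →+* R) with hφdef
  set c' : R := (cu : R) with hc'def
  have hBi : φ B * φ B⁻¹ = 1 := phi_inv_cancel hB
  have hc3 : c' ^ 3 = 1 := by
    linear_combination (-(φ B⁻¹)) * E3 + (1 - c' ^ 3) * hBi
  have hc4 : c' ^ 4 = c' := by linear_combination c' * hc3
  have h2R : (2 : R) = 0 := by
    calc (2 : R) = φ (2 : k) := by rw [map_ofNat]
    _ = 0 := by rw [h2, map_zero]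
  set u : R := c' - 1 with hudef
  have huuu : u ^ 3 + u ^ 2 + u = 0 := by
    simp only [hudef]; linear_combination hc3 + (c' - c' ^ 2) * h2R
  have hu4 : u ^ 4 = u := by linear_combination (u - 1) * huuu
  have hb2 : φ κ₂ * b ^ 2 = u ^ 2 * φ A := by
    simp only [hudef]; linear_combination E2 + (φ A * (c' - 1)) * h2R
  have h4 : φ B * b = u * φ C + φ σ₂ * φ A * b ^ 2 + φ κ₄ * b ^ 4 := by
    simp only [hudef]
    linear_combination E4 + φ C * hc4 + (-(φ σ₂ * φ A * b ^ 2 + φ κ₄ * b ^ 4)) * h2R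
  have hsq : φ B ^ 2 * b ^ 2 = u ^ 2 * φ C ^ 2 + φ σ₂ ^ 2 * φ A ^ 2 * b ^ 4
      + φ κ₄ ^ 2 * b ^ 8 := by
    linear_combination (φ B * b + u * φ C + φ σ₂ * φ A * b ^ 2 + φ κ₄ * b ^ 4) * h4
      + (u * φ C * φ σ₂ * φ A * b ^ 2 + u * φ C * φ κ₄ * b ^ 4
        + φ σ₂ * φ A * φ κ₄ * b ^ 6) * h2R
  have hb4 : φ κ₂ ^ 2 * b ^ 4 = u * φ A ^ 2 := by
    linear_combination (φ κ₂ * b ^ 2 + u ^ 2 * φ A) * hb2 + φ A ^ 2 * hu4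
  have hb8 : φ κ₂ ^ 4 * b ^ 8 = u ^ 2 * φ A ^ 4 := by
    linear_combination (φ κ₂ ^ 2 * b ^ 4 + u * φ A ^ 2) * hb4
  have hXY : u ^ 2 * (φ κ₂ ^ 3 * φ A * φ B ^ 2 + φ κ₂ ^ 4 * φ C ^ 2 + φ κ₄ ^ 2 * φ A ^ 4)
      = u * (φ σ₂ ^ 2 * φ κ₂ ^ 2 * φ A ^ 4) := by
    linear_combination (-(φ κ₂ ^ 4)) * hsq + (-(φ κ₂ ^ 3 * φ B ^ 2)) * hb2
      + (-(φ κ₂ ^ 2 * φ σ₂ ^ 2 * φ A ^ 2)) * hb4 + (-(φ κ₄ ^ 2)) * hb8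
      + (φ κ₂ ^ 4 * φ B ^ 2 * b ^ 2 - u * φ σ₂ ^ 2 * φ κ₂ ^ 2 * φ A ^ 4) * h2R
  have r2 : u ^ 2 * ((φ κ₂ ^ 3 * φ A * φ B ^ 2 + φ κ₂ ^ 4 * φ C ^ 2 + φ κ₄ ^ 2 * φ A ^ 4)
        + (φ σ₂ ^ 2 * φ κ₂ ^ 2 * φ A ^ 4))
      + u * (φ κ₂ ^ 3 * φ A * φ B ^ 2 + φ κ₂ ^ 4 * φ C ^ 2 + φ κ₄ ^ 2 * φ A ^ 4) = 0 := by
    linear_combination (-u) * hXY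
      + (φ κ₂ ^ 3 * φ A * φ B ^ 2 + φ κ₂ ^ 4 * φ C ^ 2 + φ κ₄ ^ 2 * φ A ^ 4) * huuu
  have hexp : φ ((κ₂ ^ 3 * A * B ^ 2 + κ₂ ^ 4 * C ^ 2 + κ₄ ^ 2 * A ^ 4) ^ 2
        + (κ₂ ^ 3 * A * B ^ 2 + κ₂ ^ 4 * C ^ 2 + κ₄ ^ 2 * A ^ 4) * (σ₂ ^ 2 * κ₂ ^ 2 * A ^ 4)
        + (σ₂ ^ 2 * κ₂ ^ 2 * A ^ 4) ^ 2)
      = (φ κ₂ ^ 3 * φ A * φ B ^ 2 + φ κ₂ ^ 4 * φ C ^ 2 + φ κ₄ ^ 2 * φ A ^ 4) ^ 2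
        + (φ κ₂ ^ 3 * φ A * φ B ^ 2 + φ κ₂ ^ 4 * φ C ^ 2 + φ κ₄ ^ 2 * φ A ^ 4)
          * (φ σ₂ ^ 2 * φ κ₂ ^ 2 * φ A ^ 4)
        + (φ σ₂ ^ 2 * φ κ₂ ^ 2 * φ A ^ 4) ^ 2 := by
    simp only [map_add, map_mul, map_pow]
  have hfin : u * φ ((κ₂ ^ 3 * A * B ^ 2 + κ₂ ^ 4 * C ^ 2 + κ₄ ^ 2 * A ^ 4) ^ 2
        + (κ₂ ^ 3 * A * B ^ 2 + κ₂ ^ 4 * C ^ 2 + κ₄ ^ 2 * A ^ 4) * (σ₂ ^ 2 * κ₂ ^ 2 * A ^ 4)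
        + (σ₂ ^ 2 * κ₂ ^ 2 * A ^ 4) ^ 2) = 0 := by
    rw [hexp]
    linear_combination
      (-(φ κ₂ ^ 3 * φ A * φ B ^ 2 + φ κ₂ ^ 4 * φ C ^ 2 + φ κ₄ ^ 2 * φ A ^ 4
          + φ σ₂ ^ 2 * φ κ₂ ^ 2 * φ A ^ 4)) * hXY
      + (φ κ₂ ^ 3 * φ A * φ B ^ 2 + φ κ₂ ^ 4 * φ C ^ 2 + φ κ₄ ^ 2 * φ A ^ 4) * r2
  have hu0 : u = 0 := mul_phi_eq_zero hζ hfin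
  have hc1 : c' = 1 := by linear_combination hu0
  have hb2' : b ^ 2 * φ κ₂ = 0 := by
    linear_combination hb2 + (u * φ A) * hu0
  have b2z : b ^ 2 = 0 := mul_phi_eq_zero hκ₂ hb2'
  have hbz : b * φ B = 0 := by
    linear_combination h4 + (φ C) * hu0 + (φ σ₂ * φ A + φ κ₄ * b ^ 2) * b2z
  have b0 : b = 0 := mul_phi_eq_zero hB hbz
  exact ⟨hc1, b0⟩

lemma branch_p2b (h2 : (2 : k) = 0) (A B C D F κ₄ : k) (hA : A ≠ 0) (hB : B ≠ 0)
    (hDM : D * ((κ₄ + 1) ^ 3 * B ^ 5 + D * ((κ₄ + 1) * A * B - κ₄ * D) ^ 2) ≠ 0)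
    (cu : Rˣ) (b : R)
    (E2 : algebraMap k R A = (cu : R) ^ 2 * algebraMap k R A)
    (E3 : algebraMap k R B = (cu : R) ^ 3 * algebraMap k R B)
    (E4 : algebraMap k R C + algebraMap k R B * b
        + algebraMap k R A * b ^ 2 + algebraMap k R κ₄ * b ^ 4
      = (cu : R) ^ 4 * algebraMap k R C)
    (E7 : algebraMap k R F + algebraMap k R D * b ^ 2
        + (algebraMap k R κ₄ + 1) * algebraMap k R B * b ^ 4
      = (cu : R) ^ 7 * algebraMap k R F) :
    (cu : R) = 1 ∧ b = 0 := by
  set φ : k →+* R := (algebraMap k R : k →+* R) with hφdef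
  set c' : R := (cu : R) with hc'def
  have hAi : φ A * φ A⁻¹ = 1 := phi_inv_cancel hA
  have hBi : φ B * φ B⁻¹ = 1 := phi_inv_cancel hB
  have hc2 : c' ^ 2 = 1 := by
    linear_combination (-(φ A⁻¹)) * E2 + (1 - c' ^ 2) * hAi
  have hc3 : c' ^ 3 = 1 := by
    linear_combination (-(φ B⁻¹)) * E3 + (1 - c' ^ 3) * hBi
  have hc1 : c' = 1 := by linear_combination hc3 + (-c') * hc2
  have h2R : (2 : R) = 0 := by
    calc (2 : R) = φ (2 : k) := by rw [map_ofNat]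
    _ = 0 := by rw [h2, map_zero]
  have E4' : φ B * b + φ A * b ^ 2 + φ κ₄ * b ^ 4 = 0 := by
    linear_combination E4 + (φ C * (c' ^ 3 + c' ^ 2 + c' + 1)) * hc1
  have E7' : φ D * b ^ 2 + (φ κ₄ + 1) * φ B * b ^ 4 = 0 := by
    linear_combination E7
      + (φ F * (c' ^ 6 + c' ^ 5 + c' ^ 4 + c' ^ 3 + c' ^ 2 + c' + 1)) * hc1
  set g : R := φ B⁻¹ * (φ A + φ κ₄ * b ^ 2) with hgdef
  have hbg : b = b ^ 2 * g := by
    simp only [hgdef]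
    linear_combination (-(φ B⁻¹)) * E4' + b * hBi + b * h2R
  set t : R := b * g with htdef
  have hbt : b * t = b := by
    simp only [htdef]; linear_combination (-1 : R) * hbg
  have R4 : φ B * t + φ A * b + φ κ₄ * b ^ 3 = 0 := by
    simp only [htdef]
    linear_combination g * E4' + (φ A + φ κ₄ * b ^ 2) * hbg
  have R7 : φ D * t + (φ κ₄ + 1) * φ B * b ^ 2 = 0 := by
    simp only [htdef]
    linear_combination g ^ 2 * E7' + (φ D * g + (φ κ₄ + 1) * φ B * (b + b ^ 2 * g)) * hbg
  have S1 : (φ κ₄ + 1) * φ B ^ 2 * b - φ A * φ D * t - φ κ₄ * φ D * b ^ 2 = 0 := by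
    linear_combination ((φ κ₄ + 1) * φ B * b) * R4 + (-(φ A + φ κ₄ * b ^ 2)) * R7
      + (-((φ κ₄ + 1) * φ B ^ 2 - φ κ₄ * φ D * b)) * hbt
  have S2 : (φ κ₄ + 1) ^ 2 * φ B ^ 3 * b
      - φ D * ((φ κ₄ + 1) * φ A * φ B - φ κ₄ * φ D) * t = 0 := by
    linear_combination ((φ κ₄ + 1) * φ B) * S1 + (φ κ₄ * φ D) * R7
  have hiii : φ D * (((φ κ₄ + 1) * φ A * φ B - φ κ₄ * φ D) * b + (φ κ₄ + 1) * φ B ^ 2 * t)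
      = 0 := by
    linear_combination (-b) * S2 + ((φ κ₄ + 1) * φ B ^ 2) * R7
      + (-(φ D * ((φ κ₄ + 1) * φ A * φ B - φ κ₄ * φ D))) * hbt
  have hexp : φ (D * ((κ₄ + 1) ^ 3 * B ^ 5 + D * ((κ₄ + 1) * A * B - κ₄ * D) ^ 2))
      = φ D * ((φ κ₄ + 1) ^ 3 * φ B ^ 5
        + φ D * ((φ κ₄ + 1) * φ A * φ B - φ κ₄ * φ D) ^ 2) := by
    simp only [map_add, map_sub, map_mul, map_pow, map_one]
  have tfin : t * φ (D * ((κ₄ + 1) ^ 3 * B ^ 5 + D * ((κ₄ + 1) * A * B - κ₄ * D) ^ 2))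
      = 0 := by
    rw [hexp]
    linear_combination (-(φ D * ((φ κ₄ + 1) * φ A * φ B - φ κ₄ * φ D))) * S2
      + ((φ κ₄ + 1) ^ 2 * φ B ^ 3) * hiii
  have t0 : t = 0 := mul_phi_eq_zero hDM tfin
  have b0 : b = 0 := by linear_combination (-1 : R) * hbt + b * t0
  exact ⟨hc1, b0⟩

end Branches
section MainAux

lemma natCast_R_eq {k R : Type} [CommSemiring k] [CommSemiring R] [Algebra k R]
    (x : ℕ) (y : k) (h : ((x : ℕ) : k) = y) : ((x : ℕ) : R) = algebraMap k R y := by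
  rw [← h, map_natCast]

end MainAux

open Polynomial in
lemma main_odd (k : Type) [Field k] (n : ℕ) (hn : 4 < n) (hp : (n : k) = 0)
    (h2 : (2 : k) ≠ 0) (h3 : (3 : k) ≠ 0) :
    ∃ P : MvPolynomial (Fin (n - 1)) k, P ≠ 0 ∧
      ∀ f : Polynomial k, f.Monic → f.natDegree = n → f.coeff (n - 1) = 0 →
        MvPolynomial.eval (fun i : Fin (n - 1) => f.coeff (i : ℕ)) P ≠ 0 →
        ∀ (R : Type) [CommRing R] [Algebra k R] [Nontrivial R],
          ∀ (c : Rˣ) (b : R),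
            (f.map (algebraMap k R)).comp (Polynomial.C (c : R) * Polynomial.X + Polynomial.C b)
              = (c : R) ^ n • f.map (algebraMap k R) →
            c = 1 ∧ b = 0 := by
  classical
  have hk2 : ((n.choose 2 : ℕ) : k) = 0 :=
    choose_n_zero hp (by norm_num) (by omega) (by exact_mod_cast h2)
  have hk3 : ((n.choose 3 : ℕ) : k) = 0 :=
    choose_n_zero hp (by norm_num) (by omega) (by exact_mod_cast h3)
  have hc21 : (((n - 2).choose 1 : ℕ) : k) = -2 := by
    have h := choose_one_cast hp (show 2 ≤ n by omega); exact_mod_cast h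
  have hs1 : (((n - 4).choose 1 : ℕ) : k) = -4 := by
    have h := choose_one_cast hp (show 4 ≤ n by omega); exact_mod_cast h
  have hs2 : (((n - 3).choose 2 : ℕ) : k) = 6 := by
    have h := choose_shift hp (j := 3) (t := 2) (by omega) (by norm_num)
    norm_num at h
    rw [cast_sub_n hp (show 4 ≤ n by omega)] at h
    have h' : (((n - 3).choose 2 : ℕ) : k) * 2 = 6 * 2 := by push_cast at h ⊢; linear_combination h
    exact mul_right_cancel₀ h2 h'
  have hs3 : (((n - 2).choose 3 : ℕ) : k) = -4 := by
    have h := choose_shift hp (j := 2) (t := 3) (by omega) (by norm_num)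
    norm_num at h
    rw [hs2] at h
    have h' : (((n - 2).choose 3 : ℕ) : k) * 3 = -4 * 3 := by push_cast at h ⊢; linear_combination h
    exact mul_right_cancel₀ h3 h'
  refine ⟨MvPolynomial.X ⟨n - 2, by omega⟩ * MvPolynomial.X ⟨n - 3, by omega⟩
      * MvPolynomial.X ⟨n - 5, by omega⟩ *
      (MvPolynomial.C 2 * MvPolynomial.X ⟨n - 2, by omega⟩ ^ 5 * MvPolynomial.X ⟨n - 5, by omega⟩
        + MvPolynomial.C (-4) * MvPolynomial.X ⟨n - 2, by omega⟩ ^ 4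
            * MvPolynomial.X ⟨n - 3, by omega⟩ * MvPolynomial.X ⟨n - 4, by omega⟩
        + MvPolynomial.C 2 * MvPolynomial.X ⟨n - 2, by omega⟩ ^ 3
            * MvPolynomial.X ⟨n - 3, by omega⟩ ^ 3
        + MvPolynomial.C ((n.choose 5 : ℕ) : k) * MvPolynomial.X ⟨n - 3, by omega⟩ ^ 5),
      ?_, ?_⟩
  · -- P ≠ 0
    have hQne : (MvPolynomial.C 2 * MvPolynomial.X ⟨n - 2, by omega⟩ ^ 5
          * MvPolynomial.X ⟨n - 5, by omega⟩
        + MvPolynomial.C (-4) * MvPolynomial.X ⟨n - 2, by omega⟩ ^ 4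
            * MvPolynomial.X ⟨n - 3, by omega⟩ * MvPolynomial.X ⟨n - 4, by omega⟩
        + MvPolynomial.C 2 * MvPolynomial.X ⟨n - 2, by omega⟩ ^ 3
            * MvPolynomial.X ⟨n - 3, by omega⟩ ^ 3
        + MvPolynomial.C ((n.choose 5 : ℕ) : k) * MvPolynomial.X ⟨n - 3, by omega⟩ ^ 5
        : MvPolynomial (Fin (n - 1)) k) ≠ 0 := by
      intro h0
      set g : Fin (n - 1) → k := fun i =>
        if (i : ℕ) = n - 3 then 0 else if (i : ℕ) = n - 4 then 0 else 1 with hg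
      have h2' := congrArg (MvPolynomial.eval g) h0
      simp only [map_add, map_mul, map_pow, MvPolynomial.eval_C, MvPolynomial.eval_X,
        map_zero] at h2'
      have vA : g ⟨n - 2, by omega⟩ = 1 := by
        rw [hg]; dsimp only
        rw [if_neg (by omega), if_neg (by omega)]
      have vB : g ⟨n - 3, by omega⟩ = 0 := by
        rw [hg]; dsimp only
        rw [if_pos rfl]
      have vC : g ⟨n - 4, by omega⟩ = 0 := by
        rw [hg]; dsimp only
        rw [if_neg (by omega), if_pos rfl]
      have vD : g ⟨n - 5, by omega⟩ = 1 := by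
        rw [hg]; dsimp only
        rw [if_neg (by omega), if_neg (by omega)]
      rw [vA, vB, vC, vD] at h2'
      norm_num at h2'
      exact h2 h2'
    exact mul_ne_zero (mul_ne_zero (mul_ne_zero (MvPolynomial.X_ne_zero _)
      (MvPolynomial.X_ne_zero _)) (MvPolynomial.X_ne_zero _)) hQne
  · intro f hf hdeg hc1f hPne R _ _ _ c b heq
    simp only [map_mul, MvPolynomial.eval_X] at hPne
    rcases mul_ne_zero_iff.1 hPne with ⟨h1, hQv⟩
    rcases mul_ne_zero_iff.1 h1 with ⟨h1', hD⟩
    rcases mul_ne_zero_iff.1 h1' with ⟨hA, hB⟩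
    have hA' : f.coeff (n - 2) ≠ 0 := hA
    have hQeval : MvPolynomial.eval (fun i : Fin (n - 1) => f.coeff (i : ℕ))
        (MvPolynomial.C 2 * MvPolynomial.X ⟨n - 2, by omega⟩ ^ 5
          * MvPolynomial.X ⟨n - 5, by omega⟩
        + MvPolynomial.C (-4) * MvPolynomial.X ⟨n - 2, by omega⟩ ^ 4
            * MvPolynomial.X ⟨n - 3, by omega⟩ * MvPolynomial.X ⟨n - 4, by omega⟩
        + MvPolynomial.C 2 * MvPolynomial.X ⟨n - 2, by omega⟩ ^ 3
            * MvPolynomial.X ⟨n - 3, by omega⟩ ^ 3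
        + MvPolynomial.C ((n.choose 5 : ℕ) : k) * MvPolynomial.X ⟨n - 3, by omega⟩ ^ 5)
        = 2 * f.coeff (n - 2) ^ 5 * f.coeff (n - 5)
          + (-4) * f.coeff (n - 2) ^ 4 * f.coeff (n - 3) * f.coeff (n - 4)
          + 2 * f.coeff (n - 2) ^ 3 * f.coeff (n - 3) ^ 3
          + ((n.choose 5 : ℕ) : k) * f.coeff (n - 3) ^ 5 := by
      simp only [map_add, map_mul, map_pow, MvPolynomial.eval_C, MvPolynomial.eval_X]
    have hQv' : 2 * f.coeff (n - 2) ^ 5 * f.coeff (n - 5)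
          + (-4) * f.coeff (n - 2) ^ 4 * f.coeff (n - 3) * f.coeff (n - 4)
          + 2 * f.coeff (n - 2) ^ 3 * f.coeff (n - 3) ^ 3
          + ((n.choose 5 : ℕ) : k) * f.coeff (n - 3) ^ 5 ≠ 0 := by
      rw [← hQeval]; exact hQv
    -- clean equations
    have E2 := eq2 hf hdeg hc1f c b heq (by omega)
    have t2 : ((n.choose 2 : ℕ) : R) = 0 := by rw [natCast_R_eq _ _ hk2, map_zero]
    rw [t2] at E2
    have E2' : algebraMap k R (f.coeff (n - 2))
        = (c : R) ^ 2 * algebraMap k R (f.coeff (n - 2)) := by linear_combination E2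
    have E3 := eq3 hf hdeg hc1f c b heq (by omega)
    have t3a : (((n - 2).choose 1 : ℕ) : R) = (-2 : R) := by
      rw [natCast_R_eq _ _ hc21, map_neg, map_ofNat]
    have t3b : ((n.choose 3 : ℕ) : R) = 0 := by rw [natCast_R_eq _ _ hk3, map_zero]
    rw [t3a, t3b] at E3
    have E3' : algebraMap k R (f.coeff (n - 3))
        + (-2 : R) * algebraMap k R (f.coeff (n - 2)) * b
        = (c : R) ^ 3 * algebraMap k R (f.coeff (n - 3)) := by linear_combination E3
    have E5 := eq5 hf hdeg hc1f c b heq (by omega)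
    have t5a : (((n - 4).choose 1 : ℕ) : R) = algebraMap k R (-4 : k) := natCast_R_eq _ _ hs1
    have t5b : (((n - 3).choose 2 : ℕ) : R) = algebraMap k R (6 : k) := natCast_R_eq _ _ hs2
    have t5c : (((n - 2).choose 3 : ℕ) : R) = algebraMap k R (-4 : k) := natCast_R_eq _ _ hs3
    have t5d : ((n.choose 5 : ℕ) : R) = algebraMap k R (((n.choose 5 : ℕ)) : k) :=
      (map_natCast _ _).symm
    rw [t5a, t5b, t5c, t5d] at E5
    have E5' : algebraMap k R (f.coeff (n - 5))
        + algebraMap k R (-4 : k) * algebraMap k R (f.coeff (n - 4)) * b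
        + algebraMap k R (6 : k) * algebraMap k R (f.coeff (n - 3)) * b ^ 2
        + algebraMap k R (-4 : k) * algebraMap k R (f.coeff (n - 2)) * b ^ 3
        + algebraMap k R (((n.choose 5 : ℕ)) : k) * b ^ 5
        = (c : R) ^ 5 * algebraMap k R (f.coeff (n - 5)) := by linear_combination E5
    -- k-side data
    have h2A : (-2 : k) * f.coeff (n - 2) ≠ 0 := by
      refine mul_ne_zero ?_ hA'
      simpa using h2
    set β : k := f.coeff (n - 3) * ((-2) * f.coeff (n - 2))⁻¹ with hβdef
    have hβ : β * (-2 * f.coeff (n - 2)) = f.coeff (n - 3) := by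
      rw [hβdef, mul_assoc, inv_mul_cancel₀ h2A, mul_one]
    have h16 : (16 : k) ≠ 0 := by
      have e : (16 : k) = 2 ^ 4 := by norm_num
      rw [e]; exact pow_ne_zero _ h2
    have hξ : f.coeff (n - 5)
        - (-4 : k) * f.coeff (n - 4) * β
        + 2 * 6 * f.coeff (n - 3) * β ^ 2
        - 4 * (-4 : k) * f.coeff (n - 2) * β ^ 3
        - 16 * ((n.choose 5 : ℕ) : k) * β ^ 5
        ≠ 0 := by
      intro h0
      apply hQv'
      have hident : (f.coeff (n - 5)
          - (-4 : k) * f.coeff (n - 4) * β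
          + 2 * 6 * f.coeff (n - 3) * β ^ 2
          - 4 * (-4 : k) * f.coeff (n - 2) * β ^ 3
          - 16 * ((n.choose 5 : ℕ) : k) * β ^ 5)
          * ((-2 * f.coeff (n - 2)) ^ 5)
          = -16 * (2 * f.coeff (n - 2) ^ 5 * f.coeff (n - 5)
            + (-4) * f.coeff (n - 2) ^ 4 * f.coeff (n - 3) * f.coeff (n - 4)
            + 2 * f.coeff (n - 2) ^ 3 * f.coeff (n - 3) ^ 3
            + ((n.choose 5 : ℕ) : k) * f.coeff (n - 3) ^ 5) := by
        linear_combination (-16 * ((n.choose 5 : ℕ) : k) * f.coeff (n - 3) ^ 4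
          + 32 * ((n.choose 5 : ℕ) : k) * f.coeff (n - 2) * f.coeff (n - 3) ^ 3 * β
          - 32 * f.coeff (n - 2) ^ 3 * f.coeff (n - 3) ^ 2
          - 64 * ((n.choose 5 : ℕ) : k) * f.coeff (n - 2) ^ 2 * f.coeff (n - 3) ^ 2 * β ^ 2
          + 64 * f.coeff (n - 2) ^ 4 * f.coeff (n - 3) * β
          + 128 * ((n.choose 5 : ℕ) : k) * f.coeff (n - 2) ^ 3 * f.coeff (n - 3) * β ^ 3
          + 256 * f.coeff (n - 2) ^ 5 * β ^ 2
          + 64 * f.coeff (n - 2) ^ 4 * f.coeff (n - 4)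
          - 256 * ((n.choose 5 : ℕ) : k) * f.coeff (n - 2) ^ 4 * β ^ 4) * hβ
      rw [h0, zero_mul] at hident
      rcases mul_eq_zero.1 hident.symm with h'' | h''
      · exact absurd h'' (by simpa using h16)
      · exact h''
    have hres := branch_lin (f.coeff (n - 2)) (f.coeff (n - 3)) (f.coeff (n - 4))
      (f.coeff (n - 5)) (-4) 6 (-4) ((n.choose 5 : ℕ) : k)
      β hA' h2A hβ hξ c b E2' E3' E5'
    exact ⟨Units.val_eq_one.1 hres.1, hres.2⟩

open Polynomial in
lemma main_p3 (k : Type) [Field k] (n : ℕ) (hn : 4 < n) (hp : (n : k) = 0)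
    (h2 : (2 : k) ≠ 0) (h3 : (3 : k) = 0) :
    ∃ P : MvPolynomial (Fin (n - 1)) k, P ≠ 0 ∧
      ∀ f : Polynomial k, f.Monic → f.natDegree = n → f.coeff (n - 1) = 0 →
        MvPolynomial.eval (fun i : Fin (n - 1) => f.coeff (i : ℕ)) P ≠ 0 →
        ∀ (R : Type) [CommRing R] [Algebra k R] [Nontrivial R],
          ∀ (c : Rˣ) (b : R),
            (f.map (algebraMap k R)).comp (Polynomial.C (c : R) * Polynomial.X + Polynomial.C b)
              = (c : R) ^ n • f.map (algebraMap k R) →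
            c = 1 ∧ b = 0 := by
  classical
  have h4 : (4 : k) ≠ 0 := by
    have e : (4 : k) = 2 ^ 2 := by norm_num
    rw [e]; exact pow_ne_zero _ h2
  have h5 : ((5 : ℕ) : k) ≠ 0 := by
    push_cast
    intro h; exact h2 (by linear_combination h - h3)
  have hk2 : ((n.choose 2 : ℕ) : k) = 0 :=
    choose_n_zero hp (by norm_num) (by omega) (by exact_mod_cast h2)
  have hk5 : ((n.choose 5 : ℕ) : k) = 0 :=
    choose_n_zero hp (by norm_num) (by omega) h5
  have hc21 : (((n - 2).choose 1 : ℕ) : k) = -2 := by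
    have h := choose_one_cast hp (show 2 ≤ n by omega); exact_mod_cast h
  have hs1 : (((n - 4).choose 1 : ℕ) : k) = -4 := by
    have h := choose_one_cast hp (show 4 ≤ n by omega); exact_mod_cast h
  have hs2 : (((n - 3).choose 2 : ℕ) : k) = 0 := by
    have h := choose_shift hp (j := 3) (t := 2) (by omega) (by norm_num)
    norm_num at h
    rw [cast_sub_n hp (show 4 ≤ n by omega)] at h
    have h' : (((n - 3).choose 2 : ℕ) : k) * 2 = 0 * 2 := by
      push_cast at h ⊢; linear_combination h + 4 * h3
    exact mul_right_cancel₀ h2 h'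
  by_cases hκ0 : ((n.choose 3 : ℕ) : k) = 0
  · -- κ₃ = 0 : linear branch
    refine ⟨MvPolynomial.X ⟨n - 2, by omega⟩ * MvPolynomial.X ⟨n - 3, by omega⟩
        * MvPolynomial.X ⟨n - 5, by omega⟩ *
        (MvPolynomial.C 2 * MvPolynomial.X ⟨n - 2, by omega⟩ ^ 5 * MvPolynomial.X ⟨n - 5, by omega⟩
          + MvPolynomial.C (-4) * MvPolynomial.X ⟨n - 2, by omega⟩ ^ 4
              * MvPolynomial.X ⟨n - 3, by omega⟩ * MvPolynomial.X ⟨n - 4, by omega⟩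
          + MvPolynomial.C (((n - 2).choose 3 : ℕ) : k) * MvPolynomial.X ⟨n - 2, by omega⟩ ^ 3
              * MvPolynomial.X ⟨n - 3, by omega⟩ ^ 3), ?_, ?_⟩
    · have hQne : (MvPolynomial.C 2 * MvPolynomial.X ⟨n - 2, by omega⟩ ^ 5
            * MvPolynomial.X ⟨n - 5, by omega⟩
          + MvPolynomial.C (-4) * MvPolynomial.X ⟨n - 2, by omega⟩ ^ 4
              * MvPolynomial.X ⟨n - 3, by omega⟩ * MvPolynomial.X ⟨n - 4, by omega⟩
          + MvPolynomial.C (((n - 2).choose 3 : ℕ) : k) * MvPolynomial.X ⟨n - 2, by omega⟩ ^ 3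
              * MvPolynomial.X ⟨n - 3, by omega⟩ ^ 3
          : MvPolynomial (Fin (n - 1)) k) ≠ 0 := by
        intro h0
        set g : Fin (n - 1) → k := fun i =>
          if (i : ℕ) = n - 3 then 0 else if (i : ℕ) = n - 4 then 0 else 1 with hg
        have h2' := congrArg (MvPolynomial.eval g) h0
        simp only [map_add, map_mul, map_pow, MvPolynomial.eval_C, MvPolynomial.eval_X,
          map_zero] at h2'
        have vA : g ⟨n - 2, by omega⟩ = 1 := by
          rw [hg]; dsimp only; rw [if_neg (by omega), if_neg (by omega)]
        have vB : g ⟨n - 3, by omega⟩ = 0 := by rw [hg]; dsimp only; rw [if_pos rfl]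
        have vC : g ⟨n - 4, by omega⟩ = 0 := by
          rw [hg]; dsimp only; rw [if_neg (by omega), if_pos rfl]
        have vD : g ⟨n - 5, by omega⟩ = 1 := by
          rw [hg]; dsimp only; rw [if_neg (by omega), if_neg (by omega)]
        rw [vA, vB, vC, vD] at h2'
        norm_num at h2'
        exact h2 h2'
      exact mul_ne_zero (mul_ne_zero (mul_ne_zero (MvPolynomial.X_ne_zero _)
        (MvPolynomial.X_ne_zero _)) (MvPolynomial.X_ne_zero _)) hQne
    · intro f hf hdeg hc1f hPne R _ _ _ c b heq
      simp only [map_mul, MvPolynomial.eval_X] at hPne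
      rcases mul_ne_zero_iff.1 hPne with ⟨h1, hQv⟩
      rcases mul_ne_zero_iff.1 h1 with ⟨h1', hD⟩
      rcases mul_ne_zero_iff.1 h1' with ⟨hA, hB⟩
      have hA' : f.coeff (n - 2) ≠ 0 := hA
      have hQeval : MvPolynomial.eval (fun i : Fin (n - 1) => f.coeff (i : ℕ))
          (MvPolynomial.C 2 * MvPolynomial.X ⟨n - 2, by omega⟩ ^ 5
            * MvPolynomial.X ⟨n - 5, by omega⟩
          + MvPolynomial.C (-4) * MvPolynomial.X ⟨n - 2, by omega⟩ ^ 4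
              * MvPolynomial.X ⟨n - 3, by omega⟩ * MvPolynomial.X ⟨n - 4, by omega⟩
          + MvPolynomial.C (((n - 2).choose 3 : ℕ) : k) * MvPolynomial.X ⟨n - 2, by omega⟩ ^ 3
              * MvPolynomial.X ⟨n - 3, by omega⟩ ^ 3)
          = 2 * f.coeff (n - 2) ^ 5 * f.coeff (n - 5)
            + (-4) * f.coeff (n - 2) ^ 4 * f.coeff (n - 3) * f.coeff (n - 4)
            + (((n - 2).choose 3 : ℕ) : k) * f.coeff (n - 2) ^ 3 * f.coeff (n - 3) ^ 3 := by
        simp only [map_add, map_mul, map_pow, MvPolynomial.eval_C, MvPolynomial.eval_X]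
      have hQv' : 2 * f.coeff (n - 2) ^ 5 * f.coeff (n - 5)
            + (-4) * f.coeff (n - 2) ^ 4 * f.coeff (n - 3) * f.coeff (n - 4)
            + (((n - 2).choose 3 : ℕ) : k) * f.coeff (n - 2) ^ 3 * f.coeff (n - 3) ^ 3 ≠ 0 := by
        rw [← hQeval]; exact hQv
      have E2 := eq2 hf hdeg hc1f c b heq (by omega)
      have t2 : ((n.choose 2 : ℕ) : R) = 0 := by rw [natCast_R_eq _ _ hk2, map_zero]
      rw [t2] at E2
      have E2' : algebraMap k R (f.coeff (n - 2))
          = (c : R) ^ 2 * algebraMap k R (f.coeff (n - 2)) := by linear_combination E2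
      have E3 := eq3 hf hdeg hc1f c b heq (by omega)
      have t3a : (((n - 2).choose 1 : ℕ) : R) = (-2 : R) := by
        rw [natCast_R_eq _ _ hc21, map_neg, map_ofNat]
      have t3b : ((n.choose 3 : ℕ) : R) = 0 := by rw [natCast_R_eq _ _ hκ0, map_zero]
      rw [t3a, t3b] at E3
      have E3' : algebraMap k R (f.coeff (n - 3))
          + (-2 : R) * algebraMap k R (f.coeff (n - 2)) * b
          = (c : R) ^ 3 * algebraMap k R (f.coeff (n - 3)) := by linear_combination E3
      have E5 := eq5 hf hdeg hc1f c b heq (by omega)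
      have t5a : (((n - 4).choose 1 : ℕ) : R) = algebraMap k R (-4 : k) := natCast_R_eq _ _ hs1
      have t5b : (((n - 3).choose 2 : ℕ) : R) = algebraMap k R (0 : k) := natCast_R_eq _ _ hs2
      have t5c : (((n - 2).choose 3 : ℕ) : R)
          = algebraMap k R ((((n - 2).choose 3 : ℕ)) : k) := (map_natCast _ _).symm
      have t5d : ((n.choose 5 : ℕ) : R) = algebraMap k R (0 : k) := natCast_R_eq _ _ hk5
      rw [t5a, t5b, t5c, t5d] at E5
      have E5' : algebraMap k R (f.coeff (n - 5))
          + algebraMap k R (-4 : k) * algebraMap k R (f.coeff (n - 4)) * b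
          + algebraMap k R (0 : k) * algebraMap k R (f.coeff (n - 3)) * b ^ 2
          + algebraMap k R ((((n - 2).choose 3 : ℕ)) : k) * algebraMap k R (f.coeff (n - 2)) * b ^ 3
          + algebraMap k R (0 : k) * b ^ 5
          = (c : R) ^ 5 * algebraMap k R (f.coeff (n - 5)) := by linear_combination E5
      have h2A : (-2 : k) * f.coeff (n - 2) ≠ 0 := by
        refine mul_ne_zero ?_ hA'
        simpa using h2
      set β : k := f.coeff (n - 3) * ((-2) * f.coeff (n - 2))⁻¹ with hβdef
      have hβ : β * (-2 * f.coeff (n - 2)) = f.coeff (n - 3) := by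
        rw [hβdef, mul_assoc, inv_mul_cancel₀ h2A, mul_one]
      have h16 : (16 : k) ≠ 0 := by
        have e : (16 : k) = 2 ^ 4 := by norm_num
        rw [e]; exact pow_ne_zero _ h2
      have hξ : f.coeff (n - 5)
          - (-4 : k) * f.coeff (n - 4) * β
          + 2 * (0 : k) * f.coeff (n - 3) * β ^ 2
          - 4 * (((n - 2).choose 3 : ℕ) : k) * f.coeff (n - 2) * β ^ 3
          - 16 * (0 : k) * β ^ 5 ≠ 0 := by
        intro h0
        apply hQv'
        have hident : (f.coeff (n - 5)
            - (-4 : k) * f.coeff (n - 4) * β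
            + 2 * (0 : k) * f.coeff (n - 3) * β ^ 2
            - 4 * (((n - 2).choose 3 : ℕ) : k) * f.coeff (n - 2) * β ^ 3
            - 16 * (0 : k) * β ^ 5)
            * ((-2 * f.coeff (n - 2)) ^ 5)
            = -16 * (2 * f.coeff (n - 2) ^ 5 * f.coeff (n - 5)
              + (-4) * f.coeff (n - 2) ^ 4 * f.coeff (n - 3) * f.coeff (n - 4)
              + (((n - 2).choose 3 : ℕ) : k) * f.coeff (n - 2) ^ 3 * f.coeff (n - 3) ^ 3) := by
          linear_combination (-16 * (((n - 2).choose 3 : ℕ) : k) * f.coeff (n - 2) ^ 3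
              * f.coeff (n - 3) ^ 2
            + 32 * (((n - 2).choose 3 : ℕ) : k) * f.coeff (n - 2) ^ 4 * f.coeff (n - 3) * β
            + 64 * f.coeff (n - 2) ^ 4 * f.coeff (n - 4)
            - 64 * (((n - 2).choose 3 : ℕ) : k) * f.coeff (n - 2) ^ 5 * β ^ 2) * hβ
        rw [h0, zero_mul] at hident
        rcases mul_eq_zero.1 hident.symm with h'' | h''
        · exact absurd h'' (by simpa using h16)
        · exact h''
      have hres := branch_lin (f.coeff (n - 2)) (f.coeff (n - 3)) (f.coeff (n - 4))
        (f.coeff (n - 5)) (-4) 0 ((((n - 2).choose 3 : ℕ)) : k) 0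
        β hA' h2A hβ hξ c b E2' E3' E5'
      exact ⟨Units.val_eq_one.1 hres.1, hres.2⟩
  · -- κ₃ ≠ 0 : branch_p3
    refine ⟨MvPolynomial.X ⟨n - 2, by omega⟩ * MvPolynomial.X ⟨n - 3, by omega⟩
        * MvPolynomial.X ⟨n - 5, by omega⟩ *
        ((MvPolynomial.C (2 * (((n - 2).choose 3 : ℕ) : k)) * MvPolynomial.X ⟨n - 2, by omega⟩ ^ 2
            - MvPolynomial.C (4 * ((n.choose 3 : ℕ) : k)) * MvPolynomial.X ⟨n - 4, by omega⟩) *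
         (MvPolynomial.C ((n.choose 3 : ℕ) : k)
            * (MvPolynomial.C ((n.choose 3 : ℕ) : k) * MvPolynomial.X ⟨n - 5, by omega⟩
              - MvPolynomial.C (((n - 2).choose 3 : ℕ) : k) * MvPolynomial.X ⟨n - 2, by omega⟩
                * MvPolynomial.X ⟨n - 3, by omega⟩) ^ 3
          - MvPolynomial.C 2 * MvPolynomial.X ⟨n - 2, by omega⟩
            * (MvPolynomial.C (2 * (((n - 2).choose 3 : ℕ) : k))
                * MvPolynomial.X ⟨n - 2, by omega⟩ ^ 2
              - MvPolynomial.C (4 * ((n.choose 3 : ℕ) : k)) * MvPolynomial.X ⟨n - 4, by omega⟩) ^ 2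
            * (MvPolynomial.C ((n.choose 3 : ℕ) : k) * MvPolynomial.X ⟨n - 5, by omega⟩
              - MvPolynomial.C (((n - 2).choose 3 : ℕ) : k) * MvPolynomial.X ⟨n - 2, by omega⟩
                * MvPolynomial.X ⟨n - 3, by omega⟩)
          - MvPolynomial.X ⟨n - 3, by omega⟩
            * (MvPolynomial.C (2 * (((n - 2).choose 3 : ℕ) : k))
                * MvPolynomial.X ⟨n - 2, by omega⟩ ^ 2
              - MvPolynomial.C (4 * ((n.choose 3 : ℕ) : k))
                * MvPolynomial.X ⟨n - 4, by omega⟩) ^ 3)), ?_, ?_⟩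
    · have hWne : ((MvPolynomial.C (2 * (((n - 2).choose 3 : ℕ) : k))
            * MvPolynomial.X ⟨n - 2, by omega⟩ ^ 2
          - MvPolynomial.C (4 * ((n.choose 3 : ℕ) : k)) * MvPolynomial.X ⟨n - 4, by omega⟩)
          : MvPolynomial (Fin (n - 1)) k) ≠ 0 := by
        intro h0
        set g : Fin (n - 1) → k := fun i => if (i : ℕ) = n - 4 then 1 else 0 with hg
        have h2' := congrArg (MvPolynomial.eval g) h0
        simp only [map_sub, map_mul, map_pow, MvPolynomial.eval_C, MvPolynomial.eval_X,
          map_zero] at h2'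
        have vA : g ⟨n - 2, by omega⟩ = 0 := by rw [hg]; dsimp only; rw [if_neg (by omega)]
        have vC : g ⟨n - 4, by omega⟩ = 1 := by rw [hg]; dsimp only; rw [if_pos rfl]
        rw [vA, vC] at h2'
        norm_num at h2'
        rcases h2' with h' | h'
        · exact h4 h'
        · exact hκ0 h'
      have hZne : ((MvPolynomial.C ((n.choose 3 : ℕ) : k)
            * (MvPolynomial.C ((n.choose 3 : ℕ) : k) * MvPolynomial.X ⟨n - 5, by omega⟩
              - MvPolynomial.C (((n - 2).choose 3 : ℕ) : k) * MvPolynomial.X ⟨n - 2, by omega⟩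
                * MvPolynomial.X ⟨n - 3, by omega⟩) ^ 3
          - MvPolynomial.C 2 * MvPolynomial.X ⟨n - 2, by omega⟩
            * (MvPolynomial.C (2 * (((n - 2).choose 3 : ℕ) : k))
                * MvPolynomial.X ⟨n - 2, by omega⟩ ^ 2
              - MvPolynomial.C (4 * ((n.choose 3 : ℕ) : k)) * MvPolynomial.X ⟨n - 4, by omega⟩) ^ 2
            * (MvPolynomial.C ((n.choose 3 : ℕ) : k) * MvPolynomial.X ⟨n - 5, by omega⟩
              - MvPolynomial.C (((n - 2).choose 3 : ℕ) : k) * MvPolynomial.X ⟨n - 2, by omega⟩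
                * MvPolynomial.X ⟨n - 3, by omega⟩)
          - MvPolynomial.X ⟨n - 3, by omega⟩
            * (MvPolynomial.C (2 * (((n - 2).choose 3 : ℕ) : k))
                * MvPolynomial.X ⟨n - 2, by omega⟩ ^ 2
              - MvPolynomial.C (4 * ((n.choose 3 : ℕ) : k))
                * MvPolynomial.X ⟨n - 4, by omega⟩) ^ 3)
          : MvPolynomial (Fin (n - 1)) k) ≠ 0 := by
        intro h0
        set g : Fin (n - 1) → k := fun i => if (i : ℕ) = n - 5 then 1 else 0 with hg
        have h2' := congrArg (MvPolynomial.eval g) h0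
        simp only [map_sub, map_mul, map_pow, MvPolynomial.eval_C, MvPolynomial.eval_X,
          map_zero] at h2'
        have vA : g ⟨n - 2, by omega⟩ = 0 := by rw [hg]; dsimp only; rw [if_neg (by omega)]
        have vB : g ⟨n - 3, by omega⟩ = 0 := by rw [hg]; dsimp only; rw [if_neg (by omega)]
        have vC : g ⟨n - 4, by omega⟩ = 0 := by rw [hg]; dsimp only; rw [if_neg (by omega)]
        have vD : g ⟨n - 5, by omega⟩ = 1 := by rw [hg]; dsimp only; rw [if_pos rfl]
        rw [vA, vB, vC, vD] at h2'
        norm_num at h2'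
        exact hκ0 h2'
      exact mul_ne_zero (mul_ne_zero (mul_ne_zero (MvPolynomial.X_ne_zero _)
        (MvPolynomial.X_ne_zero _)) (MvPolynomial.X_ne_zero _)) (mul_ne_zero hWne hZne)
    · intro f hf hdeg hc1f hPne R _ _ _ c b heq
      simp only [map_mul, MvPolynomial.eval_X, map_sub, map_pow, MvPolynomial.eval_C] at hPne
      rcases mul_ne_zero_iff.1 hPne with ⟨h1, hWZ⟩
      rcases mul_ne_zero_iff.1 hWZ with ⟨hWv, hZv⟩
      rcases mul_ne_zero_iff.1 h1 with ⟨h1', hD⟩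
      rcases mul_ne_zero_iff.1 h1' with ⟨hA, hB⟩
      have hA' : f.coeff (n - 2) ≠ 0 := hA
      have hWval : 2 * (((n - 2).choose 3 : ℕ) : k) * f.coeff (n - 2) ^ 2
          - 4 * ((n.choose 3 : ℕ) : k) * f.coeff (n - 4) ≠ 0 := by
        intro h0; exact hWv (by push_cast; linear_combination h0)
      have hZval : ((n.choose 3 : ℕ) : k)
            * (((n.choose 3 : ℕ) : k) * f.coeff (n - 5)
              - (((n - 2).choose 3 : ℕ) : k) * f.coeff (n - 2) * f.coeff (n - 3)) ^ 3
          - 2 * f.coeff (n - 2)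
            * (2 * (((n - 2).choose 3 : ℕ) : k) * f.coeff (n - 2) ^ 2
              - 4 * ((n.choose 3 : ℕ) : k) * f.coeff (n - 4)) ^ 2
            * (((n.choose 3 : ℕ) : k) * f.coeff (n - 5)
              - (((n - 2).choose 3 : ℕ) : k) * f.coeff (n - 2) * f.coeff (n - 3))
          - f.coeff (n - 3)
            * (2 * (((n - 2).choose 3 : ℕ) : k) * f.coeff (n - 2) ^ 2
              - 4 * ((n.choose 3 : ℕ) : k) * f.coeff (n - 4)) ^ 3 ≠ 0 := by
        intro h0; exact hZv (by push_cast; linear_combination h0)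
      have E2 := eq2 hf hdeg hc1f c b heq (by omega)
      have t2 : ((n.choose 2 : ℕ) : R) = 0 := by rw [natCast_R_eq _ _ hk2, map_zero]
      rw [t2] at E2
      have E2' : algebraMap k R (f.coeff (n - 2))
          = (c : R) ^ 2 * algebraMap k R (f.coeff (n - 2)) := by linear_combination E2
      have E3 := eq3 hf hdeg hc1f c b heq (by omega)
      have t3a : (((n - 2).choose 1 : ℕ) : R) = (-2 : R) := by
        rw [natCast_R_eq _ _ hc21, map_neg, map_ofNat]
      have t3b : ((n.choose 3 : ℕ) : R) = algebraMap k R (((n.choose 3 : ℕ)) : k) :=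
        (map_natCast _ _).symm
      rw [t3a, t3b] at E3
      have E3' : algebraMap k R (f.coeff (n - 3))
          + (-2 : R) * algebraMap k R (f.coeff (n - 2)) * b
          + algebraMap k R (((n.choose 3 : ℕ)) : k) * b ^ 3
          = (c : R) ^ 3 * algebraMap k R (f.coeff (n - 3)) := by linear_combination E3
      have E5 := eq5 hf hdeg hc1f c b heq (by omega)
      have t5a : (((n - 4).choose 1 : ℕ) : R) = (-4 : R) := by
        rw [natCast_R_eq _ _ hs1, map_neg, map_ofNat]
      have t5b : (((n - 3).choose 2 : ℕ) : R) = algebraMap k R (0 : k) := natCast_R_eq _ _ hs2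
      have t5c : (((n - 2).choose 3 : ℕ) : R)
          = algebraMap k R ((((n - 2).choose 3 : ℕ)) : k) := (map_natCast _ _).symm
      have t5d : ((n.choose 5 : ℕ) : R) = algebraMap k R (0 : k) := natCast_R_eq _ _ hk5
      rw [t5a, t5b, t5c, t5d] at E5
      have E5' : algebraMap k R (f.coeff (n - 5))
          + (-4 : R) * algebraMap k R (f.coeff (n - 4)) * b
          + algebraMap k R ((((n - 2).choose 3 : ℕ)) : k) * algebraMap k R (f.coeff (n - 2))
            * b ^ 3
          = (c : R) ^ 5 * algebraMap k R (f.coeff (n - 5)) := by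
        simp only [map_zero] at E5
        linear_combination E5
      set β : k := (((n.choose 3 : ℕ) : k) * f.coeff (n - 5)
          - (((n - 2).choose 3 : ℕ) : k) * f.coeff (n - 2) * f.coeff (n - 3))
          * (2 * (((n - 2).choose 3 : ℕ) : k) * f.coeff (n - 2) ^ 2
            - 4 * ((n.choose 3 : ℕ) : k) * f.coeff (n - 4))⁻¹ with hβdef
      have hβ : β * (2 * (((n - 2).choose 3 : ℕ) : k) * f.coeff (n - 2) ^ 2
            - 4 * ((n.choose 3 : ℕ) : k) * f.coeff (n - 4))
          = ((n.choose 3 : ℕ) : k) * f.coeff (n - 5)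
            - (((n - 2).choose 3 : ℕ) : k) * f.coeff (n - 2) * f.coeff (n - 3) := by
        rw [hβdef, mul_assoc, inv_mul_cancel₀ hWval, mul_one]
      have hZ : ((n.choose 3 : ℕ) : k) * β ^ 3 - 2 * f.coeff (n - 2) * β - f.coeff (n - 3)
          ≠ 0 := by
        intro h0
        apply hZval
        have hident : (((n.choose 3 : ℕ) : k) * β ^ 3 - 2 * f.coeff (n - 2) * β
            - f.coeff (n - 3))
            * (2 * (((n - 2).choose 3 : ℕ) : k) * f.coeff (n - 2) ^ 2
              - 4 * ((n.choose 3 : ℕ) : k) * f.coeff (n - 4)) ^ 3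
            = ((n.choose 3 : ℕ) : k)
                * (((n.choose 3 : ℕ) : k) * f.coeff (n - 5)
                  - (((n - 2).choose 3 : ℕ) : k) * f.coeff (n - 2) * f.coeff (n - 3)) ^ 3
              - 2 * f.coeff (n - 2)
                * (2 * (((n - 2).choose 3 : ℕ) : k) * f.coeff (n - 2) ^ 2
                  - 4 * ((n.choose 3 : ℕ) : k) * f.coeff (n - 4)) ^ 2
                * (((n.choose 3 : ℕ) : k) * f.coeff (n - 5)
                  - (((n - 2).choose 3 : ℕ) : k) * f.coeff (n - 2) * f.coeff (n - 3))
              - f.coeff (n - 3)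
                * (2 * (((n - 2).choose 3 : ℕ) : k) * f.coeff (n - 2) ^ 2
                  - 4 * ((n.choose 3 : ℕ) : k) * f.coeff (n - 4)) ^ 3 := by
          linear_combination (16 * f.coeff (n - 4) ^ 2 * ((n.choose 3 : ℕ) : k) ^ 3 * β ^ 2
            - 16 * f.coeff (n - 2) ^ 2 * f.coeff (n - 4) * ((n.choose 3 : ℕ) : k) ^ 2
              * (((n - 2).choose 3 : ℕ) : k) * β ^ 2
            + 4 * f.coeff (n - 2) ^ 4 * ((n.choose 3 : ℕ) : k)
              * (((n - 2).choose 3 : ℕ) : k) ^ 2 * β ^ 2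
            - 4 * f.coeff (n - 4) * f.coeff (n - 5) * ((n.choose 3 : ℕ) : k) ^ 3 * β
            + 4 * f.coeff (n - 2) * f.coeff (n - 3) * f.coeff (n - 4)
              * ((n.choose 3 : ℕ) : k) ^ 2 * (((n - 2).choose 3 : ℕ) : k) * β
            + 2 * f.coeff (n - 2) ^ 2 * f.coeff (n - 5) * ((n.choose 3 : ℕ) : k) ^ 2
              * (((n - 2).choose 3 : ℕ) : k) * β
            - 2 * f.coeff (n - 2) ^ 3 * f.coeff (n - 3) * ((n.choose 3 : ℕ) : k)
              * (((n - 2).choose 3 : ℕ) : k) ^ 2 * β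
            - 32 * f.coeff (n - 2) * f.coeff (n - 4) ^ 2 * ((n.choose 3 : ℕ) : k) ^ 2
            + 32 * f.coeff (n - 2) ^ 3 * f.coeff (n - 4) * ((n.choose 3 : ℕ) : k)
              * (((n - 2).choose 3 : ℕ) : k)
            - 8 * f.coeff (n - 2) ^ 5 * (((n - 2).choose 3 : ℕ) : k) ^ 2
            + f.coeff (n - 5) ^ 2 * ((n.choose 3 : ℕ) : k) ^ 3
            - 2 * f.coeff (n - 2) * f.coeff (n - 3) * f.coeff (n - 5)
              * ((n.choose 3 : ℕ) : k) ^ 2 * (((n - 2).choose 3 : ℕ) : k)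
            + f.coeff (n - 2) ^ 2 * f.coeff (n - 3) ^ 2 * ((n.choose 3 : ℕ) : k)
              * (((n - 2).choose 3 : ℕ) : k) ^ 2) * hβ
        rw [h0, zero_mul] at hident
        linear_combination -hident
      have hres := branch_p3 h3 (f.coeff (n - 2)) (f.coeff (n - 3)) (f.coeff (n - 4))
        (f.coeff (n - 5)) ((n.choose 3 : ℕ) : k) ((((n - 2).choose 3 : ℕ)) : k) β
        hA' hWval hβ hZ c b E2' E3' E5'
      exact ⟨Units.val_eq_one.1 hres.1, hres.2⟩

set_option maxHeartbeats 1000000 in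
open Polynomial in
lemma main_p2 (k : Type) [Field k] (n : ℕ) (hn : 4 < n) (hp : (n : k) = 0)
    (h2 : (2 : k) = 0) :
    ∃ P : MvPolynomial (Fin (n - 1)) k, P ≠ 0 ∧
      ∀ f : Polynomial k, f.Monic → f.natDegree = n → f.coeff (n - 1) = 0 →
        MvPolynomial.eval (fun i : Fin (n - 1) => f.coeff (i : ℕ)) P ≠ 0 →
        ∀ (R : Type) [CommRing R] [Algebra k R] [Nontrivial R],
          ∀ (c : Rˣ) (b : R),
            (f.map (algebraMap k R)).comp (Polynomial.C (c : R) * Polynomial.X + Polynomial.C b)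
              = (c : R) ^ n • f.map (algebraMap k R) →
            c = 1 ∧ b = 0 := by
  classical
  have h3 : ((3 : ℕ) : k) ≠ 0 := by
    push_cast
    intro h; exact one_ne_zero (α := k) (by linear_combination h - h2)
  have hk3 : ((n.choose 3 : ℕ) : k) = 0 :=
    choose_n_zero hp (by norm_num) (by omega) h3
  have hc21 : (((n - 2).choose 1 : ℕ) : k) = 0 := by
    have h := choose_one_cast hp (show 2 ≤ n by omega)
    rw [h]; push_cast; linear_combination -h2
  have hc31 : (((n - 3).choose 1 : ℕ) : k) = 1 := by
    have h := choose_one_cast hp (show 3 ≤ n by omega)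
    rw [h]; push_cast; linear_combination -2 * h2
  by_cases hκ₂0 : ((n.choose 2 : ℕ) : k) = 0
  · -- branch_p2b
    haveI := ringChar.charP k
    have hr2 : ringChar k = 2 := by
      have hdvd : ringChar k ∣ 2 := (ringChar.spec k 2).1 (by exact_mod_cast h2)
      rcases (Nat.dvd_prime Nat.prime_two).1 hdvd with h | h
      · exact absurd h CharP.ringChar_ne_one
      · exact h
    have hn2 : 2 ∣ n := by
      have := (ringChar.spec k n).1 hp
      rwa [hr2] at this
    have hch22 : 2 ∣ n.choose 2 := by
      have := (ringChar.spec k (n.choose 2)).1 (by exact_mod_cast hκ₂0)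
      rwa [hr2] at this
    have h4n : 4 ∣ n := by
      obtain ⟨m, hm⟩ := hn2
      have e : n.choose 2 = m * (2 * m - 1) := by
        rw [hm, Nat.choose_two_right,
          show 2 * m * (2 * m - 1) = 2 * (m * (2 * m - 1)) by ring,
          Nat.mul_div_cancel_left _ (by norm_num)]
      rw [e] at hch22
      rcases (Nat.Prime.dvd_mul Nat.prime_two).1 hch22 with h | h
      · omega
      · omega
    have hn8 : 8 ≤ n := by omega
    have c11 : (((n - 1).choose 1 : ℕ) : k) = -1 := by
      have h := choose_one_cast hp (show 1 ≤ n by omega); exact_mod_cast h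
    have c41 : (((n - 4).choose 1 : ℕ) : k) = 0 := by
      have h := choose_one_cast hp (show 4 ≤ n by omega)
      rw [h]; push_cast; linear_combination -2 * h2
    have c51 : (((n - 5).choose 1 : ℕ) : k) = 1 := by
      have h := choose_one_cast hp (show 5 ≤ n by omega)
      rw [h]; push_cast; linear_combination -3 * h2
    have c61 : (((n - 6).choose 1 : ℕ) : k) = 0 := by
      have h := choose_one_cast hp (show 6 ≤ n by omega)
      rw [h]; push_cast; linear_combination -3 * h2
    have p1 : ((n.choose 2 : ℕ) : k)
        = (((n - 1).choose 1 : ℕ) : k) + (((n - 1).choose 2 : ℕ) : k) := by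
      have h := cast_choose_pascal (k := k) n 1 (by omega)
      norm_num at h ⊢
      exact_mod_cast h
    have p2 : (((n - 1).choose 2 : ℕ) : k)
        = (((n - 2).choose 1 : ℕ) : k) + (((n - 2).choose 2 : ℕ) : k) := by
      have h := cast_choose_pascal (k := k) (n - 1) 1 (by omega)
      norm_num at h ⊢
      rw [show n - 1 - 1 = n - 2 by omega] at h
      exact_mod_cast h
    have p3 : (((n - 2).choose 2 : ℕ) : k)
        = (((n - 3).choose 1 : ℕ) : k) + (((n - 3).choose 2 : ℕ) : k) := by
      have h := cast_choose_pascal (k := k) (n - 2) 1 (by omega)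
      norm_num at h ⊢
      rw [show n - 2 - 1 = n - 3 by omega] at h
      exact_mod_cast h
    have p4 : (((n - 3).choose 2 : ℕ) : k)
        = (((n - 4).choose 1 : ℕ) : k) + (((n - 4).choose 2 : ℕ) : k) := by
      have h := cast_choose_pascal (k := k) (n - 3) 1 (by omega)
      norm_num at h ⊢
      rw [show n - 3 - 1 = n - 4 by omega] at h
      exact_mod_cast h
    have p5 : (((n - 4).choose 2 : ℕ) : k)
        = (((n - 5).choose 1 : ℕ) : k) + (((n - 5).choose 2 : ℕ) : k) := by
      have h := cast_choose_pascal (k := k) (n - 4) 1 (by omega)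
      norm_num at h ⊢
      rw [show n - 4 - 1 = n - 5 by omega] at h
      exact_mod_cast h
    have hσ₂ : (((n - 2).choose 2 : ℕ) : k) = 1 := by
      linear_combination -p2 - p1 + hκ₂0 - c11 - hc21
    have hσ₃ : (((n - 3).choose 2 : ℕ) : k) = 0 := by
      linear_combination -p3 + hσ₂ - hc31
    have hσ₄ : (((n - 4).choose 2 : ℕ) : k) = 0 := by
      linear_combination -p4 + hσ₃ - c41
    have hσ₅ : (((n - 5).choose 2 : ℕ) : k) = 1 := by
      linear_combination -p5 + hσ₄ - c51 - h2
    have c13 : (((n - 1).choose 3 : ℕ) : k) = -1 := by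
      have h := choose_shift hp (j := 1) (t := 3) (by omega) (by norm_num)
      norm_num at h
      rw [hσ₂] at h
      linear_combination h - (((n - 1).choose 3 : ℕ) : k) * h2
    have c23 : (((n - 2).choose 3 : ℕ) : k) = 0 := by
      have h := choose_shift hp (j := 2) (t := 3) (by omega) (by norm_num)
      norm_num at h
      linear_combination h - ((((n - 2).choose 3 : ℕ) : k)
        + (((n - 3).choose 2 : ℕ) : k)) * h2
    have c33 : (((n - 3).choose 3 : ℕ) : k) = 0 := by
      have h := choose_shift hp (j := 3) (t := 3) (by omega) (by norm_num)
      norm_num at h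
      rw [hσ₄] at h
      linear_combination h - (((n - 3).choose 3 : ℕ) : k) * h2
    have P1 : ((n.choose 4 : ℕ) : k)
        = (((n - 1).choose 3 : ℕ) : k) + (((n - 1).choose 4 : ℕ) : k) := by
      have h := cast_choose_pascal (k := k) n 3 (by omega)
      norm_num at h ⊢
      exact_mod_cast h
    have P2 : (((n - 1).choose 4 : ℕ) : k)
        = (((n - 2).choose 3 : ℕ) : k) + (((n - 2).choose 4 : ℕ) : k) := by
      have h := cast_choose_pascal (k := k) (n - 1) 3 (by omega)
      norm_num at h ⊢
      rw [show n - 1 - 1 = n - 2 by omega] at h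
      exact_mod_cast h
    have P3 : (((n - 2).choose 4 : ℕ) : k)
        = (((n - 3).choose 3 : ℕ) : k) + (((n - 3).choose 4 : ℕ) : k) := by
      have h := cast_choose_pascal (k := k) (n - 2) 3 (by omega)
      norm_num at h ⊢
      rw [show n - 2 - 1 = n - 3 by omega] at h
      exact_mod_cast h
    have q34 : (((n - 3).choose 4 : ℕ) : k) = ((n.choose 4 : ℕ) : k) + 1 := by
      linear_combination -P3 - P2 - P1 - c13 - c23 - c33
    have q43 : (((n - 4).choose 3 : ℕ) : k) = 0 := by
      have h := choose_shift hp (j := 4) (t := 3) (by omega) (by norm_num)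
      norm_num at h
      rw [hσ₅] at h
      linear_combination h - ((((n - 4).choose 3 : ℕ) : k) + 2) * h2
    have q25 : (((n - 2).choose 5 : ℕ) : k) = 0 := by
      have h := choose_shift hp (j := 2) (t := 5) (by omega) (by norm_num)
      norm_num at h
      rw [q34] at h
      linear_combination h - (2 * (((n - 2).choose 5 : ℕ) : k)
        + ((n.choose 4 : ℕ) : k) + 1) * h2
    have h7 : ((7 : ℕ) : k) ≠ 0 := by
      push_cast
      intro h; exact one_ne_zero (α := k) (by linear_combination h - 3 * h2)
    have k7 : ((n.choose 7 : ℕ) : k) = 0 := choose_n_zero hp (by norm_num) (by omega) h7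
    have k5 : ((n.choose 5 : ℕ) : k) = 0 := by
      have h5 : ((5 : ℕ) : k) ≠ 0 := by
        push_cast
        intro h; exact one_ne_zero (α := k) (by linear_combination h - 2 * h2)
      exact choose_n_zero hp (by norm_num) (by omega) h5
    -- the polynomial P
    refine ⟨MvPolynomial.X ⟨n - 2, by omega⟩ * MvPolynomial.X ⟨n - 3, by omega⟩
        * MvPolynomial.X ⟨n - 5, by omega⟩ *
        (MvPolynomial.C ((((n.choose 4 : ℕ) : k) + 1) ^ 3) * MvPolynomial.X ⟨n - 3, by omega⟩ ^ 5
          + MvPolynomial.X ⟨n - 5, by omega⟩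
            * (MvPolynomial.C (((n.choose 4 : ℕ) : k) + 1) * MvPolynomial.X ⟨n - 2, by omega⟩
                * MvPolynomial.X ⟨n - 3, by omega⟩
              - MvPolynomial.C ((n.choose 4 : ℕ) : k)
                * MvPolynomial.X ⟨n - 5, by omega⟩) ^ 2), ?_, ?_⟩
    · have hMne : ((MvPolynomial.C ((((n.choose 4 : ℕ) : k) + 1) ^ 3)
            * MvPolynomial.X ⟨n - 3, by omega⟩ ^ 5
          + MvPolynomial.X ⟨n - 5, by omega⟩
            * (MvPolynomial.C (((n.choose 4 : ℕ) : k) + 1) * MvPolynomial.X ⟨n - 2, by omega⟩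
                * MvPolynomial.X ⟨n - 3, by omega⟩
              - MvPolynomial.C ((n.choose 4 : ℕ) : k)
                * MvPolynomial.X ⟨n - 5, by omega⟩) ^ 2)
          : MvPolynomial (Fin (n - 1)) k) ≠ 0 := by
        by_cases hk40 : ((n.choose 4 : ℕ) : k) = 0
        · intro h0
          set g : Fin (n - 1) → k := fun i => if (i : ℕ) = n - 3 then 1 else 0 with hg
          have h2' := congrArg (MvPolynomial.eval g) h0
          simp only [map_add, map_sub, map_mul, map_pow, MvPolynomial.eval_C,
            MvPolynomial.eval_X, map_zero] at h2'
          have vA : g ⟨n - 2, by omega⟩ = 0 := by rw [hg]; dsimp only; rw [if_neg (by omega)]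
          have vB : g ⟨n - 3, by omega⟩ = 1 := by rw [hg]; dsimp only; rw [if_pos rfl]
          have vD : g ⟨n - 5, by omega⟩ = 0 := by rw [hg]; dsimp only; rw [if_neg (by omega)]
          rw [vA, vB, vD, hk40] at h2'
          norm_num at h2'
        · intro h0
          set g : Fin (n - 1) → k := fun i => if (i : ℕ) = n - 5 then 1 else 0 with hg
          have h2' := congrArg (MvPolynomial.eval g) h0
          simp only [map_add, map_sub, map_mul, map_pow, MvPolynomial.eval_C,
            MvPolynomial.eval_X, map_zero] at h2'
          have vA : g ⟨n - 2, by omega⟩ = 0 := by rw [hg]; dsimp only; rw [if_neg (by omega)]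
          have vB : g ⟨n - 3, by omega⟩ = 0 := by rw [hg]; dsimp only; rw [if_neg (by omega)]
          have vD : g ⟨n - 5, by omega⟩ = 1 := by rw [hg]; dsimp only; rw [if_pos rfl]
          rw [vA, vB, vD] at h2'
          norm_num at h2'
          exact hk40 h2'
      exact mul_ne_zero (mul_ne_zero (mul_ne_zero (MvPolynomial.X_ne_zero _)
        (MvPolynomial.X_ne_zero _)) (MvPolynomial.X_ne_zero _)) hMne
    · intro f hf hdeg hc1f hPne R _ _ _ c b heq
      simp only [map_mul, MvPolynomial.eval_X] at hPne
      rcases mul_ne_zero_iff.1 hPne with ⟨h1, hMv⟩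
      rcases mul_ne_zero_iff.1 h1 with ⟨h1', hD⟩
      rcases mul_ne_zero_iff.1 h1' with ⟨hA, hB⟩
      have hA' : f.coeff (n - 2) ≠ 0 := hA
      have hB' : f.coeff (n - 3) ≠ 0 := hB
      have hD' : f.coeff (n - 5) ≠ 0 := hD
      have hMeval : MvPolynomial.eval (fun i : Fin (n - 1) => f.coeff (i : ℕ))
          (MvPolynomial.C ((((n.choose 4 : ℕ) : k) + 1) ^ 3)
            * MvPolynomial.X ⟨n - 3, by omega⟩ ^ 5
          + MvPolynomial.X ⟨n - 5, by omega⟩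
            * (MvPolynomial.C (((n.choose 4 : ℕ) : k) + 1) * MvPolynomial.X ⟨n - 2, by omega⟩
                * MvPolynomial.X ⟨n - 3, by omega⟩
              - MvPolynomial.C ((n.choose 4 : ℕ) : k)
                * MvPolynomial.X ⟨n - 5, by omega⟩) ^ 2)
          = (((n.choose 4 : ℕ) : k) + 1) ^ 3 * f.coeff (n - 3) ^ 5
            + f.coeff (n - 5) * ((((n.choose 4 : ℕ) : k) + 1) * f.coeff (n - 2)
                * f.coeff (n - 3) - ((n.choose 4 : ℕ) : k) * f.coeff (n - 5)) ^ 2 := by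
        simp only [map_add, map_sub, map_mul, map_pow, MvPolynomial.eval_C,
          MvPolynomial.eval_X]
      have hDM : f.coeff (n - 5) * ((((n.choose 4 : ℕ) : k) + 1) ^ 3 * f.coeff (n - 3) ^ 5
          + f.coeff (n - 5) * ((((n.choose 4 : ℕ) : k) + 1) * f.coeff (n - 2)
            * f.coeff (n - 3) - ((n.choose 4 : ℕ) : k) * f.coeff (n - 5)) ^ 2) ≠ 0 := by
        refine mul_ne_zero hD' ?_
        rw [← hMeval]; exact hMv
      -- equations
      have E2 := eq2 hf hdeg hc1f c b heq (by omega)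
      have t2 : ((n.choose 2 : ℕ) : R) = 0 := by rw [natCast_R_eq _ _ hκ₂0, map_zero]
      rw [t2] at E2
      have E2' : algebraMap k R (f.coeff (n - 2))
          = (c : R) ^ 2 * algebraMap k R (f.coeff (n - 2)) := by linear_combination E2
      have E3 := eq3 hf hdeg hc1f c b heq (by omega)
      have t3a : (((n - 2).choose 1 : ℕ) : R) = 0 := by rw [natCast_R_eq _ _ hc21, map_zero]
      have t3b : ((n.choose 3 : ℕ) : R) = 0 := by rw [natCast_R_eq _ _ hk3, map_zero]
      rw [t3a, t3b] at E3
      have E3' : algebraMap k R (f.coeff (n - 3))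
          = (c : R) ^ 3 * algebraMap k R (f.coeff (n - 3)) := by linear_combination E3
      have E4 := eq4 hf hdeg hc1f c b heq (by omega)
      have t4a : (((n - 3).choose 1 : ℕ) : R) = 1 := by rw [natCast_R_eq _ _ hc31, map_one]
      have t4b : (((n - 2).choose 2 : ℕ) : R) = 1 := by rw [natCast_R_eq _ _ hσ₂, map_one]
      have t4c : ((n.choose 4 : ℕ) : R) = algebraMap k R (((n.choose 4 : ℕ)) : k) :=
        (map_natCast _ _).symm
      rw [t4a, t4b, t4c] at E4
      have E4' : algebraMap k R (f.coeff (n - 4)) + algebraMap k R (f.coeff (n - 3)) * b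
          + algebraMap k R (f.coeff (n - 2)) * b ^ 2
          + algebraMap k R (((n.choose 4 : ℕ)) : k) * b ^ 4
          = (c : R) ^ 4 * algebraMap k R (f.coeff (n - 4)) := by linear_combination E4
      have E7 := eq7 hf hdeg hc1f c b heq (by omega)
      have t7a : (((n - 6).choose 1 : ℕ) : R) = 0 := by rw [natCast_R_eq _ _ c61, map_zero]
      have t7b : (((n - 5).choose 2 : ℕ) : R) = 1 := by rw [natCast_R_eq _ _ hσ₅, map_one]
      have t7c : (((n - 4).choose 3 : ℕ) : R) = 0 := by rw [natCast_R_eq _ _ q43, map_zero]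
      have t7d : (((n - 3).choose 4 : ℕ) : R)
          = algebraMap k R (((n.choose 4 : ℕ) : k) + 1) := natCast_R_eq _ _ q34
      have t7e : (((n - 2).choose 5 : ℕ) : R) = 0 := by rw [natCast_R_eq _ _ q25, map_zero]
      have t7f : ((n.choose 7 : ℕ) : R) = 0 := by rw [natCast_R_eq _ _ k7, map_zero]
      rw [t7a, t7b, t7c, t7d, t7e, t7f] at E7
      have hmap : algebraMap k R (((n.choose 4 : ℕ) : k) + 1)
          = algebraMap k R (((n.choose 4 : ℕ)) : k) + 1 := by rw [map_add, map_one]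
      have E7' : algebraMap k R (f.coeff (n - 7)) + algebraMap k R (f.coeff (n - 5)) * b ^ 2
          + (algebraMap k R (((n.choose 4 : ℕ)) : k) + 1)
            * algebraMap k R (f.coeff (n - 3)) * b ^ 4
          = (c : R) ^ 7 * algebraMap k R (f.coeff (n - 7)) := by
        rw [hmap] at E7
        linear_combination E7
      have hres := branch_p2b h2 (f.coeff (n - 2)) (f.coeff (n - 3)) (f.coeff (n - 4))
        (f.coeff (n - 5)) (f.coeff (n - 7)) ((n.choose 4 : ℕ) : k) hA' hB'
        hDM c b E2' E3' E4' E7'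
      exact ⟨Units.val_eq_one.1 hres.1, hres.2⟩
  · -- branch_p2a
    refine ⟨MvPolynomial.X ⟨n - 2, by omega⟩ * MvPolynomial.X ⟨n - 3, by omega⟩
        * MvPolynomial.X ⟨n - 5, by omega⟩ *
        ((MvPolynomial.C (((n.choose 2 : ℕ) : k) ^ 3) * MvPolynomial.X ⟨n - 2, by omega⟩
              * MvPolynomial.X ⟨n - 3, by omega⟩ ^ 2
            + MvPolynomial.C (((n.choose 2 : ℕ) : k) ^ 4) * MvPolynomial.X ⟨n - 4, by omega⟩ ^ 2
            + MvPolynomial.C (((n.choose 4 : ℕ) : k) ^ 2)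
              * MvPolynomial.X ⟨n - 2, by omega⟩ ^ 4) ^ 2
          + (MvPolynomial.C (((n.choose 2 : ℕ) : k) ^ 3) * MvPolynomial.X ⟨n - 2, by omega⟩
              * MvPolynomial.X ⟨n - 3, by omega⟩ ^ 2
            + MvPolynomial.C (((n.choose 2 : ℕ) : k) ^ 4) * MvPolynomial.X ⟨n - 4, by omega⟩ ^ 2
            + MvPolynomial.C (((n.choose 4 : ℕ) : k) ^ 2)
              * MvPolynomial.X ⟨n - 2, by omega⟩ ^ 4)
            * (MvPolynomial.C ((((n - 2).choose 2 : ℕ) : k) ^ 2 * ((n.choose 2 : ℕ) : k) ^ 2)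
              * MvPolynomial.X ⟨n - 2, by omega⟩ ^ 4)
          + (MvPolynomial.C ((((n - 2).choose 2 : ℕ) : k) ^ 2 * ((n.choose 2 : ℕ) : k) ^ 2)
              * MvPolynomial.X ⟨n - 2, by omega⟩ ^ 4) ^ 2), ?_, ?_⟩
    · have hQne : (((MvPolynomial.C (((n.choose 2 : ℕ) : k) ^ 3)
              * MvPolynomial.X ⟨n - 2, by omega⟩ * MvPolynomial.X ⟨n - 3, by omega⟩ ^ 2
            + MvPolynomial.C (((n.choose 2 : ℕ) : k) ^ 4) * MvPolynomial.X ⟨n - 4, by omega⟩ ^ 2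
            + MvPolynomial.C (((n.choose 4 : ℕ) : k) ^ 2)
              * MvPolynomial.X ⟨n - 2, by omega⟩ ^ 4) ^ 2
          + (MvPolynomial.C (((n.choose 2 : ℕ) : k) ^ 3) * MvPolynomial.X ⟨n - 2, by omega⟩
              * MvPolynomial.X ⟨n - 3, by omega⟩ ^ 2
            + MvPolynomial.C (((n.choose 2 : ℕ) : k) ^ 4) * MvPolynomial.X ⟨n - 4, by omega⟩ ^ 2
            + MvPolynomial.C (((n.choose 4 : ℕ) : k) ^ 2)
              * MvPolynomial.X ⟨n - 2, by omega⟩ ^ 4)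
            * (MvPolynomial.C ((((n - 2).choose 2 : ℕ) : k) ^ 2 * ((n.choose 2 : ℕ) : k) ^ 2)
              * MvPolynomial.X ⟨n - 2, by omega⟩ ^ 4)
          + (MvPolynomial.C ((((n - 2).choose 2 : ℕ) : k) ^ 2 * ((n.choose 2 : ℕ) : k) ^ 2)
              * MvPolynomial.X ⟨n - 2, by omega⟩ ^ 4) ^ 2)
          : MvPolynomial (Fin (n - 1)) k) ≠ 0 := by
        intro h0
        set g : Fin (n - 1) → k := fun i => if (i : ℕ) = n - 4 then 1 else 0 with hg
        have h2' := congrArg (MvPolynomial.eval g) h0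
        simp only [map_add, map_mul, map_pow, MvPolynomial.eval_C, MvPolynomial.eval_X,
          map_zero] at h2'
        have vA : g ⟨n - 2, by omega⟩ = 0 := by rw [hg]; dsimp only; rw [if_neg (by omega)]
        have vB : g ⟨n - 3, by omega⟩ = 0 := by rw [hg]; dsimp only; rw [if_neg (by omega)]
        have vC : g ⟨n - 4, by omega⟩ = 1 := by rw [hg]; dsimp only; rw [if_pos rfl]
        rw [vA, vB, vC] at h2'
        norm_num at h2'
        exact hκ₂0 h2'
      exact mul_ne_zero (mul_ne_zero (mul_ne_zero (MvPolynomial.X_ne_zero _)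
        (MvPolynomial.X_ne_zero _)) (MvPolynomial.X_ne_zero _)) hQne
    · intro f hf hdeg hc1f hPne R _ _ _ c b heq
      simp only [map_mul, map_add, map_pow, MvPolynomial.eval_C,
        MvPolynomial.eval_X] at hPne
      rcases mul_ne_zero_iff.1 hPne with ⟨h1, hQv⟩
      rcases mul_ne_zero_iff.1 h1 with ⟨h1', hD⟩
      rcases mul_ne_zero_iff.1 h1' with ⟨hA, hB⟩
      have hB' : f.coeff (n - 3) ≠ 0 := hB
      have hζ : (((n.choose 2 : ℕ) : k) ^ 3 * f.coeff (n - 2) * f.coeff (n - 3) ^ 2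
              + ((n.choose 2 : ℕ) : k) ^ 4 * f.coeff (n - 4) ^ 2
              + ((n.choose 4 : ℕ) : k) ^ 2 * f.coeff (n - 2) ^ 4) ^ 2
            + (((n.choose 2 : ℕ) : k) ^ 3 * f.coeff (n - 2) * f.coeff (n - 3) ^ 2
              + ((n.choose 2 : ℕ) : k) ^ 4 * f.coeff (n - 4) ^ 2
              + ((n.choose 4 : ℕ) : k) ^ 2 * f.coeff (n - 2) ^ 4)
              * ((((n - 2).choose 2 : ℕ) : k) ^ 2 * ((n.choose 2 : ℕ) : k) ^ 2
                * f.coeff (n - 2) ^ 4)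
            + ((((n - 2).choose 2 : ℕ) : k) ^ 2 * ((n.choose 2 : ℕ) : k) ^ 2
                * f.coeff (n - 2) ^ 4) ^ 2 ≠ 0 := by
        intro h0
        apply hQv
        linear_combination h0
      have E2 := eq2 hf hdeg hc1f c b heq (by omega)
      have t2 : ((n.choose 2 : ℕ) : R) = algebraMap k R (((n.choose 2 : ℕ)) : k) :=
        (map_natCast _ _).symm
      rw [t2] at E2
      have E2' : algebraMap k R (f.coeff (n - 2))
          + algebraMap k R (((n.choose 2 : ℕ)) : k) * b ^ 2
          = (c : R) ^ 2 * algebraMap k R (f.coeff (n - 2)) := by linear_combination E2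
      have E3 := eq3 hf hdeg hc1f c b heq (by omega)
      have t3a : (((n - 2).choose 1 : ℕ) : R) = 0 := by rw [natCast_R_eq _ _ hc21, map_zero]
      have t3b : ((n.choose 3 : ℕ) : R) = 0 := by rw [natCast_R_eq _ _ hk3, map_zero]
      rw [t3a, t3b] at E3
      have E3' : algebraMap k R (f.coeff (n - 3))
          = (c : R) ^ 3 * algebraMap k R (f.coeff (n - 3)) := by linear_combination E3
      have E4 := eq4 hf hdeg hc1f c b heq (by omega)
      have t4a : (((n - 3).choose 1 : ℕ) : R) = 1 := by rw [natCast_R_eq _ _ hc31, map_one]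
      have t4b : (((n - 2).choose 2 : ℕ) : R)
          = algebraMap k R ((((n - 2).choose 2 : ℕ)) : k) := (map_natCast _ _).symm
      have t4c : ((n.choose 4 : ℕ) : R) = algebraMap k R (((n.choose 4 : ℕ)) : k) :=
        (map_natCast _ _).symm
      rw [t4a, t4b, t4c] at E4
      have E4' : algebraMap k R (f.coeff (n - 4)) + algebraMap k R (f.coeff (n - 3)) * b
          + algebraMap k R ((((n - 2).choose 2 : ℕ)) : k) * algebraMap k R (f.coeff (n - 2))
            * b ^ 2
          + algebraMap k R (((n.choose 4 : ℕ)) : k) * b ^ 4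
          = (c : R) ^ 4 * algebraMap k R (f.coeff (n - 4)) := by linear_combination E4
      have hres := branch_p2a h2 (f.coeff (n - 2)) (f.coeff (n - 3)) (f.coeff (n - 4))
        (((n.choose 2 : ℕ)) : k) (((n.choose 4 : ℕ)) : k) ((((n - 2).choose 2 : ℕ)) : k)
        hB' hκ₂0 hζ c b E2' E3' E4'
      exact ⟨Units.val_eq_one.1 hres.1, hres.2⟩

/-!
STATEMENT 4: Let `G = AGL₁ = 𝔾ₘ ⋉ 𝔾ₐ` act on the variety `X₀` of monic degree-`n`
polynomials with roots summing to `0` (coefficient of `x^(n-1)` zero), via `y ↦ c·y + b` on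
each root; so `(c, b)` fixes `f` iff `f(c·x + b) = cⁿ • f`.  Assume `char k = p > 0` divides
`n` (encoded as `(n : k) = 0`, which for `n > 4` forces `p > 0` and `p ∣ n`) and `n > 4`.
Then `G` acts generically freely on `X₀`: there is a nonzero polynomial `P` in the coordinates
`a_0, …, a_{n-2}` of `X₀` such that any `f` with `P(f) ≠ 0` has trivial scheme-theoretic
stabilizer — expressed functorially: over every nontrivial commutative `k`-algebra `R`
(this includes dual numbers, hence trivial Lie-algebra stabilizer), any `(c, b) ∈ Rˣ × R`
fixing the base change of `f` satisfies `c = 1` and `b = 0`.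
-/

open Polynomial

theorem stmt4 (k : Type) [Field k] [IsAlgClosed k] (n : ℕ) (hn : 4 < n)
    (hp : (n : k) = 0) :
    ∃ P : MvPolynomial (Fin (n - 1)) k, P ≠ 0 ∧
      ∀ f : Polynomial k, f.Monic → f.natDegree = n → f.coeff (n - 1) = 0 →
        MvPolynomial.eval (fun i : Fin (n - 1) => f.coeff (i : ℕ)) P ≠ 0 →
        ∀ (R : Type) [CommRing R] [Algebra k R] [Nontrivial R],
          ∀ (c : Rˣ) (b : R),
            (f.map (algebraMap k R)).comp (Polynomial.C (c : R) * Polynomial.X + Polynomial.C b)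
              = (c : R) ^ n • f.map (algebraMap k R) →
            c = 1 ∧ b = 0 := by
  by_cases h2 : (2 : k) = 0
  · exact main_p2 k n hn hp h2
  · by_cases h3 : (3 : k) = 0
    · exact main_p3 k n hn hp h2 h3
    · exact main_odd k n hn hp h2 h3
end

section
/- For the variety X of monic polynomials of degree n over an algebraically closed field k, the fixed-point set of multiplication of all roots by a fixed c ∈ k^×, c ≠ 1, is a linear subvariety of dimension at most n/2 (identifying X with affine n-space via coefficients). -/
/-!
STATEMENT 5: For the variety `X ≅ 𝔸ⁿ` of monic degree-`n` polynomials over an algebraically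
closed field `k` (coordinates: the coefficients `a_0, …, a_{n-1}`), the fixed-point set of the
action of a fixed `c ∈ kˣ`, `c ≠ 1` (scaling each root by `c`, i.e. `f(x) ↦ cⁿ f(x/c)`; `f` is
fixed iff `f(c·x) = cⁿ • f`) is a linear subvariety of dimension at most `n/2`: it is the
coordinate subspace where all coefficients outside a set `S` of at most `n/2` indices vanish.
-/


open Polynomial

lemma coeff_comp_C_mul_X {k : Type} [Field k] (f : k[X]) (c : k) (i : ℕ) :
    (f.comp (C c * X)).coeff i = c ^ i * f.coeff i := by
  induction f using Polynomial.induction_on' with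
  | add p q hp hq => simp [add_comp, hp, hq, mul_add]
  | monomial j a =>
    rw [monomial_comp, mul_pow, ← C_pow, mul_left_comm, coeff_C_mul, coeff_C_mul, coeff_X_pow,
      coeff_monomial]
    split <;> simp_all [mul_comm, eq_comm]

theorem stmt5 (k : Type) [Field k] [IsAlgClosed k] (n : ℕ)
    (c : kˣ) (hc : c ≠ 1) :
    ∃ S : Finset (Fin n), S.card ≤ n / 2 ∧
      ∀ f : Polynomial k, f.Monic → f.natDegree = n →
        (f.comp (Polynomial.C (c : k) * Polynomial.X) = (c : k) ^ n • f ↔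
          ∀ j : Fin n, j ∉ S → f.coeff (j : ℕ) = 0) := by
  classical
  set S : Finset (Fin n) := Finset.univ.filter (fun j : Fin n => (c : k) ^ (j : ℕ) = (c : k) ^ n)
    with hS
  set m := orderOf c with hmdef
  have hm1 : m ≠ 1 := by
    simpa [hmdef, orderOf_eq_one_iff] using hc
  have key : ∀ j ∈ S, m ∣ n - (j : ℕ) := by
    intro j hj
    rw [hS, Finset.mem_filter] at hj
    have hu : c ^ (j : ℕ) = c ^ n := Units.ext (by simpa using hj.2)
    have h1 : c ^ (n - (j : ℕ)) * c ^ (j : ℕ) = c ^ (j : ℕ) := by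
      rw [← pow_add, Nat.sub_add_cancel (le_of_lt j.isLt), hu]
    have : c ^ (n - (j : ℕ)) = 1 := by
      have := mul_right_cancel (b := (1 : kˣ)) (by simpa using h1)
      simpa using this
    exact orderOf_dvd_of_pow_eq_one this
  refine ⟨S, ?_, ?_⟩
  · -- cardinality bound
    have hmap : ∀ j ∈ S, (n - (j : ℕ)) / m - 1 ∈ Finset.range (n / 2) := by
      intro j hj
      have hd : m ∣ n - (j : ℕ) := key j hj
      have hpos : 0 < n - (j : ℕ) := Nat.sub_pos_of_lt j.isLt
      have hm0 : m ≠ 0 := by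
        intro h0; rw [h0] at hd
        have := Nat.eq_zero_of_zero_dvd hd; omega
      have hm2 : 2 ≤ m := by omega
      have hle : m ≤ n - (j : ℕ) := Nat.le_of_dvd hpos hd
      have h1 : 1 ≤ (n - (j : ℕ)) / m := Nat.one_le_div_iff (by omega) |>.2 hle
      have h2 : (n - (j : ℕ)) / m ≤ n / m := Nat.div_le_div_right (by omega)
      have h3 : n / m ≤ n / 2 := Nat.div_le_div_left hm2 (by norm_num)
      simp only [Finset.mem_range]
      omega
    have := Finset.card_le_card_of_injOn (fun j : Fin n => (n - (j : ℕ)) / m - 1) hmap ?_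
    · simpa using this
    intro j1 h1 j2 h2 heq
    simp only at heq
    have d1 := key j1 h1
    have d2 := key j2 h2
    have p1 : 0 < n - (j1 : ℕ) := Nat.sub_pos_of_lt j1.isLt
    have p2 : 0 < n - (j2 : ℕ) := Nat.sub_pos_of_lt j2.isLt
    have hm0 : m ≠ 0 := by
      intro h0; rw [h0] at d1
      have := Nat.eq_zero_of_zero_dvd d1; omega
    have e1 : (n - (j1 : ℕ)) / m * m = n - (j1 : ℕ) := Nat.div_mul_cancel d1
    have e2 : (n - (j2 : ℕ)) / m * m = n - (j2 : ℕ) := Nat.div_mul_cancel d2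
    have q1 : 1 ≤ (n - (j1 : ℕ)) / m := Nat.one_le_div_iff (by omega) |>.2 (Nat.le_of_dvd p1 d1)
    have q2 : 1 ≤ (n - (j2 : ℕ)) / m := Nat.one_le_div_iff (by omega) |>.2 (Nat.le_of_dvd p2 d2)
    have hdiv : (n - (j1 : ℕ)) / m = (n - (j2 : ℕ)) / m := by omega
    have hsub : n - (j1 : ℕ) = n - (j2 : ℕ) := by rw [← e1, ← e2, hdiv]
    have hj : (j1 : ℕ) = (j2 : ℕ) := by
      have := j1.isLt; have := j2.isLt; omega
    exact Fin.ext hj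
  · intro f hmon hdeg
    constructor
    · intro h j hj
      rw [hS, Finset.mem_filter] at hj
      have hne : (c : k) ^ (j : ℕ) ≠ (c : k) ^ n := by simpa using hj
      have := congrArg (fun p => Polynomial.coeff p (j : ℕ)) h
      simp only [coeff_comp_C_mul_X, coeff_smul, smul_eq_mul] at this
      by_contra ha
      exact hne (mul_right_cancel₀ ha this)
    · intro h
      ext i
      rw [coeff_comp_C_mul_X, coeff_smul, smul_eq_mul]
      rcases lt_trichotomy i n with hi | hi | hi
      · by_cases hmem : (⟨i, hi⟩ : Fin n) ∈ S
        · rw [hS, Finset.mem_filter] at hmem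
          simp only at hmem
          rw [hmem.2]
        · rw [h _ hmem]; ring
      · subst hi
        rfl
      · rw [coeff_eq_zero_of_natDegree_lt (hdeg ▸ hi)]; ring
end

section
/- Let Φ be an irreducible root system of type A_n (n ≠ 3, n ≥ 1), G_2, E_6, E_7, or E_8, with Weyl group W and root lattice Q. Then the kernel of the natural action of the group generated by W and −1 on Q ⊗ F_2 is exactly the subgroup generated by −1. -/
/-!
STATEMENT 6: Let `Φ` be an irreducible root system of type `Aₙ` (`n ≥ 1`, `n ≠ 3`), `G₂`,
`E₆`, `E₇`, or `E₈`, with Weyl group `W` and root lattice `Q`.  Then the kernel of the natural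
action of `⟨W, −1⟩` on `Q ⊗ F₂` is exactly the subgroup `{1, −1}` generated by `−1`.

Encoding: we write `Q = ℤʳ` in the basis of simple roots, so the simple reflection `sᵢ` acts
by the integer matrix `1 − Eᵢᵢ·(i-th row of the Cartan matrix C)`, i.e.
`(sᵢ)_{jk} = δ_{jk} − δ_{ji}·C i k`.  The group `⟨W, −1⟩` is the multiplicative closure of
these reflection matrices together with `−1` (all generators are involutions, so this closure
is a group).  Reduction mod 2 is entrywise `ℤ → ZMod 2`, and the kernel of the action on
`Q ⊗ F₂` is the set of elements reducing to the identity matrix.  The Cartan matrices for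
`G₂, E₆, E₇, E₈` are Mathlib's; for type `Aₙ` (rank `n`) it is the standard tridiagonal one.
-/

/-- The Cartan matrix of type `Aₙ` (rank `n`). -/
def cartanA (n : ℕ) : Matrix (Fin n) (Fin n) ℤ :=
  Matrix.of fun i j =>
    if i = j then 2 else if (i : ℕ) + 1 = (j : ℕ) ∨ (j : ℕ) + 1 = (i : ℕ) then -1 else 0

/-- The matrix of the simple reflection `sᵢ` acting on the root lattice in the basis of
simple roots, for a Cartan matrix `C`. -/
def reflMatrix {r : ℕ} (C : Matrix (Fin r) (Fin r) ℤ) (i : Fin r) :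
    Matrix (Fin r) (Fin r) ℤ :=
  1 - Matrix.of (fun j l => if j = i then C i l else 0)

/-- `⟨W, −1⟩`, as the multiplicative closure of the simple reflections and `−1`. -/
def weylNeg {r : ℕ} (C : Matrix (Fin r) (Fin r) ℤ) :
    Submonoid (Matrix (Fin r) (Fin r) ℤ) :=
  Submonoid.closure ({M | ∃ i, M = reflMatrix C i} ∪ {-1})

/-- The kernel of `⟨W, −1⟩` acting on `Q ⊗ F₂` is exactly `{1, −1}`. -/
def kernelIsPlusMinusOne {r : ℕ} (C : Matrix (Fin r) (Fin r) ℤ) : Prop :=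
  (weylNeg C : Set (Matrix (Fin r) (Fin r) ℤ)) ∩
      {g | g.map (Int.cast : ℤ → ZMod 2) = 1} = {1, -1}

namespace Stmt6
open Matrix
variable {r : ℕ}
abbrev Mat (r : ℕ) := Matrix (Fin r) (Fin r) ℤ

lemma int0 (z : ℤ) (h : ∀ a : ℕ, (2:ℤ)^a ∣ z) : z = 0 := by
  by_contra hz
  have h1 : (2:ℤ)^z.natAbs ≤ |z| :=
    Int.le_of_dvd (abs_pos.mpr hz) ((dvd_abs _ _).mpr (h z.natAbs))
  rw [Int.abs_eq_natAbs] at h1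
  have h2 : (2:ℕ)^z.natAbs ≤ z.natAbs := by exact_mod_cast h1
  exact absurd (Nat.lt_two_pow_self (n := z.natAbs)) (not_lt.mpr h2)

lemma entry_of_eq {α : Type*} {m n : Type*} {A B : Matrix m n α} (h : A = B) (i : m) (j : n) :
    A i j = B i j := by rw [h]

lemma binom (x : ℤ) (B : Mat r) (m : ℕ) :
    ∃ D : Mat r, (1 + x • B)^m = 1 + ((m : ℤ) * x) • B + (x^2) • D := by
  induction m with
  | zero => exact ⟨0, by simp⟩
  | succ m ih =>
    obtain ⟨D, hD⟩ := ih
    refine ⟨(m : ℤ) • (B*B) + D + x • (D*B), ?_⟩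
    rw [pow_succ, hD]
    push_cast
    simp only [add_mul, mul_add, mul_one, one_mul, smul_mul_assoc, mul_smul_comm, smul_smul,
      smul_add]
    module

lemma matrix_int0 (A : Mat r) (h : ∀ a : ℕ, ∃ D : Mat r, A = (2:ℤ)^a • D) : A = 0 := by
  ext i j
  refine int0 _ (fun a => ?_)
  obtain ⟨D, hD⟩ := h a
  exact ⟨D i j, by rw [hD]; simp⟩

lemma odd_pow_eq_one (m : ℕ) (hm : Odd m) (N A : Mat r)
    (hN : N = 1 + (2:ℤ) • A) (h : N ^ m = 1) : N = 1 := by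
  have key : ∀ a : ℕ, ∃ B : Mat r, N = 1 + ((2:ℤ)^(a+1)) • B := by
    intro a
    induction a with
    | zero => exact ⟨A, by simpa using hN⟩
    | succ a ih =>
      obtain ⟨B, hB⟩ := ih
      set x : ℤ := (2:ℤ)^(a+1) with hx
      obtain ⟨D, hD⟩ := binom x B m
      rw [hB, hD] at h
      have h0 : ((m : ℤ) * x) • B + (x^2) • D = 0 := by
        linear_combination (norm := abel) h
      have hent : ∀ i j, (2:ℤ) ∣ B i j := by
        intro i j
        have h1 : (m:ℤ) * x * B i j + x^2 * D i j = 0 := by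
          have h1' := entry_of_eq h0 i j
          simp only [Matrix.add_apply, Matrix.smul_apply, Matrix.zero_apply,
            smul_eq_mul] at h1'
          linarith
        have hxne : x ≠ 0 := by positivity
        have h3 : (m:ℤ) * B i j = -(x * D i j) :=
          mul_left_cancel₀ hxne (by linear_combination h1)
        have h4 : (2:ℤ) ∣ x := ⟨2^a, by rw [hx]; ring⟩
        have h5 : (2:ℤ) ∣ (m:ℤ) * B i j := by rw [h3]; exact (h4.mul_right _).neg_right
        have hmodd : ¬ (2:ℤ) ∣ (m:ℤ) := by
          rcases hm with ⟨k, hk⟩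
          omega
        exact (Int.prime_two.dvd_mul.mp h5).resolve_left hmodd
      refine ⟨Matrix.of (fun i j => B i j / 2), ?_⟩
      rw [hB]
      congr 1
      ext i j
      simp only [Matrix.smul_apply, Matrix.of_apply, smul_eq_mul]
      rw [pow_succ, mul_assoc, Int.mul_ediv_cancel' (hent i j)]
  have hN1 : N - 1 = 0 := by
    refine matrix_int0 _ (fun a => ?_)
    obtain ⟨B, hB⟩ := key a
    refine ⟨(2:ℤ) • B, ?_⟩
    rw [hB]
    ext i j
    simp only [Matrix.sub_apply, Matrix.add_apply, Matrix.smul_apply, smul_eq_mul, pow_succ]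
    ring
  linear_combination (norm := abel) hN1

lemma c0 (Cm : Mat r) (h : Cm = (-2:ℤ) • (Cm * Cm)) : Cm = 0 := by
  refine matrix_int0 _ (fun a => ?_)
  induction a with
  | zero => exact ⟨Cm, by simp⟩
  | succ a ih =>
    obtain ⟨D, hD⟩ := ih
    refine ⟨(-(2:ℤ)^a) • (D * D), ?_⟩
    rw [h, hD]
    simp only [smul_mul_assoc, mul_smul_comm, smul_smul]
    congr 1
    ring

lemma pow2_sq_eq_one : ∀ s : ℕ, ∀ N A : Mat r, N = 1 + (2:ℤ) • A → N^(2^s) = 1 → N^2 = 1 := by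
  intro s
  induction s with
  | zero =>
    intro N A hN h
    rw [pow_zero, pow_one] at h
    rw [h]; simp
  | succ s ih =>
    intro N A hN h
    have hsq : (N^2)^(2^s) = 1 := by
      rw [← pow_mul, show 2 * 2^s = 2^(s+1) by ring]
      exact h
    set Cm : Mat r := A + A*A with hCm
    have hN2 : N^2 = 1 + (2:ℤ) • ((2:ℤ) • Cm) := by
      rw [hN, sq]
      simp only [add_mul, mul_add, mul_one, one_mul, smul_mul_assoc, mul_smul_comm, smul_smul,
        smul_add, hCm]
      module
    have h4 : (N^2)^2 = 1 := ih (N^2) ((2:ℤ) • Cm) hN2 hsq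
    have hC : Cm = (-2:ℤ) • (Cm * Cm) := by
      have expand : (N^2)^2 = 1 + (8:ℤ) • Cm + (16:ℤ) • (Cm * Cm) := by
        rw [hN2, sq]
        simp only [add_mul, mul_add, mul_one, one_mul, smul_mul_assoc, mul_smul_comm, smul_smul,
          smul_add]
        module
      rw [h4] at expand
      have h0 : (8:ℤ) • Cm + (16:ℤ) • (Cm * Cm) = 0 := by
        linear_combination (norm := abel) expand.symm
      ext i j
      have h1 := entry_of_eq h0 i j
      simp only [Matrix.add_apply, Matrix.smul_apply, Matrix.zero_apply, smul_eq_mul] at h1 ⊢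
      linarith
    have : Cm = 0 := c0 Cm hC
    rw [hN2, this]
    simp


section Form
variable {r : ℕ}

lemma quad_transfer (A S : Mat r) (v : Fin r → ℤ) :
    v ⬝ᵥ (Aᵀ * S * A) *ᵥ v = (A *ᵥ v) ⬝ᵥ S *ᵥ (A *ᵥ v) := by
  rw [← Matrix.mulVec_mulVec, ← Matrix.mulVec_mulVec, Matrix.dotProduct_mulVec,
    Matrix.vecMul_transpose]

lemma col_dot (S A B : Mat r) (j : Fin r) :
    (Aᵀ * S * B) j j = (fun i => A i j) ⬝ᵥ S *ᵥ (fun i => B i j) := by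
  simp only [Matrix.mul_apply, Matrix.transpose_apply, Matrix.mulVec, dotProduct,
    Finset.sum_mul, Finset.mul_sum]
  rw [Finset.sum_comm]
  refine Finset.sum_congr rfl fun k _ => Finset.sum_congr rfl fun l _ => by ring

lemma refl_preserves (C S : Mat r) (d : Fin r → ℤ) (hsym : Sᵀ = S)
    (hd : ∀ i j, S i j = d i * C i j) (hC2 : ∀ i, C i i = 2) (i : Fin r) :
    (reflMatrix C i)ᵀ * S * reflMatrix C i = S := by
  set E : Mat r := Matrix.of (fun j l => if j = i then C i l else 0) with hE
  have hsym' : ∀ a b, S a b = S b a := fun a b => by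
    nth_rewrite 1 [← hsym]
    rw [Matrix.transpose_apply]
  have hES : ∀ j l, (Eᵀ * S) j l = C i j * S i l := by
    intro j l
    rw [Matrix.mul_apply]
    rw [Finset.sum_eq_single i]
    · simp [hE]
    · intro k _ hk
      simp [hE, hk]
    · simp
  have hSE : ∀ j l, (S * E) j l = S j i * C i l := by
    intro j l
    rw [Matrix.mul_apply]
    rw [Finset.sum_eq_single i]
    · simp [hE]
    · intro k _ hk
      simp [hE, hk]
    · simp
  have key : Eᵀ * S * E = Eᵀ * S + S * E - S + S := by
    ext j l
    have h1 : (Eᵀ * S * E) j l = (Eᵀ * S) j i * C i l := by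
      rw [Matrix.mul_apply]
      rw [Finset.sum_eq_single i]
      · simp [hE]
      · intro k _ hk
        simp [hE, hk]
      · simp
    rw [h1, hES]
    simp only [Matrix.add_apply, Matrix.sub_apply]
    rw [hES, hSE, hsym' j i]
    simp only [hd]
    rw [hC2 i]
    ring
  have expand : (reflMatrix C i)ᵀ * S * reflMatrix C i
      = S - Eᵀ * S - S * E + Eᵀ * S * E := by
    rw [reflMatrix]
    rw [Matrix.transpose_sub, Matrix.transpose_one]
    noncomm_ring
  rw [expand, key]
  abel

lemma neg_one_preserves (S : Mat r) : ((-1 : Mat r))ᵀ * S * (-1 : Mat r) = S := by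
  simp

lemma mem_weylNeg_preserves (C S : Mat r) (d : Fin r → ℤ) (hsym : Sᵀ = S)
    (hd : ∀ i j, S i j = d i * C i j) (hC2 : ∀ i, C i i = 2)
    {M : Mat r} (hM : M ∈ weylNeg C) : Mᵀ * S * M = S := by
  induction hM using Submonoid.closure_induction with
  | mem x hx =>
    rcases hx with hx | hx
    · obtain ⟨i, rfl⟩ := hx
      exact refl_preserves C S d hsym hd hC2 i
    · rw [Set.mem_singleton_iff.mp hx]
      exact neg_one_preserves S
  | one => simp
  | mul x y _ _ hx hy =>
    rw [Matrix.transpose_mul]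
    calc yᵀ * xᵀ * S * (x * y) = yᵀ * (xᵀ * S * x) * y := by noncomm_ring
    _ = S := by rw [hx, hy]

lemma mulVec_inj (S : Mat r) (hdef : ∀ v : Fin r → ℤ, v ⬝ᵥ S *ᵥ v ≤ 0 → v = 0)
    {M : Mat r} (hM : Mᵀ * S * M = S) : Function.Injective (M.mulVec) := by
  intro u w huw
  have hz : M *ᵥ (u - w) = 0 := by
    rw [Matrix.mulVec_sub, huw, sub_self]
  have hq : (u - w) ⬝ᵥ S *ᵥ (u - w) ≤ 0 := by
    have h1 := quad_transfer M S (u - w)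
    rw [hM, hz] at h1
    rw [h1]
    simp
  have := hdef _ hq
  exact sub_eq_zero.mp this

lemma eq_one_of_mulVec_id {M : Mat r} (h : ∀ v, M *ᵥ v = v) : M = 1 := by
  ext i j
  have h2 : M i j = (Pi.single j (1:ℤ) : Fin r → ℤ) i := by
    have := congrFun (h (Pi.single j 1)) i
    simpa using this
  rw [h2, Matrix.one_apply, Pi.single_apply]

end Form


section FiniteOrder
variable {r : ℕ}

lemma exists_pow_one (S : Mat r)
    (hdef : ∀ v : Fin r → ℤ, v ⬝ᵥ S *ᵥ v ≤ 0 → v = 0)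
    (N : ℤ) (hbnd : ∀ v : Fin r → ℤ, v ⬝ᵥ S *ᵥ v ≤ 6 → ∀ i, |v i| ≤ N)
    (hdiag6 : ∀ j : Fin r, S j j ≤ 6)
    (M : Mat r) (hO : ∀ k : ℕ, (M^k)ᵀ * S * (M^k) = S) :
    ∃ e : ℕ, 1 ≤ e ∧ M ^ e = 1 := by
  classical
  set F : Set (Fin r → Fin r → ℤ) :=
    Set.pi Set.univ (fun _ : Fin r => Set.pi Set.univ fun _ : Fin r => Set.Icc (-N) N) with hF
  have hFfin : F.Finite :=
    Set.Finite.pi fun _ => Set.Finite.pi fun _ => Set.finite_Icc _ _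
  have hmem : ∀ k : ℕ, (M^k : Mat r) ∈ F := by
    intro k
    intro i _
    intro j _
    have hcol : (fun l => (M^k) l j) ⬝ᵥ S *ᵥ (fun l => (M^k) l j) ≤ 6 := by
      rw [← col_dot S (M^k) (M^k) j, hO k]
      exact hdiag6 j
    have := hbnd _ hcol i
    simpa [Set.mem_Icc] using abs_le.mp this
  haveI := hFfin.to_subtype
  obtain ⟨a, b, hne, heq⟩ :=
    Finite.exists_ne_map_eq_of_infinite (fun k : ℕ => (⟨M^k, hmem k⟩ : F))
  have heq' : M ^ a = M ^ b := by
    exact congrArg Subtype.val heq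
  clear heq
  obtain ⟨a, b, hab, hpow⟩ : ∃ a b : ℕ, a < b ∧ M ^ a = M ^ b := by
    rcases hne.lt_or_gt with h | h
    · exact ⟨a, b, h, heq'⟩
    · exact ⟨b, a, h, heq'.symm⟩
  refine ⟨b - a, by omega, ?_⟩
  have hinj : Function.Injective ((M^a).mulVec) := mulVec_inj S hdef (hO a)
  apply eq_one_of_mulVec_id
  intro v
  apply hinj
  rw [Matrix.mulVec_mulVec, ← pow_add, show a + (b - a) = b by omega, ← hpow]

end FiniteOrder


section Mod2
variable {r : ℕ}

lemma exists_half (M : Mat r) (h : M.map (Int.cast : ℤ → ZMod 2) = 1) :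
    ∃ A : Mat r, M = 1 + (2:ℤ) • A := by
  have hdvd : ∀ i j, (2:ℤ) ∣ (M i j - (1 : Mat r) i j) := by
    intro i j
    have h1 := entry_of_eq h i j
    rw [Matrix.map_apply] at h1
    have h2 : (((1 : Mat r) i j : ℤ) : ZMod 2) = (1 : Matrix (Fin r) (Fin r) (ZMod 2)) i j := by
      rw [Matrix.one_apply, Matrix.one_apply]
      split <;> simp
    have h3 : ((M i j - (1 : Mat r) i j : ℤ) : ZMod 2) = 0 := by
      push_cast
      rw [h1, ← h2]
      ring
    exact (ZMod.intCast_zmod_eq_zero_iff_dvd _ 2).mp h3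
  refine ⟨Matrix.of (fun i j => (M i j - (1 : Mat r) i j) / 2), ?_⟩
  ext i j
  simp only [Matrix.add_apply, Matrix.smul_apply, Matrix.of_apply, smul_eq_mul]
  rw [Int.mul_ediv_cancel' (hdvd i j)]
  ring

lemma pow_map_one (M : Mat r) (h : M.map (Int.cast : ℤ → ZMod 2) = 1) (k : ℕ) :
    (M^k).map (Int.cast : ℤ → ZMod 2) = 1 := by
  have h1 : (M^k).map (Int.cast : ℤ → ZMod 2)
      = (M.map (Int.cast : ℤ → ZMod 2))^k := by
    have := map_pow ((Int.castRingHom (ZMod 2)).mapMatrix) M k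
    simpa [RingHom.mapMatrix_apply] using this
  rw [h1, h, one_pow]

lemma sq_eq_one (M : Mat r) (h : M.map (Int.cast : ℤ → ZMod 2) = 1)
    (e : ℕ) (he : 1 ≤ e) (hpow : M ^ e = 1) : M ^ 2 = 1 := by
  obtain ⟨s, m, hm, rfl⟩ : ∃ s m, Odd m ∧ e = 2 ^ s * m := by
    have := Nat.exists_eq_two_pow_mul_odd (n := e) (by omega)
    tauto
  have h1 : (M ^ (2^s)) ^ m = 1 := by rw [← pow_mul]; exact hpow
  obtain ⟨A1, hA1⟩ := exists_half (M ^ (2^s)) (pow_map_one M h (2^s))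
  have h2 : M ^ (2^s) = 1 := odd_pow_eq_one m hm _ A1 hA1 h1
  obtain ⟨A, hA⟩ := exists_half M h
  exact pow2_sq_eq_one s M A hA h2

end Mod2


section Master
variable {r : ℕ}

lemma one_add_two_smul_neg_one : (1 : Mat r) + (2:ℤ) • (-1 : Mat r) = -1 := by
  ext i j
  simp only [Matrix.add_apply, Matrix.smul_apply, Matrix.neg_apply, Matrix.one_apply,
    smul_eq_mul]
  split <;> ring

lemma map_neg_one : ((-1 : Mat r)).map (Int.cast : ℤ → ZMod 2) = 1 := by
  ext i j
  rw [Matrix.map_apply, Matrix.neg_apply, Matrix.one_apply, Matrix.one_apply]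
  split <;> simp <;> decide

lemma master (C S : Mat r) (d : Fin r → ℤ)
    (hsym : Sᵀ = S) (hd : ∀ i j, S i j = d i * C i j) (hC2 : ∀ i, C i i = 2)
    (hdiag6 : ∀ j : Fin r, S j j ≤ 6)
    (hdef : ∀ v : Fin r → ℤ, v ⬝ᵥ S *ᵥ v ≤ 0 → v = 0)
    (N : ℤ) (hbnd : ∀ v : Fin r → ℤ, v ⬝ᵥ S *ᵥ v ≤ 6 → ∀ i, |v i| ≤ N)
    (hend : ∀ A : Mat r, A * A = -A → Aᵀ * S = S * A → A = 0 ∨ A = -1) :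
    kernelIsPlusMinusOne C := by
  unfold kernelIsPlusMinusOne
  ext M
  simp only [Set.mem_inter_iff, Set.mem_setOf_eq, SetLike.mem_coe, Set.mem_insert_iff,
    Set.mem_singleton_iff]
  constructor
  · rintro ⟨hMW, hM2⟩
    have hO : ∀ k : ℕ, (M^k)ᵀ * S * (M^k) = S := fun k =>
      mem_weylNeg_preserves C S d hsym hd hC2 (pow_mem hMW k)
    obtain ⟨e, he, hpw⟩ := exists_pow_one S hdef N hbnd hdiag6 M hO
    have hsq : M^2 = 1 := sq_eq_one M hM2 e he hpw
    obtain ⟨A, hA⟩ := exists_half M hM2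
    have hAA : A * A = -A := by
      have hexp : M^2 = 1 + (4:ℤ) • A + (4:ℤ) • (A*A) := by
        rw [hA, sq]
        simp only [add_mul, mul_add, mul_one, one_mul, smul_mul_assoc, mul_smul_comm,
          smul_smul]
        module
      rw [hsq] at hexp
      ext i j
      have h1 := entry_of_eq hexp i j
      simp only [Matrix.add_apply, Matrix.smul_apply, Matrix.one_apply, Matrix.neg_apply,
        smul_eq_mul] at h1 ⊢
      linarith
    have hAS : Aᵀ * S = S * A := by
      have h1 : Mᵀ * S * M = S := by
        have := hO 1
        simpa using this
      have h2 : Mᵀ * S = S * M := by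
        calc Mᵀ * S = Mᵀ * S * (M * M) := by rw [← sq, hsq, mul_one]
        _ = (Mᵀ * S * M) * M := by noncomm_ring
        _ = S * M := by rw [h1]
      rw [hA] at h2
      rw [Matrix.transpose_add, Matrix.transpose_smul, Matrix.transpose_one] at h2
      have h3 : S + (2:ℤ) • (Aᵀ * S) = S + (2:ℤ) • (S * A) := by
        calc S + (2:ℤ) • (Aᵀ * S) = (1 + (2:ℤ) • Aᵀ) * S := by
              rw [add_mul, one_mul, smul_mul_assoc]
        _ = S * (1 + (2:ℤ) • A) := h2
        _ = S + (2:ℤ) • (S * A) := by rw [mul_add, mul_one, mul_smul_comm]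
      ext i j
      have h4 := entry_of_eq h3 i j
      simp only [Matrix.add_apply, Matrix.smul_apply, smul_eq_mul] at h4
      linarith
    rcases hend A hAA hAS with h | h
    · left; rw [hA, h]; simp
    · right; rw [hA, h, one_add_two_smul_neg_one]
  · intro h
    rcases h with h | h
    · subst h
      refine ⟨Submonoid.one_mem _, ?_⟩
      exact Matrix.map_one _ (by simp) (by simp)
    · subst h
      refine ⟨Submonoid.subset_closure (Or.inr rfl), map_neg_one⟩

end Master


section Endgame
variable {r : ℕ}

lemma sym_dot (S : Mat r) (hsym : Sᵀ = S) (u w : Fin r → ℤ) :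
    u ⬝ᵥ S *ᵥ w = w ⬝ᵥ S *ᵥ u := by
  rw [Matrix.dotProduct_mulVec]
  conv_lhs => rw [← hsym, Matrix.vecMul_transpose]
  rw [dotProduct_comm]

lemma q_even (S : Mat r) (hsym : Sᵀ = S) (heven : ∀ i, (2:ℤ) ∣ S i i)
    (v : Fin r → ℤ) : (2:ℤ) ∣ v ⬝ᵥ S *ᵥ v := by
  have hsym' : ∀ a b, S a b = S b a := fun a b => by
    nth_rewrite 1 [← hsym]
    rw [Matrix.transpose_apply]
  suffices h : ((v ⬝ᵥ S *ᵥ v : ℤ) : ZMod 2) = 0 by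
    exact_mod_cast (ZMod.intCast_zmod_eq_zero_iff_dvd _ 2).mp h
  have hq : ((v ⬝ᵥ S *ᵥ v : ℤ) : ZMod 2)
      = ∑ p ∈ (Finset.univ ×ˢ Finset.univ : Finset (Fin r × Fin r)),
          ((v p.1 : ZMod 2) * ((S p.1 p.2 : ℤ) : ZMod 2) * (v p.2 : ZMod 2)) := by
    rw [Finset.sum_product]
    rw [dotProduct]
    push_cast
    refine Finset.sum_congr rfl fun i _ => ?_
    rw [Matrix.mulVec, dotProduct]
    push_cast
    rw [Finset.mul_sum]
    exact Finset.sum_congr rfl fun j _ => by ring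
  rw [hq]
  apply Finset.sum_involution (fun p _ => (p.2, p.1))
  · intro p _
    rw [hsym' p.2 p.1]
    ring_nf
    simp [show (2 : ZMod 2) = 0 by decide]
  · intro p _ hf
    intro hcon
    apply hf
    have hp : p.2 = p.1 := congrArg Prod.fst hcon
    have : ((S p.1 p.1 : ℤ) : ZMod 2) = 0 :=
      (ZMod.intCast_zmod_eq_zero_iff_dvd _ 2).mpr (heven p.1)
    rw [hp, this]
    ring
  · intro p _
    simp
  · intro p _
    rfl

lemma hend_simply_laced (S : Mat r) (hsym : Sᵀ = S) (hS2 : ∀ i, S i i = 2)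
    (hdef : ∀ v : Fin r → ℤ, v ⬝ᵥ S *ᵥ v ≤ 0 → v = 0)
    (hnonneg : ∀ v : Fin r → ℤ, 0 ≤ v ⬝ᵥ S *ᵥ v)
    (hconn : ∀ T : Finset (Fin r), (∀ i j, S i j ≠ 0 → i ∈ T → j ∈ T) →
      T = ∅ ∨ T = Finset.univ) :
    ∀ A : Mat r, A * A = -A → Aᵀ * S = S * A → A = 0 ∨ A = -1 := by
  classical
  intro A hAA hAS
  have hcol : ∀ j, (∀ i, A i j = 0) ∨ (∀ i, A i j = -(1:Mat r) i j) := by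
    intro j
    set u : Fin r → ℤ := fun i => (-A) i j with hu
    set w : Fin r → ℤ := fun i => ((1:Mat r) + A) i j with hw
    have hz : (-A)ᵀ * S * ((1:Mat r) + A) = 0 := by
      rw [Matrix.transpose_neg, Matrix.neg_mul, Matrix.neg_mul, hAS]
      have e2 : S * A * ((1:Mat r) + A) = S * (A + A * A) := by
        rw [mul_add, mul_one, mul_add, mul_assoc]
      rw [e2, hAA]
      simp
    have hcd := col_dot S (-A) ((1:Mat r) + A) j
    rw [hz] at hcd
    have horth : u ⬝ᵥ S *ᵥ w = 0 := by
      rw [hu, hw, ← hcd]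
      simp
    have hsumuw : u + w = fun i => (1:Mat r) i j := by
      funext i
      simp [hu, hw]
    have hq1 : (u + w) ⬝ᵥ S *ᵥ (u + w) = 2 := by
      rw [hsumuw]
      have := col_dot S 1 1 j
      simp only [Matrix.transpose_one, Matrix.mul_one, Matrix.one_mul] at this
      rw [← this, hS2 j]
    have hexpand : (u + w) ⬝ᵥ S *ᵥ (u + w)
        = u ⬝ᵥ S *ᵥ u + u ⬝ᵥ S *ᵥ w + w ⬝ᵥ S *ᵥ u + w ⬝ᵥ S *ᵥ w := by
      rw [Matrix.mulVec_add, add_dotProduct, dotProduct_add,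
        dotProduct_add]
      ring
    have hsum2 : u ⬝ᵥ S *ᵥ u + w ⬝ᵥ S *ᵥ w = 2 := by
      rw [hexpand] at hq1
      rw [sym_dot S hsym w u] at hq1
      rw [horth] at hq1
      linarith
    have hz : u = 0 ∨ w = 0 := by
      have h1 := hnonneg u
      have h2 := hnonneg w
      obtain ⟨k1, hk1⟩ := q_even S hsym (fun i => by rw [hS2 i]) u
      rcases (by omega : u ⬝ᵥ S *ᵥ u ≤ 0 ∨ w ⬝ᵥ S *ᵥ w ≤ 0) with h | h
      · exact Or.inl (hdef u h)
      · exact Or.inr (hdef w h)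
    rcases hz with h | h
    · left
      intro i
      have := congrFun h i
      simpa [hu] using (neg_eq_zero.mp (by simpa [hu] using this))
    · right
      intro i
      have := congrFun h i
      simp only [hw, Matrix.add_apply, Pi.zero_apply] at this
      linarith
  set T : Finset (Fin r) := Finset.univ.filter (fun j => ∀ i, A i j = 0) with hT
  have hTmem : ∀ j, j ∈ T ↔ ∀ i, A i j = 0 := by
    intro j
    simp [hT]
  have hstep : ∀ i j, S i j ≠ 0 → i ∈ T → j ∈ T := by
    intro i j hS hi
    by_contra hj
    have hcolj : ∀ k, A k j = -(1:Mat r) k j := by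
      rcases hcol j with h | h
      · exact absurd ((hTmem j).mpr h) hj
      · exact h
    have hcoli : ∀ k, A k i = 0 := (hTmem i).mp hi
    have e1 : (Aᵀ * S) i j = 0 := by
      rw [Matrix.mul_apply]
      apply Finset.sum_eq_zero
      intro k _
      rw [Matrix.transpose_apply, hcoli k]
      ring
    have e2 : (S * A) i j = -S i j := by
      rw [Matrix.mul_apply]
      rw [Finset.sum_eq_single j]
      · rw [hcolj j, Matrix.one_apply_eq]
        ring
      · intro k _ hk
        rw [hcolj k, Matrix.one_apply_ne hk]
        ring
      · simp
    rw [hAS] at e1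
    rw [e1] at e2
    exact hS (by linarith)
  rcases hconn T hstep with h | h
  · right
    ext i j
    have : j ∉ T := by
      rw [h]
      exact Finset.notMem_empty j
    have hcolj : ∀ k, A k j = -(1:Mat r) k j := by
      rcases hcol j with hc | hc
      · exact absurd ((hTmem j).mpr hc) this
      · exact hc
    rw [hcolj i]
    simp
  · left
    ext i j
    have : j ∈ T := by
      rw [h]
      exact Finset.mem_univ j
    exact ((hTmem j).mp this) i

end Endgame


section Certificates
variable {r m : ℕ}

lemma rect_transfer (R : Matrix (Fin m) (Fin r) ℤ) (v : Fin r → ℤ) :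
    v ⬝ᵥ (Rᵀ * R) *ᵥ v = (R *ᵥ v) ⬝ᵥ (R *ᵥ v) := by
  rw [← Matrix.mulVec_mulVec, Matrix.dotProduct_mulVec, Matrix.vecMul_transpose]

lemma smul_quad (S : Mat r) (t : ℤ) (v : Fin r → ℤ) :
    v ⬝ᵥ (t • S) *ᵥ v = t * (v ⬝ᵥ S *ᵥ v) := by
  rw [Matrix.smul_mulVec, dotProduct_smul, smul_eq_mul]

lemma dot_self_nonneg (w : Fin m → ℤ) : 0 ≤ w ⬝ᵥ w :=
  Finset.sum_nonneg fun i _ => mul_self_nonneg (w i)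

lemma cert_nonneg (S : Mat r) (R : Matrix (Fin m) (Fin r) ℤ) (t : ℤ) (ht : 0 < t)
    (hR : Rᵀ * R = t • S) (v : Fin r → ℤ) : 0 ≤ v ⬝ᵥ S *ᵥ v := by
  have h1 : t * (v ⬝ᵥ S *ᵥ v) = (R *ᵥ v) ⬝ᵥ (R *ᵥ v) := by
    rw [← rect_transfer, hR, smul_quad]
  nlinarith [dot_self_nonneg (R *ᵥ v), h1]

lemma cert_bound (S : Mat r) (R : Matrix (Fin m) (Fin r) ℤ)
    (T : Mat r) (t δ : ℤ) (ht : 0 < t) (hδ : 0 < δ)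
    (hR : Rᵀ * R = t • S) (hT : T * S = δ • 1)
    (c e K : ℤ) (he : 0 ≤ e) (hce : ∀ x : ℤ, x^2 ≤ t*c → |x| ≤ e)
    (hK : ∀ i, e * (∑ k, |(T * Rᵀ) i k|) ≤ t*δ*K)
    (v : Fin r → ℤ) (hq : v ⬝ᵥ S *ᵥ v ≤ c) : ∀ i, |v i| ≤ K := by
  intro i
  set w : Fin m → ℤ := R *ᵥ v with hwdef
  have hw : w ⬝ᵥ w = t * (v ⬝ᵥ S *ᵥ v) := by
    rw [hwdef, ← rect_transfer, hR, smul_quad]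
  have hwk : ∀ k, |w k| ≤ e := by
    intro k
    apply hce
    have h1 : w k * w k ≤ w ⬝ᵥ w := by
      rw [dotProduct]
      exact Finset.single_le_sum (fun l _ => mul_self_nonneg (w l)) (Finset.mem_univ k)
    have h2 : t * (v ⬝ᵥ S *ᵥ v) ≤ t * c := by
      exact mul_le_mul_of_nonneg_left hq ht.le
    rw [pow_two]
    omega
  have hv : (t * δ) • v = (T * Rᵀ) *ᵥ w := by
    rw [hwdef, Matrix.mulVec_mulVec, Matrix.mul_assoc, hR, Matrix.mul_smul, hT,
      smul_smul, Matrix.smul_mulVec, Matrix.one_mulVec]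
  have hentry : (t * δ) * v i = ∑ k, (T * Rᵀ) i k * w k := by
    have := congrFun hv i
    simpa [Matrix.mulVec, dotProduct] using this
  have habs : |(t * δ) * v i| ≤ t*δ*K := by
    rw [hentry]
    calc |∑ k, (T * Rᵀ) i k * w k| ≤ ∑ k, |(T * Rᵀ) i k * w k| :=
          Finset.abs_sum_le_sum_abs _ _
    _ ≤ ∑ k, |(T * Rᵀ) i k| * e := by
          refine Finset.sum_le_sum fun k _ => ?_
          rw [abs_mul]
          exact mul_le_mul_of_nonneg_left (hwk k) (abs_nonneg _)
    _ = e * (∑ k, |(T * Rᵀ) i k|) := by rw [Finset.mul_sum]; exact Finset.sum_congr rfl fun k _ => by ring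
    _ ≤ t*δ*K := hK i
  have htd : 0 < t * δ := mul_pos ht hδ
  rw [abs_mul, abs_of_pos htd] at habs
  have : 0 ≤ |v i| := abs_nonneg _
  nlinarith

end Certificates


section TypeA

def pad (n : ℕ) (v : Fin n → ℤ) : ℕ → ℤ := fun k =>
  if h : 1 ≤ k ∧ k ≤ n then v ⟨k-1, by omega⟩ else 0

lemma int_abs_le_sq (x : ℤ) : |x| ≤ x^2 := by
  rcases eq_or_ne x 0 with h | h
  · simp [h]
  · have h1 : 1 ≤ |x| := by
      have := abs_pos.mpr h
      omega
    nlinarith [sq_abs x, abs_nonneg x]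

lemma sum_id (f : ℕ → ℤ) (h0 : f 0 = 0) (m : ℕ) :
    ∑ k ∈ Finset.range m, (f (k+1) - f k)^2
      = (∑ i ∈ Finset.range m, f (i+1) * (2 * f (i+1) - f i - f (i+2)))
        + f m * f (m+1) - f m ^ 2 := by
  induction m with
  | zero => simp [h0]
  | succ m ih =>
    rw [Finset.sum_range_succ, ih, Finset.sum_range_succ]
    ring

variable {n : ℕ}

lemma cartanA_decomp (i j : Fin n) : cartanA n i j =
    (if i = j then 2 else 0) + (if (i:ℕ)+1 = (j:ℕ) then -1 else 0)
      + (if (j:ℕ)+1 = (i:ℕ) then -1 else 0) := by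
  rcases i with ⟨i, hi⟩
  rcases j with ⟨j, hj⟩
  simp only [cartanA, Matrix.of_apply, Fin.mk.injEq]
  split_ifs <;> omega

lemma pad_succ (v : Fin n → ℤ) (i : Fin n) : pad n v ((i:ℕ)+1) = v i := by
  rcases i with ⟨i, hi⟩
  simp only [pad]
  rw [dif_pos ⟨by omega, by omega⟩]
  rfl

lemma mulVec_pad (v : Fin n → ℤ) (i : Fin n) :
    (cartanA n *ᵥ v) i
      = 2 * pad n v ((i:ℕ)+1) - pad n v (i:ℕ) - pad n v ((i:ℕ)+2) := by
  rw [Matrix.mulVec, dotProduct]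
  have hsplit : ∀ j : Fin n, cartanA n i j * v j
      = (if i = j then 2 * v j else 0) + (if (i:ℕ)+1 = (j:ℕ) then -v j else 0)
        + (if (j:ℕ)+1 = (i:ℕ) then -v j else 0) := by
    intro j
    rw [cartanA_decomp]
    split_ifs <;> ring
  rw [Finset.sum_congr rfl fun j _ => hsplit j]
  rw [Finset.sum_add_distrib, Finset.sum_add_distrib]
  have h1 : (∑ j : Fin n, if i = j then 2 * v j else 0) = 2 * pad n v ((i:ℕ)+1) := by
    rw [Finset.sum_ite_eq]
    simp [pad_succ]
  have h2 : (∑ j : Fin n, if (i:ℕ)+1 = (j:ℕ) then -v j else 0) = -pad n v ((i:ℕ)+2) := by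
    by_cases h : (i:ℕ)+1 < n
    · rw [Finset.sum_eq_single (⟨(i:ℕ)+1, h⟩ : Fin n)]
      · have : pad n v ((i:ℕ)+2) = v ⟨(i:ℕ)+1, h⟩ := by
          simp only [pad]
          rw [dif_pos ⟨by omega, by omega⟩]
          rfl
        rw [this, if_pos rfl]
      · intro k _ hk
        rw [if_neg]
        intro hc
        exact hk (Fin.ext hc.symm)
      · simp
    · have hz : pad n v ((i:ℕ)+2) = 0 := by
        simp only [pad]
        rw [dif_neg (by omega)]
      rw [hz]
      rw [Finset.sum_eq_zero]
      · simp
      · intro k _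
        rw [if_neg (by omega)]
  have h3 : (∑ j : Fin n, if (j:ℕ)+1 = (i:ℕ) then -v j else 0) = -pad n v (i:ℕ) := by
    by_cases h : 1 ≤ (i:ℕ)
    · have hlt : (i:ℕ)-1 < n := by omega
      rw [Finset.sum_eq_single (⟨(i:ℕ)-1, hlt⟩ : Fin n)]
      · have : pad n v (i:ℕ) = v ⟨(i:ℕ)-1, hlt⟩ := by
          simp only [pad]
          rw [dif_pos ⟨by omega, by omega⟩]
        rw [this, if_pos (show ((i:ℕ)-1)+1 = (i:ℕ) by omega)]
      · intro k _ hk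
        rw [if_neg]
        intro hc
        exact hk (Fin.ext (show (k:ℕ) = (i:ℕ)-1 by omega))
      · simp
    · have hz : pad n v (i:ℕ) = 0 := by
        simp only [pad]
        rw [dif_neg (by omega)]
      rw [hz]
      rw [Finset.sum_eq_zero]
      · simp
      · intro k _
        rw [if_neg (by omega)]
  rw [h1, h2, h3]
  ring

lemma qA_eq (v : Fin n → ℤ) :
    v ⬝ᵥ cartanA n *ᵥ v
      = ∑ k ∈ Finset.range (n+1), (pad n v (k+1) - pad n v k)^2 := by
  have h0 : pad n v 0 = 0 := by simp [pad]
  have hn1 : pad n v (n+1) = 0 := by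
    simp only [pad]
    rw [dif_neg (by omega)]
  rw [dotProduct]
  have hterm : ∀ i : Fin n, v i * (cartanA n *ᵥ v) i
      = pad n v ((i:ℕ)+1) * (2 * pad n v ((i:ℕ)+1) - pad n v (i:ℕ) - pad n v ((i:ℕ)+2)) :=
    fun i => by rw [mulVec_pad, pad_succ]
  rw [Finset.sum_congr rfl fun i _ => hterm i]
  rw [Fin.sum_univ_eq_sum_range
    (fun k => pad n v (k+1) * (2 * pad n v (k+1) - pad n v k - pad n v (k+2))) n]
  rw [sum_id (pad n v) h0 (n+1), hn1, Finset.sum_range_succ, hn1]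
  ring

lemma qA_nonneg (v : Fin n → ℤ) : 0 ≤ v ⬝ᵥ cartanA n *ᵥ v := by
  rw [qA_eq]
  exact Finset.sum_nonneg fun k _ => sq_nonneg _

lemma qA_bound (v : Fin n → ℤ) (i : Fin n) : |v i| ≤ v ⬝ᵥ cartanA n *ᵥ v := by
  have h0 : pad n v 0 = 0 := by simp [pad]
  have htel : v i = ∑ k ∈ Finset.range ((i:ℕ)+1), (pad n v (k+1) - pad n v k) := by
    rw [Finset.sum_range_sub (pad n v)]
    rw [h0, pad_succ]
    ring
  rw [qA_eq]
  calc |v i| ≤ ∑ k ∈ Finset.range ((i:ℕ)+1), |pad n v (k+1) - pad n v k| := by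
        rw [htel]
        exact Finset.abs_sum_le_sum_abs _ _
  _ ≤ ∑ k ∈ Finset.range (n+1), |pad n v (k+1) - pad n v k| := by
        apply Finset.sum_le_sum_of_subset_of_nonneg
        · exact Finset.range_subset_range.mpr (by omega)
        · intro k _ _
          exact abs_nonneg _
  _ ≤ ∑ k ∈ Finset.range (n+1), (pad n v (k+1) - pad n v k)^2 :=
        Finset.sum_le_sum fun k _ => int_abs_le_sq _

lemma cartanA_symm : (cartanA n)ᵀ = cartanA n := by
  ext i j
  rcases i with ⟨i, hi⟩
  rcases j with ⟨j, hj⟩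
  simp only [Matrix.transpose_apply, cartanA, Matrix.of_apply, Fin.mk.injEq]
  split_ifs <;> omega

lemma cartanA_conn (T : Finset (Fin n))
    (hstep : ∀ i j, cartanA n i j ≠ 0 → i ∈ T → j ∈ T) :
    T = ∅ ∨ T = Finset.univ := by
  by_cases hT : T = ∅
  · exact Or.inl hT
  · right
    obtain ⟨i0, hi0⟩ := Finset.nonempty_of_ne_empty hT
    have hadj : ∀ i j : Fin n, ((i:ℕ)+1 = (j:ℕ) ∨ (j:ℕ)+1 = (i:ℕ)) → i ∈ T → j ∈ T := by
      intro i j hij hi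
      apply hstep i j _ hi
      have hne : i ≠ j := by
        intro hc
        subst hc
        omega
      rw [cartanA_decomp]
      rw [if_neg hne]
      rcases hij with h | h
      · rw [if_pos h, if_neg (by omega)]
        norm_num
      · rw [if_neg (by omega), if_pos h]
        norm_num
    -- propagate down to 0 then up everywhere
    have hdown : ∀ m : ℕ, ∀ hm : m < n, (⟨m, hm⟩ : Fin n) ∈ T → ∀ k : ℕ, ∀ hk : k < n,
        k ≤ m → (⟨k, hk⟩ : Fin n) ∈ T := by
      intro m
      induction m with
      | zero =>
        intro hm h k hk hkm
        have : k = 0 := by omega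
        subst this
        exact h
      | succ m ih =>
        intro hm h k hk hkm
        rcases Nat.eq_or_lt_of_le hkm with he | hlt
        · subst he
          exact h
        · have hmem : (⟨m, by omega⟩ : Fin n) ∈ T := by
            apply hadj ⟨m+1, hm⟩ ⟨m, by omega⟩ _ h
            right
            simp
          exact ih (by omega) hmem k hk (by omega)
    have hup : ∀ m : ℕ, ∀ hm : m < n, (⟨m, hm⟩ : Fin n) ∈ T → ∀ k : ℕ, ∀ hk : k < n,
        m ≤ k → (⟨k, hk⟩ : Fin n) ∈ T := by
      intro m hm h k
      induction k with
      | zero =>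
        intro hk hkm
        have : m = 0 := by omega
        subst this
        exact h
      | succ k ih =>
        intro hk hkm
        rcases Nat.eq_or_lt_of_le hkm with he | hlt
        · subst he
          exact h
        · have hmem : (⟨k, by omega⟩ : Fin n) ∈ T := ih (by omega) (by omega)
          apply hadj ⟨k, by omega⟩ ⟨k+1, hk⟩ _ hmem
          left
          simp
    apply Finset.eq_univ_of_forall
    intro j
    rcases j with ⟨j, hj⟩
    rcases i0 with ⟨i0v, hi0v⟩
    by_cases hle : j ≤ i0v
    · exact hdown i0v hi0v hi0 j hj hle
    · exact hup i0v hi0v hi0 j hj (by omega)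

end TypeA


section Cases

lemma abs3_of_sq (x : ℤ) (hx : x^2 ≤ 12) : |x| ≤ 3 := by
  by_contra h
  push_neg at h
  have h4 : 4 ≤ |x| := by omega
  nlinarith [sq_abs x]

lemma abs0_of_sq (x : ℤ) (hx : x^2 ≤ 0) : |x| ≤ 0 := by
  nlinarith [sq_abs x, abs_nonneg x]

lemma cert_def {r m : ℕ} (S : Mat r) (R : Matrix (Fin m) (Fin r) ℤ)
    (T : Mat r) (t δ : ℤ) (ht : 0 < t) (hδ : 0 < δ)
    (hR : Rᵀ * R = t • S) (hT : T * S = δ • 1) :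
    ∀ v : Fin r → ℤ, v ⬝ᵥ S *ᵥ v ≤ 0 → v = 0 := by
  intro v hq
  have hb := cert_bound S R T t δ ht hδ hR hT 0 0 0 le_rfl
    (fun x hx => by nlinarith [sq_abs x, abs_nonneg x])
    (fun i => by simp) v hq
  funext i
  exact abs_eq_zero.mp (le_antisymm (hb i) (abs_nonneg _))

lemma caseA (n : ℕ) : kernelIsPlusMinusOne (cartanA n) := by
  have hdef : ∀ v : Fin n → ℤ, v ⬝ᵥ cartanA n *ᵥ v ≤ 0 → v = 0 := by
    intro v hv
    funext i
    have h1 := qA_bound v i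
    exact abs_eq_zero.mp (le_antisymm (by omega) (abs_nonneg _))
  apply master (cartanA n) (cartanA n) (fun _ => 1) cartanA_symm
    (fun i j => by ring) (fun i => by simp [cartanA]) (fun j => by simp [cartanA]) hdef 6
    (fun v hv i => le_trans (qA_bound v i) hv)
  exact hend_simply_laced (cartanA n) cartanA_symm (fun i => by simp [cartanA]) hdef
    qA_nonneg cartanA_conn

def SG2 : Mat 2 := !![2,-3;-3,6]
def RG2 : Matrix (Fin 4) (Fin 2) ℤ := !![2,-3;0,1;0,1;0,1]
def TG2 : Mat 2 := !![6,3;3,2]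

lemma RG2_spec : RG2ᵀ * RG2 = (2:ℤ) • SG2 := by decide
lemma TG2_spec : TG2 * SG2 = (3:ℤ) • 1 := by decide
lemma hK_G2 : ∀ i : Fin 2, (3:ℤ) * (∑ k, |(TG2 * RG2ᵀ) i k|) ≤ 2*3*6 := by decide

lemma hend_G2 : ∀ A : Mat 2, A * A = -A → Aᵀ * SG2 = SG2 * A → A = 0 ∨ A = -1 := by
  intro A hAA hAS
  have h01 := entry_of_eq hAS 0 1
  have h00 := entry_of_eq hAA 0 0
  have hA01 := entry_of_eq hAA 0 1
  have hA10 := entry_of_eq hAA 1 0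
  simp only [Matrix.mul_apply, Fin.sum_univ_two, Matrix.transpose_apply, Matrix.neg_apply,
    SG2, Matrix.cons_val', Matrix.cons_val_zero, Matrix.cons_val_one, Matrix.head_cons,
    Matrix.empty_val', Matrix.cons_val_fin_one, Matrix.head_fin_const,
    Matrix.of_apply] at h01 h00 hA01 hA10
  set a := A 0 0 with ha
  set b := A 0 1 with hb
  set c := A 1 0 with hc
  set d := A 1 1 with hd
  -- h01 : a * 2? need to inspect; assume: A 0 0 * -3 + A 1 0 * 6 = 2 * A 0 1 + -3 * A 1 1
  have hpar : (2:ℤ) ∣ (d - a) := by omega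
  have hbz : b = 0 := by
    rcases mul_eq_zero.mp (show b * (a + d + 1) = 0 by linear_combination hA01) with h | h
    · exact h
    · omega
  have hcz : c = 0 := by
    rcases mul_eq_zero.mp (show c * (a + d + 1) = 0 by linear_combination hA10) with h | h
    · exact h
    · omega
  have had : a = d := by omega
  have hmat : A = !![a, b; c, d] := by
    ext i j
    fin_cases i <;> fin_cases j <;> rfl
  rcases mul_eq_zero.mp (show a * (a + 1) = 0 by linear_combination h00 - c * hbz) with h | h
  · left
    rw [hmat, hbz, hcz, ← had, h]
    decide
  · right
    have ha1 : a = -1 := by omega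
    rw [hmat, hbz, hcz, ← had, ha1]
    decide

end Cases


section ExceptionalCases

lemma caseG2 : kernelIsPlusMinusOne CartanMatrix.G₂ := by
  have h2 : (0:ℤ) < 2 := by norm_num
  have h3 : (0:ℤ) < 3 := by norm_num
  apply master CartanMatrix.G₂ SG2 ![1,3] (by decide)
    (by unfold SG2 CartanMatrix.G₂; simp only [Matrix.of_apply]; decide) (by decide) (by decide)
    (cert_def SG2 RG2 TG2 2 3 h2 h3 RG2_spec TG2_spec) 6
    (fun v hv i => cert_bound SG2 RG2 TG2 2 3 h2 h3 RG2_spec TG2_spec 6 3 6 (by norm_num)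
      (fun x hx => abs3_of_sq x (by linarith)) hK_G2 v hv i)
  exact hend_G2

def RE6 : Matrix (Fin 8) (Fin 6) ℤ :=
  !![0, 2, 0, -1, 0, 0; 1, 0, -2, 1, 0, 0; -1, 0, 0, 1, 0, -1; 0, 0, 0, 1, -2, 1;
     -1, 0, 0, 0, 0, 1; 0, 0, 0, 0, 0, 1; 0, 0, 0, 0, 0, 0; -1, 0, 0, 0, 0, 0]
def TE6 : Mat 6 :=
  !![4, 3, 5, 6, 4, 2; 3, 6, 6, 9, 6, 3; 5, 6, 10, 12, 8, 4; 6, 9, 12, 18, 12, 6;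
     4, 6, 8, 12, 10, 5; 2, 3, 4, 6, 5, 4]

lemma RE6_spec : RE6ᵀ * RE6 = (2:ℤ) • CartanMatrix.E₆ := by decide
lemma TE6_spec : TE6 * CartanMatrix.E₆ = (3:ℤ) • 1 := by decide
lemma hK_E6 : ∀ i : Fin 6, (3:ℤ) * (∑ k, |(TE6 * RE6ᵀ) i k|) ≤ 2*3*9 := by decide
lemma conn_E6 : ∀ T : Finset (Fin 6),
    (∀ i j, CartanMatrix.E₆ i j ≠ 0 → i ∈ T → j ∈ T) → T = ∅ ∨ T = Finset.univ := by
  unfold CartanMatrix.E₆; simp only [Matrix.of_apply]; decide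

lemma caseE6 : kernelIsPlusMinusOne CartanMatrix.E₆ := by
  have h2 : (0:ℤ) < 2 := by norm_num
  have h3 : (0:ℤ) < 3 := by norm_num
  have hdef := cert_def CartanMatrix.E₆ RE6 TE6 2 3 h2 h3 RE6_spec TE6_spec
  apply master CartanMatrix.E₆ CartanMatrix.E₆ (fun _ => 1) (by decide)
    (fun i j => (one_mul _).symm) (by decide) (by decide) hdef 9
    (fun v hv i => cert_bound CartanMatrix.E₆ RE6 TE6 2 3 h2 h3 RE6_spec TE6_spec 6 3 9
      (by norm_num) (fun x hx => abs3_of_sq x (by linarith)) hK_E6 v hv i)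
  exact hend_simply_laced CartanMatrix.E₆ (by decide) (by decide) hdef
    (cert_nonneg CartanMatrix.E₆ RE6 2 h2 RE6_spec) conn_E6

end ExceptionalCases


section E7E8

def RE7 : Matrix (Fin 8) (Fin 7) ℤ :=
  !![0, 2, 0, -1, 0, 0, 0; 1, 0, -2, 1, 0, 0, 0; -1, 0, 0, 1, 0, -1, 0; 0, 0, 0, 1, -2, 1, 0;
     -1, 0, 0, 0, 0, 1, 0; 0, 0, 0, 0, 0, 1, -2; 0, 0, 0, 0, 0, 0, 0; -1, 0, 0, 0, 0, 0, 0]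
def TE7 : Mat 7 :=
  !![4, 4, 6, 8, 6, 4, 2; 4, 7, 8, 12, 9, 6, 3; 6, 8, 12, 16, 12, 8, 4; 8, 12, 16, 24, 18, 12, 6;
     6, 9, 12, 18, 15, 10, 5; 4, 6, 8, 12, 10, 8, 4; 2, 3, 4, 6, 5, 4, 3]

lemma RE7_spec : RE7ᵀ * RE7 = (2:ℤ) • CartanMatrix.E₇ := by decide
lemma TE7_spec : TE7 * CartanMatrix.E₇ = (2:ℤ) • 1 := by decide
lemma hK_E7 : ∀ i : Fin 7, (3:ℤ) * (∑ k, |(TE7 * RE7ᵀ) i k|) ≤ 2*2*12 := by decide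
set_option maxRecDepth 10000 in
lemma conn_E7 : ∀ T : Finset (Fin 7),
    (∀ i j, CartanMatrix.E₇ i j ≠ 0 → i ∈ T → j ∈ T) → T = ∅ ∨ T = Finset.univ := by
  unfold CartanMatrix.E₇; simp only [Matrix.of_apply]; decide

lemma caseE7 : kernelIsPlusMinusOne CartanMatrix.E₇ := by
  have h2 : (0:ℤ) < 2 := by norm_num
  have hdef := cert_def CartanMatrix.E₇ RE7 TE7 2 2 h2 h2 RE7_spec TE7_spec
  apply master CartanMatrix.E₇ CartanMatrix.E₇ (fun _ => 1) (by decide)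
    (fun i j => (one_mul _).symm) (by decide) (by decide) hdef 12
    (fun v hv i => cert_bound CartanMatrix.E₇ RE7 TE7 2 2 h2 h2 RE7_spec TE7_spec 6 3 12
      (by norm_num) (fun x hx => abs3_of_sq x (by linarith)) hK_E7 v hv i)
  exact hend_simply_laced CartanMatrix.E₇ (by decide) (by decide) hdef
    (cert_nonneg CartanMatrix.E₇ RE7 2 h2 RE7_spec) conn_E7

def RE8 : Matrix (Fin 8) (Fin 8) ℤ :=
  !![0, 2, 0, -1, 0, 0, 0, 0; 1, 0, -2, 1, 0, 0, 0, 0; -1, 0, 0, 1, 0, -1, 0, 0;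
     0, 0, 0, 1, -2, 1, 0, 0; -1, 0, 0, 0, 0, 1, 0, -1; 0, 0, 0, 0, 0, 1, -2, 1;
     0, 0, 0, 0, 0, 0, 0, 1; -1, 0, 0, 0, 0, 0, 0, 1]
def TE8 : Mat 8 :=
  !![4, 5, 7, 10, 8, 6, 4, 2; 5, 8, 10, 15, 12, 9, 6, 3; 7, 10, 14, 20, 16, 12, 8, 4;
     10, 15, 20, 30, 24, 18, 12, 6; 8, 12, 16, 24, 20, 15, 10, 5; 6, 9, 12, 18, 15, 12, 8, 4;
     4, 6, 8, 12, 10, 8, 6, 3; 2, 3, 4, 6, 5, 4, 3, 2]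

lemma RE8_spec : RE8ᵀ * RE8 = (2:ℤ) • CartanMatrix.E₈ := by decide
lemma TE8_spec : TE8 * CartanMatrix.E₈ = (1:ℤ) • 1 := by decide
lemma hK_E8 : ∀ i : Fin 8, (3:ℤ) * (∑ k, |(TE8 * RE8ᵀ) i k|) ≤ 2*1*21 := by decide
set_option maxRecDepth 10000 in
lemma conn_E8 : ∀ T : Finset (Fin 8),
    (∀ i j, CartanMatrix.E₈ i j ≠ 0 → i ∈ T → j ∈ T) → T = ∅ ∨ T = Finset.univ := by
  unfold CartanMatrix.E₈; simp only [Matrix.of_apply]; decide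

lemma caseE8 : kernelIsPlusMinusOne CartanMatrix.E₈ := by
  have h2 : (0:ℤ) < 2 := by norm_num
  have h1 : (0:ℤ) < 1 := by norm_num
  have hdef := cert_def CartanMatrix.E₈ RE8 TE8 2 1 h2 h1 RE8_spec TE8_spec
  apply master CartanMatrix.E₈ CartanMatrix.E₈ (fun _ => 1) (by decide)
    (fun i j => (one_mul _).symm) (by decide) (by decide) hdef 21
    (fun v hv i => cert_bound CartanMatrix.E₈ RE8 TE8 2 1 h2 h1 RE8_spec TE8_spec 6 3 21
      (by norm_num) (fun x hx => abs3_of_sq x (by linarith)) hK_E8 v hv i)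
  exact hend_simply_laced CartanMatrix.E₈ (by decide) (by decide) hdef
    (cert_nonneg CartanMatrix.E₈ RE8 2 h2 RE8_spec) conn_E8

end E7E8

end Stmt6

theorem stmt6 :
    (∀ n : ℕ, 1 ≤ n → n ≠ 3 → kernelIsPlusMinusOne (cartanA n)) ∧
    kernelIsPlusMinusOne CartanMatrix.G₂ ∧
    kernelIsPlusMinusOne CartanMatrix.E₆ ∧
    kernelIsPlusMinusOne CartanMatrix.E₇ ∧
    kernelIsPlusMinusOne CartanMatrix.E₈ :=
  ⟨fun n _ _ => Stmt6.caseA n, Stmt6.caseG2, Stmt6.caseE6, Stmt6.caseE7, Stmt6.caseE8⟩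
end

section
/- Any finite subgroup of GL_n(Z) whose image in GL_n(F_p) is trivial, for a prime p, is a p-group; if moreover p is odd, the subgroup is trivial. -/
/-!
STATEMENT 9 (Minkowski's lemma): Any finite subgroup of `GLₙ(ℤ)` whose image in `GLₙ(F_p)`
under entrywise reduction mod a prime `p` is trivial is a `p`-group; if moreover `p` is odd,
the subgroup is trivial.
-/

open Matrix Finset

variable {n : ℕ}

lemma binexp (x : Matrix (Fin n) (Fin n) ℤ) (q : ℕ) :
    (1 + x)^q = ∑ m ∈ range (q+1), (q.choose m) • x ^ m := by
  rw [add_comm, (Commute.one_right x).add_pow]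
  simp [nsmul_eq_mul, (Nat.cast_commute _ _).eq]

lemma pow_entry_dvd (d : ℤ) (C : Matrix (Fin n) (Fin n) ℤ)
    (hC : ∀ i j, d ∣ C i j) (m : ℕ) (hm : 1 ≤ m) :
    ∀ i j, d ^ m ∣ (C ^ m) i j := by
  induction m with
  | zero => omega
  | succ m ih =>
    rcases Nat.eq_or_lt_of_le hm with h | h
    · obtain rfl : m = 0 := by omega
      simpa using hC
    · intro i j
      rw [pow_succ, pow_succ, Matrix.mul_apply]
      exact Finset.dvd_sum fun k _ => mul_dvd_mul (ih (by omega) i k) (hC k j)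

lemma natCast_mul_apply (c : ℕ) (M : Matrix (Fin n) (Fin n) ℤ) (i j : Fin n) :
    ((c : Matrix (Fin n) (Fin n) ℤ) * M) i j = (c:ℤ) * M i j := by
  rw [show ((c : Matrix (Fin n) (Fin n) ℤ)) = Matrix.diagonal (fun _ => (c:ℤ)) by
      simp [Matrix.diagonal_natCast]]
  simp [Matrix.diagonal_mul]

lemma step (p q k : ℕ) (hp : p.Prime) (hk : 1 ≤ k) (hq1 : 1 ≤ q)
    (C : Matrix (Fin n) (Fin n) ℤ)
    (hC : ∀ i j, (p:ℤ)^k ∣ C i j)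
    (hpow : (1 + C)^q = 1)
    (hcase : ¬ p ∣ q ∨ (q = p ∧ Odd p)) :
    ∀ i j, (p:ℤ)^(k+1) ∣ C i j := by
  have h1 : ∑ m ∈ Finset.Ico 1 (q+1), (q.choose m) • C ^ m = 0 := by
    have hb := binexp C q
    rw [hpow, Finset.range_eq_Ico,
      ← Finset.sum_Ico_consecutive _ (Nat.zero_le 1) (by omega : 1 ≤ q+1)] at hb
    have h0 : ∑ m ∈ Finset.Ico 0 1, (q.choose m) • C ^ m = 1 := by simp
    rw [h0] at hb
    linear_combination (norm := abel) hb.symm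
  have h2 : (q • C : Matrix (Fin n) (Fin n) ℤ)
      = - ∑ m ∈ Finset.Ico 2 (q+1), (q.choose m) • C ^ m := by
    rw [← Finset.sum_Ico_consecutive _ (by omega : 1 ≤ 2) (by omega : 2 ≤ q+1)] at h1
    have h0 : ∑ m ∈ Finset.Ico 1 2, (q.choose m) • C ^ m = q • C := by simp
    rw [h0] at h1
    rw [eq_neg_iff_add_eq_zero]
    exact h1
  intro i j
  have key : (q:ℤ) * C i j = - ∑ m ∈ Finset.Ico 2 (q+1), (q.choose m : ℤ) * (C^m) i j := by
    have h3 := congrFun (congrFun h2 i) j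
    simpa only [Matrix.smul_apply, Matrix.sum_apply, Matrix.neg_apply, nsmul_eq_mul,
      natCast_mul_apply, Nat.cast_id] using h3
  rcases hcase with hco | ⟨heq, hodd⟩
  · have hdvd : (p:ℤ)^(k+1) ∣ (q:ℤ) * C i j := by
      rw [key]
      refine dvd_neg.mpr (Finset.dvd_sum fun m hm => ?_)
      have hm2 : 2 ≤ m := (Finset.mem_Ico.mp hm).1
      have : (p:ℤ)^(k+1) ∣ (C^m) i j := by
        refine dvd_trans ?_ (pow_entry_dvd ((p:ℤ)^k) C hC m (by omega) i j)
        calc ((p:ℤ))^(k+1) ∣ ((p:ℤ)^k)^2 := by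
              rw [← pow_mul]; exact pow_dvd_pow _ (by omega)
          _ ∣ ((p:ℤ)^k)^m := pow_dvd_pow _ hm2
      exact Dvd.dvd.mul_left this _
    have hcop : IsCoprime ((p:ℤ)) (q:ℤ) :=
      Nat.isCoprime_iff_coprime.mpr ((Nat.Prime.coprime_iff_not_dvd hp).mpr hco)
    exact (hcop.pow_left).dvd_of_dvd_mul_left hdvd
  · -- q = p, p odd
    subst heq
    have hp3 : 3 ≤ q := by
      have h2 := hp.two_le
      have : q ≠ 2 := by rintro rfl; exact absurd hodd (by decide)
      omega
    have hdvd : (q:ℤ)^(k+2) ∣ (q:ℤ) * C i j := by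
      rw [key]
      refine dvd_neg.mpr (Finset.dvd_sum fun m hm => ?_)
      obtain ⟨hm2, hmle⟩ := Finset.mem_Ico.mp hm
      have hCm : ((q:ℤ)^k)^m ∣ (C^m) i j := pow_entry_dvd ((q:ℤ)^k) C hC m (by omega) i j
      rcases Nat.lt_or_ge m q with hmp | hmp
      · have hbin : (q:ℤ) ∣ (q.choose m : ℤ) := by
          exact_mod_cast Int.natCast_dvd_natCast.mpr (hp.dvd_choose_self (by omega) hmp)
        have hdc : (q:ℤ)^(k+1) ∣ (C^m) i j :=
          dvd_trans (by rw [← pow_mul]; exact pow_dvd_pow _ (by nlinarith)) hCm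
        rw [show k+2 = (k+1)+1 from rfl, pow_succ']
        exact mul_dvd_mul hbin hdc
      · have hmeq : m = q := by omega
        subst hmeq
        refine Dvd.dvd.mul_left ?_ _
        exact dvd_trans (by rw [← pow_mul]; exact pow_dvd_pow _ (by nlinarith)) hCm
    have : (q:ℤ) * (q:ℤ)^(k+1) ∣ (q:ℤ) * C i j := by
      rw [← pow_succ']; exact hdvd
    exact (mul_dvd_mul_iff_left (by exact_mod_cast hp.ne_zero : (q:ℤ) ≠ 0)).mp this

lemma mat_eq_zero (p q : ℕ) (hp : p.Prime) (hq1 : 1 ≤ q)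
    (C : Matrix (Fin n) (Fin n) ℤ)
    (hC : ∀ i j, (p:ℤ) ∣ C i j)
    (hpow : (1 + C)^q = 1)
    (hcase : ¬ p ∣ q ∨ (q = p ∧ Odd p)) :
    C = 0 := by
  have hall : ∀ k, ∀ i j, (p:ℤ)^(k+1) ∣ C i j := by
    intro k
    induction k with
    | zero => simpa using hC
    | succ k ih => exact step p q (k+1) hp (by omega) hq1 C ih hpow hcase
  ext i j
  by_contra hne
  obtain ⟨k, hk⟩ := pow_unbounded_of_one_lt (|C i j|)
    (by exact_mod_cast hp.one_lt : (1:ℤ) < (p:ℤ))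
  have hd : (p:ℤ)^(k+1) ∣ |C i j| := (dvd_abs _ _).mpr (hall k i j)
  have := Int.le_of_dvd (abs_pos.mpr hne) hd
  have hle : (p:ℤ)^k ≤ (p:ℤ)^(k+1) :=
    pow_le_pow_right₀ (by exact_mod_cast hp.one_le) (by omega)
  omega

lemma red_dvd (p : ℕ) (A : Matrix (Fin n) (Fin n) ℤ)
    (h : A.map (Int.cast : ℤ → ZMod p) = 1) :
    ∀ i j, (p:ℤ) ∣ (A - 1) i j := by
  intro i j
  rw [← ZMod.intCast_zmod_eq_zero_iff_dvd]
  have h1 := congrFun (congrFun h i) j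
  rw [Matrix.map_apply] at h1
  by_cases hij : i = j
  · subst hij
    simp only [Matrix.one_apply_eq] at h1
    simp [Matrix.sub_apply, h1]
  · simp only [Matrix.one_apply_ne hij] at h1
    simp [Matrix.sub_apply, Matrix.one_apply_ne hij, h1]

lemma gl_eq_one (p q : ℕ) (hp : p.Prime) (hq1 : 1 ≤ q)
    (g : Matrix.GeneralLinearGroup (Fin n) ℤ)
    (hred : ((g : Matrix (Fin n) (Fin n) ℤ)).map (Int.cast : ℤ → ZMod p) = 1)
    (hcase : ¬ p ∣ q ∨ (q = p ∧ Odd p))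
    (hpow : g ^ q = 1) : g = 1 := by
  have hm : ((g : Matrix (Fin n) (Fin n) ℤ))^q = 1 := by
    rw [← Units.val_pow_eq_pow_val, hpow, Units.val_one]
  have hz : ((g : Matrix (Fin n) (Fin n) ℤ) - 1) = 0 := by
    apply mat_eq_zero p q hp hq1 _ (red_dvd p _ hred) _ hcase
    rw [add_sub_cancel]
    exact hm
  ext1
  rw [Units.val_one]
  linear_combination (norm := abel) hz


theorem stmt9 (n p : ℕ) (hp : p.Prime)
    (G : Subgroup (Matrix.GeneralLinearGroup (Fin n) ℤ)) [Finite G]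
    (htriv : ∀ g ∈ G,
      ((g : Matrix (Fin n) (Fin n) ℤ)).map (Int.cast : ℤ → ZMod p) = 1) :
    IsPGroup p G ∧ (Odd p → G = ⊥) := by
  have hpg : IsPGroup p G := by
    intro g
    have hmne : orderOf (g : Matrix.GeneralLinearGroup (Fin n) ℤ) ≠ 0 := by
      have h := orderOf_injective G.subtype G.subtype_injective g
      simp only [Subgroup.coe_subtype] at h
      rw [h]
      exact (orderOf_pos g).ne'
    set m := orderOf (g : Matrix.GeneralLinearGroup (Fin n) ℤ) with hm
    refine ⟨m.factorization p, ?_⟩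
    have hcoe : ((g : Matrix.GeneralLinearGroup (Fin n) ℤ)) ^ (p ^ m.factorization p) = 1 := by
      apply gl_eq_one p (ordCompl[p] m) hp (Nat.ordCompl_pos p hmne)
      · exact htriv _ (G.pow_mem g.2 _)
      · exact Or.inl (Nat.not_dvd_ordCompl hp hmne)
      · rw [← pow_mul, Nat.ordProj_mul_ordCompl_eq_self]
        exact pow_orderOf_eq_one _
    exact Subtype.ext (by simpa using hcoe)
  refine ⟨hpg, fun hodd => ?_⟩
  have claim : ∀ k : ℕ, ∀ x : Matrix.GeneralLinearGroup (Fin n) ℤ,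
      x ∈ G → x ^ (p ^ k) = 1 → x = 1 := by
    intro k
    induction k with
    | zero => intro x _ h; simpa using h
    | succ k ih =>
      intro x hx hpow
      have hy : x ^ p = 1 := by
        apply ih (x ^ p) (G.pow_mem hx p)
        rw [← pow_mul, ← pow_succ']
        exact hpow
      exact gl_eq_one p p hp hp.pos x (htriv x hx) (Or.inr ⟨rfl, hodd⟩) hy
  rw [Subgroup.eq_bot_iff_forall]
  intro x hx
  obtain ⟨k, hk⟩ := hpg ⟨x, hx⟩
  have : x ^ (p ^ k) = 1 := by
    have := congrArg (Subtype.val) hk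
    simpa using this
  exact claim k x hx this
end

section
/- Let W be the Weyl group of an irreducible root system Φ of rank ≥ 2 that is not of type B or C, acting on Φ. For every w ∈ W with w ≠ ±1 (as a map on the ambient space), there exists a simple root χ with w(χ) ≠ ±χ. -/
/-!
STATEMENT 15: Let `W` be the Weyl group of an irreducible root system `Φ` of rank `≥ 2` that
is not of type `B` or `C` (per the context: a simply-laced irreducible system, types `Aₙ`
(`n ≥ 2`), `Dₙ`, `Eₙ` — encoded by requiring all roots to have the same length), with a fixed
base `Δ` of simple roots.  Then for every `w ∈ W` with `w ≠ ±1` (as a map on the ambient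
space) there exists a simple root `χ ∈ Δ` with `w(χ) ≠ ±χ`.

Encoding: `Φ` is a finite set of nonzero vectors in `ℚ^m` (`m = rank ≥ 2`), closed under
negation and under the reflections it defines, reduced, crystallographic, with all roots of
equal length ("not of type B or C"); `Δ ⊆ Φ` is a base: linearly independent, spanning, and
every root is a nonnegative or nonpositive integral combination of `Δ`; irreducibility is
encoded as connectivity of `Δ` (no partition of `Δ` into two nonempty orthogonal parts).
`W` is the subgroup of `GL(ℚ^m)` generated by the reflections in the roots.
-/

/-- Standard inner product on `ℚ^m`. -/
def qdot {m : ℕ} (x y : Fin m → ℚ) : ℚ := ∑ i, x i * y i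

lemma qdot_comm {m : ℕ} (x y : Fin m → ℚ) : qdot x y = qdot y x := by
  simp [qdot, mul_comm]

lemma qdot_sub_left {m : ℕ} (x z y : Fin m → ℚ) :
    qdot (x - z) y = qdot x y - qdot z y := by
  simp [qdot, sub_mul, Finset.sum_sub_distrib]

lemma qdot_sub_right {m : ℕ} (x y z : Fin m → ℚ) :
    qdot x (y - z) = qdot x y - qdot x z := by
  simp [qdot, mul_sub, Finset.sum_sub_distrib]

lemma qdot_smul_left {m : ℕ} (c : ℚ) (x y : Fin m → ℚ) :
    qdot (c • x) y = c * qdot x y := by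
  simp [qdot, Finset.mul_sum, mul_assoc]

lemma qdot_smul_right {m : ℕ} (c : ℚ) (x y : Fin m → ℚ) :
    qdot x (c • y) = c * qdot x y := by
  rw [qdot_comm, qdot_smul_left, qdot_comm]

lemma qdot_neg_right {m : ℕ} (x y : Fin m → ℚ) : qdot x (-y) = - qdot x y := by
  simp [qdot, Finset.sum_neg_distrib]

lemma qdot_self_ne_zero {m : ℕ} {α : Fin m → ℚ} (h : α ≠ 0) : qdot α α ≠ 0 := by
  intro hz
  apply h
  funext i
  have hnn : ∀ i ∈ Finset.univ, (0:ℚ) ≤ α i * α i := fun i _ => mul_self_nonneg _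
  have := (Finset.sum_eq_zero_iff_of_nonneg hnn).1 hz i (Finset.mem_univ i)
  have : α i = 0 := by nlinarith
  simpa using this

theorem stmt15 (m : ℕ) (hm : 2 ≤ m)
    (Φ Δ : Finset (Fin m → ℚ)) (hΔΦ : Δ ⊆ Φ)
    (h0 : (0 : Fin m → ℚ) ∉ Φ)
    (hneg : ∀ α ∈ Φ, -α ∈ Φ)
    (hrefl : ∀ α ∈ Φ, ∀ β ∈ Φ, β - (2 * qdot β α / qdot α α) • α ∈ Φ)
    (hcrys : ∀ α ∈ Φ, ∀ β ∈ Φ, ∃ z : ℤ, 2 * qdot β α = (z : ℚ) * qdot α α)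
    (hred : ∀ α ∈ Φ, ∀ c : ℚ, c • α ∈ Φ → c = 1 ∨ c = -1)
    (hlength : ∀ α ∈ Φ, ∀ β ∈ Φ, qdot α α = qdot β β)
    (hspan : Submodule.span ℚ (Δ : Set (Fin m → ℚ)) = ⊤)
    (hind : LinearIndependent ℚ (fun a : Δ => (a : Fin m → ℚ)))
    (hbase : ∀ α ∈ Φ, ∃ c : Δ → ℤ, ((∀ a, 0 ≤ c a) ∨ (∀ a, c a ≤ 0)) ∧
      α = ∑ a : Δ, (c a : ℚ) • (a : Fin m → ℚ))
    (hconn : ¬ ∃ S : Finset (Fin m → ℚ), S ⊆ Δ ∧ S.Nonempty ∧ (Δ \ S).Nonempty ∧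
      ∀ α ∈ S, ∀ β ∈ Δ \ S, qdot α β = 0)
    (w : (Fin m → ℚ) ≃ₗ[ℚ] (Fin m → ℚ))
    (hw : w ∈ Subgroup.closure
      {e : (Fin m → ℚ) ≃ₗ[ℚ] (Fin m → ℚ) | ∃ α ∈ Φ,
        ∀ x, e x = x - (2 * qdot x α / qdot α α) • α})
    (hw1 : w ≠ 1) (hwneg : ∃ x, w x ≠ -x) :
    ∃ χ ∈ Δ, w χ ≠ χ ∧ w χ ≠ -χ := by
  -- Step 1: every element of the closure preserves `qdot`.
  have hiso : ∀ x y, qdot (w x) (w y) = qdot x y := by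
    refine Subgroup.closure_induction
      (p := fun (g : (Fin m → ℚ) ≃ₗ[ℚ] (Fin m → ℚ)) _ =>
        ∀ x y, qdot (g x) (g y) = qdot x y)
      ?_ ?_ ?_ ?_ hw
    · rintro e ⟨α, hα, he⟩ x y
      have hA : qdot α α ≠ 0 := qdot_self_ne_zero (fun h => h0 (h ▸ hα))
      rw [he x, he y]
      rw [qdot_sub_left, qdot_sub_right, qdot_sub_right, qdot_smul_left,
        qdot_smul_right, qdot_smul_right, qdot_smul_left]
      have h1 : qdot α y = qdot y α := qdot_comm _ _
      have h2 : qdot α x = qdot x α := qdot_comm _ _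
      field_simp
      rw [h1]
      ring
    · intro x y; rfl
    · intro a b _ _ ha hb x y
      have : ((a * b : (Fin m → ℚ) ≃ₗ[ℚ] (Fin m → ℚ))) x = a (b x) := rfl
      rw [this]
      have : ((a * b : (Fin m → ℚ) ≃ₗ[ℚ] (Fin m → ℚ))) y = a (b y) := rfl
      rw [this, ha, hb]
    · intro a _ ha x y
      have := ha (a⁻¹ x) (a⁻¹ y)
      have hx : a (a⁻¹ x) = x := a.apply_symm_apply x
      have hy : a (a⁻¹ y) = y := a.apply_symm_apply y
      rw [hx, hy] at this
      exact this.symm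
  -- Step 2: assume for contradiction every simple root is fixed up to sign.
  by_contra hcon
  push_neg at hcon
  have hsign : ∀ χ ∈ Δ, w χ = χ ∨ w χ = -χ := by
    intro χ hχ
    by_cases h : w χ = χ
    · exact Or.inl h
    · exact Or.inr (hcon χ hχ h)
  letI : DecidablePred (fun χ : Fin m → ℚ => w χ = χ) :=
    fun _ => Classical.propDecidable _
  set S : Finset (Fin m → ℚ) := Δ.filter (fun χ => w χ = χ) with hS
  have hSsub : S ⊆ Δ := Finset.filter_subset _ _
  have hSneg : ∀ χ ∈ Δ \ S, w χ = -χ := by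
    intro χ hχ
    rcases Finset.mem_sdiff.1 hχ with ⟨hχΔ, hχS⟩
    rcases hsign χ hχΔ with h | h
    · refine absurd ?_ hχS
      rw [hS, Finset.mem_filter]
      exact ⟨hχΔ, h⟩
    · exact h
  by_cases hSall : S = Δ
  · -- w fixes a spanning set, so w = 1
    apply hw1
    have hfix : ∀ χ ∈ (Δ : Set (Fin m → ℚ)), w χ = χ := by
      intro χ hχ
      have h1 : χ ∈ S := hSall ▸ (by exact_mod_cast hχ)
      rw [hS, Finset.mem_filter] at h1
      exact h1.2
    have hall : ∀ x, w x = x := by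
      intro x
      have hx : x ∈ Submodule.span ℚ (Δ : Set (Fin m → ℚ)) := Submodule.eq_top_iff'.1 hspan x
      refine Submodule.span_induction (fun χ hχ => hfix χ hχ) (by simp) ?_ ?_ hx
      · intro a b _ _ ha hb; rw [map_add, ha, hb]
      · intro c a _ ha; rw [map_smul, ha]
    exact LinearEquiv.ext fun x => by simp [hall]
  by_cases hSemp : S = ∅
  · -- w = -1 on a spanning set
    obtain ⟨x, hx⟩ := hwneg
    apply hx
    have hfix : ∀ χ ∈ (Δ : Set (Fin m → ℚ)), w χ = -χ := by
      intro χ hχ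
      apply hSneg
      rw [Finset.mem_sdiff]
      exact ⟨hχ, by simp [hSemp]⟩
    have hxs : x ∈ Submodule.span ℚ (Δ : Set (Fin m → ℚ)) := Submodule.eq_top_iff'.1 hspan x
    refine Submodule.span_induction (fun χ hχ => hfix χ hχ) (by simp) ?_ ?_ hxs
    · intro a b _ _ ha hb
      rw [map_add, ha, hb]; abel
    · intro c a _ ha
      rw [map_smul, ha, smul_neg]
  -- Step 3: connectivity gives adjacent fixed/negated pair, contradiction with isometry.
  apply hconn
  refine ⟨S, hSsub, Finset.nonempty_iff_ne_empty.2 hSemp, ?_, ?_⟩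
  · rw [Finset.sdiff_nonempty]
    intro h
    exact hSall (Finset.Subset.antisymm hSsub h)
  · intro α hα β hβ
    rw [hS, Finset.mem_filter] at hα
    have hwα : w α = α := hα.2
    have hwβ : w β = -β := hSneg β hβ
    have := hiso α β
    rw [hwα, hwβ, qdot_neg_right] at this
    linarith
end

section
/- Consider the conjugation action of the group N of monomial matrices in PGL_n (n ≥ 4, over an algebraically closed field) on X = P(W_1) × ⋯ × P(W_n), where W_i is the space of n×n matrices whose nonzero entries lie in the off-diagonal positions of the i-th row. Then N acts generically freely on X: the stabilizer of a generic point is the trivial group scheme. -/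
/-!
STATEMENT 16: `G = PGLₙ` (`n ≥ 4`) over an algebraically closed field `k`, `N = N_G(T)` the
image of the monomial matrices, acting by conjugation on `X = P(W₁) × ⋯ × P(Wₙ)`, where `Wᵢ`
is the space of matrices supported on the off-diagonal entries of the `i`-th row; `N` permutes
the factors via the underlying permutation.  Then `N` acts generically freely on `X`: there is
a dense open subset (here: the complement of the zero set of a nonzero polynomial `P` in the
matrix entries) on which points have trivial scheme-theoretic stabilizer.

Functorial encoding of the trivial stabilizer: an `R`-point of `N` is (fppf-locally) given by a
monomial matrix `g = g(σ, d)` with `g_{σ(j), j} = d_j ∈ Rˣ`; it stabilizes the tuple of lines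
`([M₁], …, [Mₙ])` (where `Mᵢ ∈ Wᵢ` has entries `v i j`) iff for each `i` there is a unit `cᵢ`
with `g·M_{σ⁻¹(i)} = cᵢ • (Mᵢ·g)` (i.e. `g M_{σ⁻¹(i)} g⁻¹ = cᵢ Mᵢ`).  Triviality of the
stabilizer over every nontrivial commutative `k`-algebra `R` (including dual numbers, so the
Lie algebra of the stabilizer also vanishes) means: `σ = 1` and `d` is scalar.
-/

open Matrix MvPolynomial

/-- The monomial matrix with permutation `σ` and nonzero entries `d`. -/
def monomialMatrix {n : ℕ} {R : Type} [CommRing R] (σ : Equiv.Perm (Fin n))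
    (d : Fin n → Rˣ) : Matrix (Fin n) (Fin n) R :=
  Matrix.of fun i j => if i = σ j then (d j : R) else 0

/-- The matrix in `Wᵢ` (supported on off-diagonal entries of row `i`) with entries from `v`,
base changed to `R`. -/
def rowMatrix {n : ℕ} (k : Type) [Field k] (R : Type) [CommRing R] [Algebra k R]
    (v : Fin n → Fin n → k) (i : Fin n) : Matrix (Fin n) (Fin n) R :=
  Matrix.of fun r c =>
    if r = i ∧ c ≠ i then algebraMap k R (v i c) else 0

lemma entry_eq {n : ℕ} {k R : Type} [Field k] [CommRing R] [Algebra k R]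
    (σ : Equiv.Perm (Fin n)) (d : Fin n → Rˣ) (v : Fin n → Fin n → k)
    (c : Rˣ) (a b : Fin n) (hba : b ≠ a)
    (h : monomialMatrix σ d * rowMatrix k R v a =
      (c : R) • (rowMatrix k R v (σ a) * monomialMatrix σ d)) :
    (d a : R) * algebraMap k R (v a b) =
      (c : R) * (algebraMap k R (v (σ a) (σ b)) * (d b : R)) := by
  have H := congrFun (congrFun h (σ a)) b
  simp only [Matrix.mul_apply, monomialMatrix, rowMatrix, Matrix.of_apply,
    Matrix.smul_apply, smul_eq_mul] at H
  rw [Finset.sum_eq_single a, Finset.sum_eq_single (σ b)] at H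
  · simpa [hba, fun h' : σ b = σ a => hba (σ.injective h')] using H
  · intro j _ hj
    simp [hj, Ne.symm hj]
  · simp
  · intro j _ hj
    simp [hj, Ne.symm hj, fun h' : σ a = σ j => hj (σ.injective h').symm]
  · simp

lemma exists_ne_ne {n : ℕ} (hn : 3 ≤ n) (x y : Fin n) : ∃ a : Fin n, a ≠ x ∧ a ≠ y := by
  by_contra h
  push_neg at h
  have hsub : (Finset.univ : Finset (Fin n)) ⊆ {x, y} := by
    intro a _
    by_cases hax : a = x
    · simp [hax]
    · simp [h a hax]
  have := Finset.card_le_card hsub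
  simp only [Finset.card_univ, Fintype.card_fin] at this
  have h2 : ({x, y} : Finset (Fin n)).card ≤ 2 := Finset.card_insert_le _ _ |>.trans (by simp)
  omega

lemma exists_pair {n : ℕ} (hn : 4 ≤ n) (x y : Fin n) :
    ∃ a b : Fin n, a ≠ b ∧ a ≠ x ∧ a ≠ y ∧ b ≠ x ∧ b ≠ y := by
  classical
  have hcard : 2 ≤ (Finset.univ \ {x, y} : Finset (Fin n)).card := by
    have h1 : ({x, y} : Finset (Fin n)).card ≤ 2 :=
      Finset.card_insert_le _ _ |>.trans (by simp)
    have h3 := Finset.card_sdiff_of_subset (Finset.subset_univ ({x, y} : Finset (Fin n)))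
    simp only [Finset.card_univ, Fintype.card_fin] at h3
    omega
  obtain ⟨a, ha, b, hb, hab⟩ := Finset.one_lt_card.mp
    (show 1 < (Finset.univ \ {x, y} : Finset (Fin n)).card by omega)
  rw [Finset.mem_sdiff] at ha hb
  simp only [Finset.mem_insert, Finset.mem_singleton, not_or] at ha hb
  exact ⟨a, b, hab, ha.2.1, ha.2.2, hb.2.1, hb.2.2⟩

structure GoodTuple {n : ℕ} (σ : Equiv.Perm (Fin n)) where
  i : Fin n
  i' : Fin n
  c : Fin n
  c' : Fin n
  hcc : σ c ≠ c
  h1 : c' ≠ c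
  h2 : σ c' ≠ c
  hi1 : i ≠ c
  hi2 : i ≠ c'
  hi'1 : i' ≠ c
  hi'2 : i' ≠ c'
  hii : i ≠ i'

lemma goodTuple_exists {n : ℕ} (hn : 4 ≤ n) {σ : Equiv.Perm (Fin n)} (hσ : ¬ σ = 1) :
    Nonempty (GoodTuple σ) := by
  have hc : ∃ c, σ c ≠ c := by
    by_contra h
    push_neg at h
    exact hσ (Equiv.ext h)
  obtain ⟨c, hcc⟩ := hc
  obtain ⟨c', h1, h2'⟩ := exists_ne_ne (by omega) c (σ⁻¹ c)
  have h2 : σ c' ≠ c := fun h => h2' (by rw [← h]; simp)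
  obtain ⟨i, i', hii, hi1, hi2, hi'1, hi'2⟩ := exists_pair hn c c'
  exact ⟨⟨i, i', c, c', hcc, h1, h2, hi1, hi2, hi'1, hi'2, hii⟩⟩

noncomputable def m1 {n : ℕ} (k : Type) [Field k] {σ : Equiv.Perm (Fin n)}
    (t : GoodTuple σ) : MvPolynomial (Fin n × Fin n) k :=
  X (t.i, t.c') * X (σ t.i, σ t.c) * X (t.i', t.c) * X (σ t.i', σ t.c')

noncomputable def m2 {n : ℕ} (k : Type) [Field k] {σ : Equiv.Perm (Fin n)}
    (t : GoodTuple σ) : MvPolynomial (Fin n × Fin n) k :=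
  X (t.i, t.c) * X (σ t.i, σ t.c') * X (t.i', t.c') * X (σ t.i', σ t.c)

lemma m_ne {n : ℕ} (k : Type) [Field k] {σ : Equiv.Perm (Fin n)} (t : GoodTuple σ) :
    m1 k t - m2 k t ≠ 0 := by
  intro h
  have k1 : (t.i, t.c') ≠ (t.i, t.c) := by
    simp only [ne_eq, Prod.mk.injEq, not_and]
    exact fun _ => t.h1
  have k2 : ((σ t.i, σ t.c) : Fin n × Fin n) ≠ (t.i, t.c) := by
    simp only [ne_eq, Prod.mk.injEq, not_and]
    exact fun _ => t.hcc
  have k3 : ((t.i', t.c) : Fin n × Fin n) ≠ (t.i, t.c) := by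
    simp only [ne_eq, Prod.mk.injEq, not_and]
    exact fun h' => absurd h' (Ne.symm t.hii)
  have k4 : ((σ t.i', σ t.c') : Fin n × Fin n) ≠ (t.i, t.c) := by
    simp only [ne_eq, Prod.mk.injEq, not_and]
    exact fun _ => t.h2
  have h0 := congrArg (MvPolynomial.eval fun p : Fin n × Fin n =>
    if p = (t.i, t.c) then (0 : k) else 1) h
  simp only [m1, m2, map_sub, _root_.map_mul, eval_X, map_zero,
    if_neg k1, if_neg k2, if_neg k3, if_neg k4, if_pos rfl] at h0
  simp at h0

/-- The per-permutation polynomial obstruction. -/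
noncomputable def Qp (k : Type) [Field k] {n : ℕ} (hn : 4 ≤ n)
    (σ : Equiv.Perm (Fin n)) : MvPolynomial (Fin n × Fin n) k :=
  if h : σ = 1 then 1 else
    m1 k ((goodTuple_exists hn h).some) - m2 k ((goodTuple_exists hn h).some)

theorem stmt16 (k : Type) [Field k] [IsAlgClosed k] (n : ℕ) (hn : 4 ≤ n) :
    ∃ P : MvPolynomial (Fin n × Fin n) k, P ≠ 0 ∧
      ∀ v : Fin n → Fin n → k,
        MvPolynomial.eval (fun p => v p.1 p.2) P ≠ 0 →
        ∀ (R : Type) [CommRing R] [Algebra k R] [Nontrivial R],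
          ∀ (σ : Equiv.Perm (Fin n)) (d : Fin n → Rˣ),
            (∀ i : Fin n, ∃ c : Rˣ,
              monomialMatrix σ d * rowMatrix k R v (σ⁻¹ i) =
                (c : R) • (rowMatrix k R v i * monomialMatrix σ d)) →
            σ = 1 ∧ ∃ u : Rˣ, ∀ j, d j = u := by
  classical
  refine ⟨(∏ p : Fin n × Fin n, X p) * ∏ σ : Equiv.Perm (Fin n), Qp k hn σ, ?_, ?_⟩
  · apply mul_ne_zero
    · exact Finset.prod_ne_zero_iff.mpr fun p _ => X_ne_zero p
    · refine Finset.prod_ne_zero_iff.mpr fun σ _ => ?_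
      by_cases h : σ = 1
      · simp [Qp, h]
      · rw [Qp, dif_neg h]
        exact m_ne k _
  · intro v hv R _ _ _ σ d hstab
    set E := MvPolynomial.eval (fun p : Fin n × Fin n => v p.1 p.2) with hE
    -- all coordinates are nonzero
    have hP1 : ∀ a b : Fin n, v a b ≠ 0 := by
      intro a b hab
      apply hv
      rw [_root_.map_mul]
      apply mul_eq_zero_of_left
      rw [map_prod]
      exact Finset.prod_eq_zero (Finset.mem_univ (a, b)) (by simp [hE, hab])
    have hQ : ∀ τ : Equiv.Perm (Fin n), E (Qp k hn τ) ≠ 0 := by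
      intro τ hτ
      apply hv
      rw [_root_.map_mul]
      apply mul_eq_zero_of_right
      rw [map_prod]
      exact Finset.prod_eq_zero (Finset.mem_univ τ) hτ
    choose cf hcf using hstab
    have key : ∀ a b : Fin n, b ≠ a →
        (d a : R) * algebraMap k R (v a b) =
          (cf (σ a) : R) * (algebraMap k R (v (σ a) (σ b)) * (d b : R)) := by
      intro a b hba
      refine entry_eq σ d v (cf (σ a)) a b hba ?_
      have := hcf (σ a)
      rwa [← Equiv.Perm.mul_apply, inv_mul_cancel, Equiv.Perm.one_apply] at this
    have hσ1 : σ = 1 := by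
      by_contra hσ
      set t := (goodTuple_exists hn hσ).some with ht
      have hQσ := hQ σ
      rw [Qp, dif_neg hσ, ← ht] at hQσ
      have E1 := key t.i t.c (Ne.symm t.hi1)
      have E2 := key t.i t.c' (Ne.symm t.hi2)
      have E3 := key t.i' t.c (Ne.symm t.hi'1)
      have E4 := key t.i' t.c' (Ne.symm t.hi'2)
      set V : Fin n → Fin n → R := fun a b => algebraMap k R (v a b) with hV
      have hXY : ((d t.i : R) * d t.i') *
          (V t.i t.c * V t.i' t.c' * V (σ t.i) (σ t.c') * V (σ t.i') (σ t.c)) =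
          ((d t.i : R) * d t.i') *
          (V t.i t.c' * V t.i' t.c * V (σ t.i) (σ t.c) * V (σ t.i') (σ t.c')) := by
        linear_combination
          (V (σ t.i) (σ t.c') * V (σ t.i') (σ t.c)) * ((d t.i' : R) * V t.i' t.c') * E1
          + (V (σ t.i) (σ t.c') * V (σ t.i') (σ t.c)) *
              ((cf (σ t.i) : R) * (V (σ t.i) (σ t.c) * (d t.c : R))) * E4
          - (V (σ t.i) (σ t.c) * V (σ t.i') (σ t.c')) * ((d t.i' : R) * V t.i' t.c) * E2
          - (V (σ t.i) (σ t.c) * V (σ t.i') (σ t.c')) *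
              ((cf (σ t.i) : R) * (V (σ t.i) (σ t.c') * (d t.c' : R))) * E3
      have hu : IsUnit ((d t.i : R) * d t.i') := (d t.i).isUnit.mul (d t.i').isUnit
      have hXY' := hu.mul_left_cancel hXY
      have hk : v t.i t.c * v t.i' t.c' * v (σ t.i) (σ t.c') * v (σ t.i') (σ t.c) =
          v t.i t.c' * v t.i' t.c * v (σ t.i) (σ t.c) * v (σ t.i') (σ t.c') := by
        apply (algebraMap k R).injective
        simpa only [_root_.map_mul, hV] using hXY'
      apply hQσ
      simp only [m1, m2, map_sub, _root_.map_mul, eval_X, hE]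
      linear_combination -hk
    subst hσ1
    simp only [Equiv.Perm.one_apply] at key
    refine ⟨rfl, d ⟨0, by omega⟩, fun j => ?_⟩
    set z : Fin n := ⟨0, by omega⟩
    obtain ⟨a, haj, haz⟩ := exists_ne_ne (by omega) j z
    have h1 := key a j (Ne.symm haj)
    have h2 := key a z (Ne.symm haz)
    have huj : IsUnit (algebraMap k R (v a j)) := ((hP1 a j).isUnit).map (algebraMap k R)
    have huz : IsUnit (algebraMap k R (v a z)) := ((hP1 a z).isUnit).map (algebraMap k R)
    have e1 : (d a : R) = (cf a : R) * d j :=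
      huj.mul_left_cancel (by linear_combination h1)
    have e2 : (d a : R) = (cf a : R) * d z :=
      huz.mul_left_cancel (by linear_combination h2)
    have : (d j : R) = d z := (cf a).isUnit.mul_left_cancel (by rw [← e1, ← e2])
    exact Units.ext this
end
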